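/- arXiv:1203.4148 — 5 statements merged into one kernel-verified Lean document; each statement's English description precedes it below -/
import Mathlib

section
/- The number of rooted trees on {1,...,n} (Cayley trees) with horizontal profile (1, n_1, ..., n_r) — that is, exactly n_i vertices at distance i from the root, with n = 1 + n_1 + ... + n_r — equals (n!/(n_1! ⋯ n_r!)) · ∏_{i=1}^{r-1} n_i^{n_{i+1}}. -/
set_option linter.unusedSectionVars false
set_option maxHeartbeats 1000000

open SimpleGraph

namespace CayleyAux

variable {V : Type*} [DecidableEq V]

variable {V : Type*} [DecidableEq V]

def mkG (P : V → V) : SimpleGraph V where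
  Adj u v := u ≠ v ∧ (P u = v ∨ P v = u)
  symm := ⟨by rintro u v ⟨h1, h2⟩; exact ⟨h1.symm, h2.symm⟩⟩
  loopless := ⟨fun v hv => hv.1 rfl⟩

variable {l : V → ℕ} {P : V → V}

section
variable (hP : ∀ v, if l v = 0 then P v = v else l (P v) = l v - 1)
include hP

lemma adj_cases {u v : V} (huv : (mkG P).Adj u v) :
    (l u ≠ 0 ∧ P u = v ∧ l v = l u - 1) ∨ (l v ≠ 0 ∧ P v = u ∧ l u = l v - 1) := by
  obtain ⟨hne, hor | hor⟩ := huv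
  · left
    have := hP u
    by_cases h0 : l u = 0
    · simp [h0] at this; exact absurd (this.symm.trans hor) hne
    · simp [h0] at this; exact ⟨h0, hor, hor ▸ this⟩
  · right
    have := hP v
    by_cases h0 : l v = 0
    · simp [h0] at this; exact absurd (this.symm.trans hor) (Ne.symm hne)
    · simp [h0] at this; exact ⟨h0, hor, hor ▸ this⟩

lemma adj_levels {u v : V} (huv : (mkG P).Adj u v) :
    l u = l v + 1 ∨ l v = l u + 1 := by
  rcases adj_cases hP huv with ⟨h0, _, hl⟩ | ⟨h0, _, hl⟩
  · left; omega
  · right; omega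

lemma parent_unique {u v : V} (huv : (mkG P).Adj u v) (hl : l v + 1 = l u) : P u = v := by
  rcases adj_cases hP huv with ⟨_, h, _⟩ | ⟨h0, _, hl'⟩
  · exact h
  · omega

lemma adj_parent {v : V} (hv : l v ≠ 0) : (mkG P).Adj v (P v) := by
  have := hP v
  simp only [hv, if_false] at this
  refine ⟨fun hvv => ?_, Or.inl rfl⟩
  rw [← hvv] at this; omega

lemma level_walk {u v : V} (p : (mkG P).Walk u v) :
    l u ≤ l v + p.length ∧ l v ≤ l u + p.length := by
  induction p with
  | nil => simp
  | cons h q ih =>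
    rcases adj_levels hP h with h' | h' <;> simp [Walk.length_cons] <;> omega

variable (hroot : ∀ v w, l v = 0 → l w = 0 → v = w)
include hroot

lemma exists_walk_root {rt : V} (hrt : l rt = 0) :
    ∀ (n : ℕ) (v : V), l v ≤ n → ∃ p : (mkG P).Walk v rt, p.length = l v := by
  intro n
  induction n with
  | zero =>
    intro v hv
    have h0 : l v = 0 := Nat.le_zero.mp hv
    have : v = rt := hroot v rt h0 hrt
    subst this
    exact ⟨Walk.nil, by simp [h0]⟩
  | succ n ih =>
    intro v hv
    by_cases h0 : l v = 0
    · have : v = rt := hroot v rt h0 hrt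
      subst this
      exact ⟨Walk.nil, by simp [h0]⟩
    · have hPl : l (P v) = l v - 1 := by have := hP v; simpa [h0] using this
      obtain ⟨p, hp⟩ := ih (P v) (by omega)
      exact ⟨Walk.cons (adj_parent hP h0) p, by simp [Walk.length_cons, hp]; omega⟩

lemma dist_eq {rt : V} (hrt : l rt = 0) (v : V) : (mkG P).dist rt v = l v := by
  obtain ⟨p, hp⟩ := exists_walk_root hP hroot hrt (l v) v le_rfl
  refine le_antisymm ?_ ?_
  · calc (mkG P).dist rt v ≤ p.reverse.length := dist_le _
    _ = l v := by simp [hp]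
  · obtain ⟨q, hq⟩ := p.reverse.reachable.exists_walk_length_eq_dist
    have := (level_walk hP q).2
    omega

lemma mkG_connected {rt : V} (hrt : l rt = 0) [Nonempty V] : (mkG P).Connected := by
  refine ⟨fun u v => ?_⟩
  obtain ⟨p, _⟩ := exists_walk_root hP hroot hrt (l u) u le_rfl
  obtain ⟨q, _⟩ := exists_walk_root hP hroot hrt (l v) v le_rfl
  exact p.reachable.trans q.reachable.symm

lemma descent : ∀ (n : ℕ) (u v : V) (p : (mkG P).Walk u v), p.length ≤ n →
    p.IsPath → l v ≤ l u → u ≠ v →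
    ∃ (e : (mkG P).Adj u (P u)) (q : (mkG P).Walk (P u) v), p = Walk.cons e q := by
  intro n
  induction n with
  | zero =>
    intro u v p hlen _ _ hne
    exact absurd (Walk.eq_of_length_eq_zero (Nat.le_zero.mp hlen)) hne
  | succ n ih =>
    intro u v p hlen hp hl hne
    cases p with
    | nil => exact absurd rfl hne
    | @cons _ w _ e q =>
      rcases adj_cases hP e with ⟨hu0, hPu, hlw⟩ | ⟨hw0, hPw, hlu⟩
      · subst hPu; exact ⟨e, q, rfl⟩
      · exfalso
        have hlw' : l w = l u + 1 := by omega
        rw [Walk.cons_isPath_iff] at hp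
        have hwv : w ≠ v := fun hh => by rw [hh] at hlw'; omega
        obtain ⟨e', q', rfl⟩ := ih w v q (by simpa [Walk.length_cons] using hlen) hp.1 (by omega) hwv
        apply hp.2
        rw [Walk.support_cons]
        right
        exact hPw ▸ q'.start_mem_support
      
lemma unique_path : ∀ (n : ℕ) (u v : V) (p q : (mkG P).Walk u v), p.length ≤ n → q.length ≤ n →
    p.IsPath → q.IsPath → p = q := by
  intro n
  induction n with
  | zero =>
    intro u v p q hpl hql hp hq
    have huv : u = v := Walk.eq_of_length_eq_zero (Nat.le_zero.mp hpl)
    subst huv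
    rw [(Walk.isPath_iff_eq_nil (p := p)).mp hp, (Walk.isPath_iff_eq_nil (p := q)).mp hq]
  | succ n ih =>
    intro u v p q hpl hql hp hq
    by_cases hne : u = v
    · subst hne
      rw [(Walk.isPath_iff_eq_nil (p := p)).mp hp, (Walk.isPath_iff_eq_nil (p := q)).mp hq]
    · by_cases hl : l v ≤ l u
      · obtain ⟨e, p', rfl⟩ := descent hP hroot (n+1) u v p hpl hp hl hne
        obtain ⟨e', q', rfl⟩ := descent hP hroot (n+1) u v q hql hq hl hne
        have hrec : p' = q' := by
          refine ih (P u) v p' q' ?_ ?_ ?_ ?_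
          · simp only [Walk.length_cons] at hpl; omega
          · simp only [Walk.length_cons] at hql; omega
          · exact ((Walk.cons_isPath_iff _ _).mp hp).1
          · exact ((Walk.cons_isPath_iff _ _).mp hq).1
        rw [hrec]
      · have hl' : l u ≤ l v := by omega
        obtain ⟨e, p', hpe⟩ := descent hP hroot (n+1) v u p.reverse
          (by simpa using hpl) hp.reverse hl' (Ne.symm hne)
        obtain ⟨e', q', hqe⟩ := descent hP hroot (n+1) v u q.reverse
          (by simpa using hql) hq.reverse hl' (Ne.symm hne)
        have hrec : p' = q' := by
          refine ih (P v) u p' q' ?_ ?_ ?_ ?_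
          · have := congrArg Walk.length hpe
            simp only [Walk.length_cons, Walk.length_reverse] at this; omega
          · have := congrArg Walk.length hqe
            simp only [Walk.length_cons, Walk.length_reverse] at this; omega
          · have := hp.reverse; rw [hpe, Walk.cons_isPath_iff] at this; exact this.1
          · have := hq.reverse; rw [hqe, Walk.cons_isPath_iff] at this; exact this.1
        have hrev : p.reverse = q.reverse := by rw [hpe, hqe, hrec]
        calc p = p.reverse.reverse := (Walk.reverse_reverse p).symm
        _ = q.reverse.reverse := by rw [hrev]
        _ = q := Walk.reverse_reverse q

lemma mkG_isTree {rt : V} (hrt : l rt = 0) : (mkG P).IsTree := by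
  have : Nonempty V := ⟨rt⟩
  rw [isTree_iff_existsUnique_path]
  refine ⟨this, fun u v => ?_⟩
  obtain ⟨p⟩ := (mkG_connected hP hroot hrt).preconnected u v
  refine ⟨(p.toPath : (mkG P).Walk u v), p.toPath.2, fun q hq => ?_⟩
  exact unique_path hP hroot (max q.length (p.toPath : (mkG P).Walk u v).length) u v q _
    (le_max_left _ _) (le_max_right _ _) hq (p.toPath.2)

end


section treeside
variable {G : SimpleGraph V}

lemma isPath_concat {u v w : V} {p : G.Walk u v} (hp : p.IsPath) (h : G.Adj v w)
    (hw : w ∉ p.support) : (p.concat h).IsPath := by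
  rw [← Walk.isPath_reverse_iff, Walk.reverse_concat, Walk.cons_isPath_iff]
  exact ⟨hp.reverse, by simpa [Walk.support_reverse] using hw⟩

lemma dist_mem_support_le {u v x : V} (p : G.Walk u v) (hx : x ∈ p.support) :
    G.dist u x ≤ p.length :=
  le_trans (dist_le (p.takeUntil x hx)) (Walk.length_takeUntil_le p hx)

/-- On a shortest walk from `u` to `v`, any support vertex at full distance is `v`. -/
lemma eq_end_of_dist_eq {u v x : V} (p : G.Walk u v) (hp : p.length = G.dist u v)
    (hx : x ∈ p.support) (hdx : G.dist u x = p.length) : x = v := by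
  have h2 : (p.takeUntil x hx).length + (p.dropUntil x hx).length = p.length := by
    have h5 := congrArg Walk.length (p.take_spec hx)
    rwa [Walk.length_append] at h5
  have h3 : G.dist u x ≤ (p.takeUntil x hx).length := dist_le _
  have h4 : (p.dropUntil x hx).length = 0 := by omega
  exact Walk.eq_of_length_eq_zero h4

variable (hG : G.IsTree) {rt : V}
include hG

/-- Existence of a parent: a neighbour strictly closer to the root. -/
lemma tree_exists_parent {v : V} (hd : G.dist rt v ≠ 0) :
    ∃ w, G.Adj v w ∧ G.dist rt w + 1 = G.dist rt v := by
  obtain ⟨q, hq⟩ := (hG.isConnected v rt).exists_walk_length_eq_dist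
  rw [dist_comm] at hq
  cases q with
  | nil => rw [← hq] at hd; simp at hd
  | @cons _ w _ e q' =>
    refine ⟨w, e, ?_⟩
    have h1 : G.dist rt w ≤ q'.length := by
      rw [dist_comm]; exact dist_le q'
    have h2 : G.dist rt v ≤ G.dist rt w + 1 := by
      refine le_trans (hG.isConnected.dist_triangle (v := w)) ?_
      have : G.dist w v ≤ 1 := dist_le (Walk.cons e.symm Walk.nil)
      omega
    have h3 : q'.length + 1 = G.dist rt v := by
      simpa [Walk.length_cons] using hq
    omega

/-- In a tree, shortest walks exist as paths. -/
lemma tree_shortest_path (u v : V) :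
    ∃ p : G.Walk u v, p.length = G.dist u v ∧ p.IsPath := by
  obtain ⟨p, hp⟩ := (hG.isConnected u v).exists_walk_length_eq_dist
  exact ⟨p, hp, p.isPath_of_length_eq_dist hp⟩

/-- Uniqueness of the parent. -/
lemma tree_parent_unique {v u1 u2 : V} (h1 : G.Adj v u1) (h2 : G.Adj v u2)
    (hd1 : G.dist rt u1 + 1 = G.dist rt v) (hd2 : G.dist rt u2 + 1 = G.dist rt v) :
    u1 = u2 := by
  obtain ⟨p1, hp1, hp1'⟩ := tree_shortest_path hG rt u1
  obtain ⟨p2, hp2, hp2'⟩ := tree_shortest_path hG rt u2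
  have hv1 : v ∉ p1.support := fun hx => by
    have := dist_mem_support_le p1 hx; omega
  have hv2 : v ∉ p2.support := fun hx => by
    have := dist_mem_support_le p2 hx; omega
  have q1 : G.Walk rt v := p1.concat h1.symm
  have hq1 : (p1.concat h1.symm).IsPath := isPath_concat hp1' h1.symm hv1
  have hq2 : (p2.concat h2.symm).IsPath := isPath_concat hp2' h2.symm hv2
  obtain ⟨p, hp, hu⟩ := hG.existsUnique_path rt v
  have he : p1.concat h1.symm = p2.concat h2.symm := by
    rw [hu _ hq1, hu _ hq2]
  exact (Walk.concat_inj he).1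

/-- In a tree, adjacent vertices are at distances differing by exactly one from the root. -/
lemma tree_adj_dist {u v : V} (h : G.Adj u v) :
    G.dist rt u + 1 = G.dist rt v ∨ G.dist rt v + 1 = G.dist rt u := by
  have htri1 : G.dist rt v ≤ G.dist rt u + 1 := by
    refine le_trans (hG.isConnected.dist_triangle (v := u)) ?_
    have : G.dist u v ≤ 1 := dist_le (Walk.cons h Walk.nil)
    omega
  have htri2 : G.dist rt u ≤ G.dist rt v + 1 := by
    refine le_trans (hG.isConnected.dist_triangle (v := v)) ?_
    have : G.dist v u ≤ 1 := dist_le (Walk.cons h.symm Walk.nil)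
    omega
  have hne : G.dist rt u ≠ G.dist rt v := by
    intro hd
    by_cases h0 : G.dist rt u = 0
    · have hu : rt = u := (hG.isConnected.dist_eq_zero_iff).mp h0
      have hv : rt = v := (hG.isConnected.dist_eq_zero_iff).mp (hd ▸ h0)
      exact h.ne (hu ▸ hv)
    · obtain ⟨p, hp, hp'⟩ := tree_shortest_path hG rt u
      have hvp : v ∉ p.support := by
        intro hx
        have : v = u := eq_end_of_dist_eq p hp hx (by omega)
        exact h.ne' this
      have hq : (p.concat h).IsPath := isPath_concat hp' h hvp
      obtain ⟨p2, hp2, hp2'⟩ := tree_shortest_path hG rt v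
      obtain ⟨pp, hpp, hu⟩ := hG.existsUnique_path rt v
      have he : p.concat h = p2 := by rw [hu _ hq, hu _ hp2']
      have := congrArg Walk.length he
      rw [Walk.length_concat] at this
      omega
  omega


end treeside


/-- The fiber of `Sigma.fst` over `i` is `β i`. -/
def sigmaFstFiber {ι : Type*} (β : ι → Type*) (i : ι) : {x : Σ j, β j // x.1 = i} ≃ β i where
  toFun x := x.2 ▸ x.1.2
  invFun b := ⟨⟨i, b⟩, rfl⟩
  left_inv := by rintro ⟨⟨j, b⟩, rfl⟩; rfl
  right_inv b := rfl

lemma sigmaFstFiber_eta {ι : Type*} (β : ι → Type*) (i : ι) (x : Σ j, β j) (hx : x.1 = i) :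
    (⟨i, sigmaFstFiber β i ⟨x, hx⟩⟩ : Σ j, β j) = x := by
  rcases x with ⟨j, b⟩
  subst hx
  rfl

/-- Equivalences to a sigma type with prescribed "level map" correspond to families
of fiberwise equivalences. -/
def fiberEquiv {α ι : Type*} (β : ι → Type*) (l : α → ι) :
    {F : α ≃ Σ i, β i // ∀ a, (F a).1 = l a} ≃ ∀ i, ({a // l a = i} ≃ β i) where
  toFun F i := (Equiv.subtypeEquiv F.1 (fun a => by rw [F.2 a])).trans (sigmaFstFiber β i)
  invFun E := ⟨(Equiv.sigmaFiberEquiv l).symm.trans (Equiv.sigmaCongrRight E), fun a => rfl⟩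
  left_inv := by
    rintro ⟨F, hF⟩
    apply Subtype.ext
    apply Equiv.ext
    intro a
    exact sigmaFstFiber_eta _ _ (F a) (hF a)
  right_inv := by
    intro E
    funext i
    apply Equiv.ext
    rintro ⟨a, ha⟩
    subst ha
    rfl

/-- Fiberwise counting. -/
lemma card_fiberwise {X L : Type*} [Finite X] [Fintype L]
    (g : X → L) (c : L → ℕ) (hc : ∀ l, Nat.card {x // g x = l} = c l) :
    Nat.card X = ∑ l : L, c l := by
  classical
  cases nonempty_fintype X
  rw [Nat.card_eq_fintype_card, ← Finset.card_univ,
    Finset.card_eq_sum_card_fiberwise (fun x _ => Finset.mem_univ (g x))]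
  refine Finset.sum_congr rfl fun l _ => ?_
  rw [← hc l, Nat.card_eq_fintype_card, Fintype.card_subtype]

section profile

variable {N r : ℕ} {h : ℕ → ℕ}

/-- Level predicate: fibers of the level map have prescribed sizes. -/
def Good (r : ℕ) (h : ℕ → ℕ) {N : ℕ} (l : Fin N → Fin (r + 1)) : Prop :=
  ∀ i : ℕ, {v : Fin N | (l v : ℕ) = i}.ncard = h i

/-- Parent-compatibility of `u` as parent of `v`. -/
def Q {N r : ℕ} (l : Fin N → Fin (r + 1)) (v u : Fin N) : Prop :=
  if (l v : ℕ) = 0 then u = v else (l u : ℕ) = (l v : ℕ) - 1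

def ParP {N r : ℕ} (l : Fin N → Fin (r + 1)) (P : Fin N → Fin N) : Prop :=
  ∀ v, Q l v (P v)

lemma parP_spec {l : Fin N → Fin (r + 1)} {P : Fin N → Fin N} (hp : ParP l P) :
    ∀ v, if (fun w => (l w : ℕ)) v = 0 then P v = v
      else (fun w => (l w : ℕ)) (P v) = (fun w => (l w : ℕ)) v - 1 := by
  intro v
  have := hp v
  unfold Q at this
  by_cases h0 : (l v : ℕ) = 0 <;> simp only [h0, if_true, if_false, if_pos, if_neg] <;>
    simpa [h0] using this

lemma good_root_unique {l : Fin N → Fin (r + 1)} (hg : Good r h l) (h0 : h 0 = 1) :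
    ∀ v w, (l v : ℕ) = 0 → (l w : ℕ) = 0 → v = w := by
  intro v w hv hw
  obtain ⟨a, ha⟩ := Set.ncard_eq_one.mp (by rw [hg 0, h0])
  have h1 : v ∈ {v : Fin N | (l v : ℕ) = 0} := hv
  have h2 : w ∈ {v : Fin N | (l v : ℕ) = 0} := hw
  rw [ha] at h1 h2
  rw [Set.mem_singleton_iff.mp h1, Set.mem_singleton_iff.mp h2]

noncomputable def rootOf {l : Fin N → Fin (r + 1)} (hg : Good r h l) (h0 : h 0 = 1) : Fin N :=
  (Set.ncard_eq_one.mp (by rw [hg 0, h0] : {v : Fin N | (l v : ℕ) = 0}.ncard = 1)).choose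

lemma rootOf_lv {l : Fin N → Fin (r + 1)} (hg : Good r h l) (h0 : h 0 = 1) :
    (l (rootOf hg h0) : ℕ) = 0 := by
  have := (Set.ncard_eq_one.mp (by rw [hg 0, h0] :
    {v : Fin N | (l v : ℕ) = 0}.ncard = 1)).choose_spec
  have : rootOf hg h0 ∈ {v : Fin N | (l v : ℕ) = 0} := by
    rw [this]; rfl
  exact this

end profile

section mainequiv
variable {N r : ℕ} {h : ℕ → ℕ}

abbrev TreeSet (N : ℕ) (h : ℕ → ℕ) := {p : SimpleGraph (Fin N) × Fin N // p.1.IsTree ∧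
    ∀ i : ℕ, {v : Fin N | p.1.dist p.2 v = i}.ncard = h i}

abbrev DataSet (N r : ℕ) (h : ℕ → ℕ) := {x : (Fin N → Fin (r + 1)) × (Fin N → Fin N) //
    Good r h x.1 ∧ ParP x.1 x.2}

lemma fwd_prop (h0 : h 0 = 1) (x : DataSet N r h) :
    (mkG x.1.2).IsTree ∧ ∀ i : ℕ,
      {v : Fin N | (mkG x.1.2).dist (rootOf x.2.1 h0) v = i}.ncard = h i := by
  obtain ⟨⟨l, P⟩, hg, hp⟩ := x
  have hP := parP_spec hp
  have hroot := good_root_unique hg h0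
  have hrt := rootOf_lv (hg := hg) h0
  constructor
  · exact mkG_isTree hP hroot hrt
  · intro i
    have hsets : {v : Fin N | (mkG P).dist (rootOf hg h0) v = i} = {v | (l v : ℕ) = i} := by
      ext v
      simp only [Set.mem_setOf_eq, dist_eq hP hroot hrt v]
    rw [hsets]
    exact hg i

noncomputable def fwd (h0 : h 0 = 1) (x : DataSet N r h) : TreeSet N h :=
  ⟨(mkG x.1.2, rootOf x.2.1 h0), fwd_prop h0 x⟩

lemma dist_lt_succ (hz : ∀ j, r < j → h j = 0) (y : TreeSet N h) (v : Fin N) :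
    y.1.1.dist y.1.2 v < r + 1 := by
  by_contra hlt
  push_neg at hlt
  have hj : h (y.1.1.dist y.1.2 v) = 0 := hz _ (by omega)
  have h2 := y.2.2 (y.1.1.dist y.1.2 v)
  rw [hj] at h2
  have hempty := (Set.ncard_eq_zero (Set.toFinite _)).mp h2
  have hv : v ∈ {w : Fin N | y.1.1.dist y.1.2 w = y.1.1.dist y.1.2 v} := rfl
  rw [hempty] at hv
  exact hv

lemma bwd_prop (hz : ∀ j, r < j → h j = 0) (y : TreeSet N h) :
    Good r h (fun v => (⟨y.1.1.dist y.1.2 v, dist_lt_succ hz y v⟩ : Fin (r + 1))) ∧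
    ParP (fun v => (⟨y.1.1.dist y.1.2 v, dist_lt_succ hz y v⟩ : Fin (r + 1)))
      (fun v => if hd : y.1.1.dist y.1.2 v = 0 then v
        else (tree_exists_parent y.2.1 hd).choose) := by
  constructor
  · intro i
    exact y.2.2 i
  · intro v
    unfold Q
    show (if y.1.1.dist y.1.2 v = 0 then _ = v else _)
    by_cases hd : y.1.1.dist y.1.2 v = 0
    · rw [if_pos hd]
      show (if hd' : y.1.1.dist y.1.2 v = 0 then v
        else (tree_exists_parent y.2.1 hd').choose) = v
      rw [dif_pos hd]
    · rw [if_neg hd]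
      show ((fun v => (⟨y.1.1.dist y.1.2 v, dist_lt_succ hz y v⟩ : Fin (r + 1)))
          (if hd' : y.1.1.dist y.1.2 v = 0 then v
            else (tree_exists_parent y.2.1 hd').choose) : ℕ) = y.1.1.dist y.1.2 v - 1
      rw [dif_neg hd]
      have hspec := (tree_exists_parent y.2.1 hd).choose_spec
      show y.1.1.dist y.1.2 _ = _
      omega

noncomputable def bwd (hz : ∀ j, r < j → h j = 0) (y : TreeSet N h) : DataSet N r h :=
  ⟨(fun v => (⟨y.1.1.dist y.1.2 v, dist_lt_succ hz y v⟩ : Fin (r + 1)),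
    fun v => if hd : y.1.1.dist y.1.2 v = 0 then v
      else (tree_exists_parent y.2.1 hd).choose), bwd_prop hz y⟩

lemma bwd_fwd (h0 : h 0 = 1) (hz : ∀ j, r < j → h j = 0) (x : DataSet N r h) :
    bwd hz (fwd h0 x) = x := by
  obtain ⟨⟨l, P⟩, hg, hp⟩ := x
  have hP := parP_spec hp
  have hroot := good_root_unique hg h0
  have hrt := rootOf_lv (hg := hg) h0
  have hdist : ∀ v, (mkG P).dist (rootOf hg h0) v = (l v : ℕ) := dist_eq hP hroot hrt
  apply Subtype.ext
  apply Prod.ext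
  · funext v
    apply Fin.ext
    show (mkG P).dist (rootOf hg h0) v = (l v : ℕ)
    exact hdist v
  · funext v
    show (if hd : (mkG P).dist (rootOf hg h0) v = 0 then v
        else (tree_exists_parent (fwd_prop h0 ⟨⟨l, P⟩, hg, hp⟩).1 hd).choose) = P v
    by_cases hd : (mkG P).dist (rootOf hg h0) v = 0
    · rw [dif_pos hd]
      have h0v : (l v : ℕ) = 0 := by rw [← hdist v]; exact hd
      have hPv := hP v
      simp only [h0v, if_true] at hPv
      exact hPv.symm
    · rw [dif_neg hd]
      have hspec := (tree_exists_parent (fwd_prop h0 ⟨⟨l, P⟩, hg, hp⟩).1 hd).choose_spec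
      have hlw : ((l ((tree_exists_parent (fwd_prop h0 ⟨⟨l, P⟩, hg, hp⟩).1 hd).choose) : ℕ)) + 1
          = (l v : ℕ) := by
        rw [← hdist _, ← hdist v]
        exact hspec.2
      exact (parent_unique hP hspec.1 hlw).symm

lemma fwd_bwd (h0 : h 0 = 1) (hz : ∀ j, r < j → h j = 0) (y : TreeSet N h) :
    fwd h0 (bwd hz y) = y := by
  obtain ⟨⟨G, rt⟩, hT, hfib⟩ := y
  dsimp only at hT hfib
  have hdr : ∀ v, G.dist rt v < r + 1 := dist_lt_succ hz ⟨(G, rt), hT, hfib⟩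
  set Pf : Fin N → Fin N := fun v => if hd : G.dist rt v = 0 then v
    else (tree_exists_parent hT hd).choose with hPf
  have hPspec : ∀ v (hd : G.dist rt v ≠ 0),
      G.Adj v (Pf v) ∧ G.dist rt (Pf v) + 1 = G.dist rt v := by
    intro v hd
    have := (tree_exists_parent hT hd).choose_spec
    simpa [hPf, dif_neg hd] using this
  apply Subtype.ext
  apply Prod.ext
  · -- graphs agree
    show mkG Pf = G
    ext u v
    constructor
    · rintro ⟨hne, hor | hor⟩
      · by_cases hd : G.dist rt u = 0
        · exfalso; apply hne
          rw [← hor, hPf]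
          simp [dif_pos hd]
        · have := (hPspec u hd).1
          rwa [hor] at this
      · by_cases hd : G.dist rt v = 0
        · exfalso; apply hne
          rw [← hor, hPf]
          simp [dif_pos hd]
        · have := (hPspec v hd).1
          rw [hor] at this
          exact this.symm
    · intro ha
      refine ⟨ha.ne, ?_⟩
      rcases tree_adj_dist hT (rt := rt) ha with hcase | hcase
      · right
        have hd : G.dist rt v ≠ 0 := by omega
        obtain ⟨hadj, hdd⟩ := hPspec v hd
        exact tree_parent_unique hT hadj ha.symm hdd hcase
      · left
        have hd : G.dist rt u ≠ 0 := by omega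
        obtain ⟨hadj, hdd⟩ := hPspec u hd
        exact tree_parent_unique hT hadj ha hdd hcase
  · -- roots agree
    show rootOf (bwd_prop hz ⟨(G, rt), hT, hfib⟩).1 h0 = rt
    refine good_root_unique (bwd_prop hz ⟨(G, rt), hT, hfib⟩).1 h0 _ _
      (rootOf_lv (hg := (bwd_prop hz ⟨(G, rt), hT, hfib⟩).1) h0) ?_
    show G.dist rt rt = 0
    exact SimpleGraph.dist_self

lemma card_main (h0 : h 0 = 1) (hz : ∀ j, r < j → h j = 0) :
    Nat.card (TreeSet N h) = Nat.card (DataSet N r h) :=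
  Nat.card_congr ⟨bwd hz, fwd h0, fwd_bwd h0 hz, bwd_fwd h0 hz⟩

end mainequiv

section counting
variable {N r : ℕ} {h : ℕ → ℕ}

lemma filter_card {l : Fin N → Fin (r + 1)} (hg : Good r h l) (i : ℕ) :
    (Finset.univ.filter fun v : Fin N => (l v : ℕ) = i).card = h i := by
  classical
  rw [← hg i, Set.ncard_eq_toFinset_card']
  congr 1
  ext v
  simp

lemma prod_levels {l : Fin N → Fin (r + 1)} (hg : Good r h l) (F : ℕ → ℕ) :
    ∏ v : Fin N, F (l v : ℕ) = ∏ i ∈ Finset.range (r + 1), F i ^ h i := by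
  classical
  rw [← Finset.prod_fiberwise_of_maps_to (g := fun v : Fin N => (l v : ℕ))
      (t := Finset.range (r + 1)) (fun v _ => Finset.mem_range.mpr (l v).isLt)
      (fun v => F (l v : ℕ))]
  refine Finset.prod_congr rfl fun i _ => ?_
  calc ∏ v ∈ Finset.univ.filter fun v : Fin N => (l v : ℕ) = i, F (l v : ℕ)
      = ∏ v ∈ Finset.univ.filter fun v : Fin N => (l v : ℕ) = i, F i :=
        Finset.prod_congr rfl fun v hv => by rw [(Finset.mem_filter.mp hv).2]
    _ = F i ^ h i := by rw [Finset.prod_const, filter_card hg i]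

lemma card_parP {l : Fin N → Fin (r + 1)} (hg : Good r h l) :
    Nat.card {P : Fin N → Fin N // ParP l P}
      = ∏ i ∈ Finset.range (r + 1), (if i = 0 then 1 else h (i - 1)) ^ h i := by
  classical
  have e1 : {P : Fin N → Fin N // ParP l P} ≃ ∀ v, {u // Q l v u} := Equiv.subtypePiEquivPi
  rw [Nat.card_congr e1, Nat.card_pi]
  have hfac : ∀ v : Fin N, Nat.card {u // Q l v u}
      = (fun j => if j = 0 then 1 else h (j - 1)) (l v : ℕ) := by
    intro v
    by_cases h0 : (l v : ℕ) = 0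
    · have he : ∀ u, Q l v u ↔ u = v := fun u => by unfold Q; rw [if_pos h0]
      rw [Nat.card_congr (Equiv.subtypeEquivRight he)]
      simp [Nat.card_eq_fintype_card, h0]
    · have he : ∀ u : Fin N, Q l v u ↔ (l u : ℕ) = (l v : ℕ) - 1 := fun u => by
        unfold Q; rw [if_neg h0]
      rw [Nat.card_congr (Equiv.subtypeEquivRight he)]
      simp only [h0, if_neg, if_false]
      exact (Nat.card_coe_set_eq {u : Fin N | (l u : ℕ) = (l v : ℕ) - 1}).trans
        (hg ((l v : ℕ) - 1))
  rw [Finset.prod_congr rfl fun v _ => hfac v]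
  exact prod_levels hg (fun j => if j = 0 then 1 else h (j - 1))

/-- The fiber of `DataSet` over a level function. -/
def fiberDS (l : Fin N → Fin (r + 1)) :
    {x : DataSet N r h // x.1.1 = l} ≃ {P : Fin N → Fin N // Good r h l ∧ ParP l P} where
  toFun x := match x with | ⟨⟨⟨l', P⟩, hx⟩, hl⟩ => ⟨P, hl ▸ hx⟩
  invFun P := ⟨⟨⟨l, P.1⟩, P.2⟩, rfl⟩
  left_inv := by rintro ⟨⟨⟨l', P⟩, hx⟩, rfl⟩; rfl
  right_inv P := rfl

lemma card_dataset :
    Nat.card (DataSet N r h) = Nat.card {l : Fin N → Fin (r + 1) // Good r h l}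
      * ∏ i ∈ Finset.range (r + 1), (if i = 0 then 1 else h (i - 1)) ^ h i := by
  classical
  set K := ∏ i ∈ Finset.range (r + 1), (if i = 0 then 1 else h (i - 1)) ^ h i with hK
  rw [card_fiberwise (X := DataSet N r h) (fun x => x.1.1)
      (fun l => if Good r h l then K else 0) ?hc]
  · calc ∑ l : Fin N → Fin (r + 1), (if Good r h l then K else 0)
        = ∑ l ∈ Finset.univ.filter fun l : Fin N → Fin (r + 1) => Good r h l, K :=
          (Finset.sum_filter _ _).symm
      _ = (Finset.univ.filter fun l : Fin N → Fin (r + 1) => Good r h l).card * K := by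
          rw [Finset.sum_const, smul_eq_mul]
      _ = Nat.card {l : Fin N → Fin (r + 1) // Good r h l} * K := by
          rw [Nat.card_eq_fintype_card, Fintype.card_subtype]
  case hc =>
    intro l
    show Nat.card {x : DataSet N r h // x.1.1 = l} = if Good r h l then K else 0
    rw [Nat.card_congr (fiberDS l)]
    by_cases hgl : Good r h l
    · rw [if_pos hgl,
        Nat.card_congr (Equiv.subtypeEquivRight fun P => and_iff_right hgl), card_parP hgl]
    · rw [if_neg hgl]
      have : IsEmpty {P : Fin N → Fin N // Good r h l ∧ ParP l P} :=
        ⟨fun P => hgl P.2.1⟩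
      exact Nat.card_of_isEmpty

lemma card_lvl_mul_fact (hz : ∀ j, r < j → h j = 0)
    (hN : N = ∑ i ∈ Finset.range (r + 1), h i) :
    Nat.card {l : Fin N → Fin (r + 1) // Good r h l}
      * ∏ i ∈ Finset.range (r + 1), (h i).factorial = N.factorial := by
  classical
  have hcard : Fintype.card (Σ i : Fin (r + 1), Fin (h (i : ℕ))) = N := by
    rw [Fintype.card_sigma, hN]
    simp [Fin.sum_univ_eq_sum_range (fun i => h i) (r + 1)]
  have hX : Nat.card (Fin N ≃ Σ i : Fin (r + 1), Fin (h (i : ℕ))) = N.factorial := by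
    rw [Nat.card_eq_fintype_card,
      Fintype.card_equiv ((Fintype.equivFinOfCardEq hcard).symm), Fintype.card_fin]
  rw [← hX]
  rw [card_fiberwise (X := Fin N ≃ Σ i : Fin (r + 1), Fin (h (i : ℕ)))
      (fun F => fun a => (F a).1)
      (fun l => if Good r h l then ∏ i ∈ Finset.range (r + 1), (h i).factorial else 0) ?hc]
  · symm
    calc ∑ l : Fin N → Fin (r + 1),
        (if Good r h l then ∏ i ∈ Finset.range (r + 1), (h i).factorial else 0)
        = ∑ l ∈ Finset.univ.filter fun l : Fin N → Fin (r + 1) => Good r h l,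
            ∏ i ∈ Finset.range (r + 1), (h i).factorial := (Finset.sum_filter _ _).symm
      _ = (Finset.univ.filter fun l : Fin N → Fin (r + 1) => Good r h l).card
            * ∏ i ∈ Finset.range (r + 1), (h i).factorial := by
          rw [Finset.sum_const, smul_eq_mul]
      _ = _ := by rw [Nat.card_eq_fintype_card, Fintype.card_subtype]
  case hc =>
    intro l
    show Nat.card {F : Fin N ≃ Σ i : Fin (r + 1), Fin (h (i : ℕ)) // (fun a => (F a).1) = l}
      = if Good r h l then ∏ i ∈ Finset.range (r + 1), (h i).factorial else 0
    have hequiv : {F : Fin N ≃ Σ i : Fin (r + 1), Fin (h (i : ℕ)) //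
        (fun a => (F a).1) = l} ≃ ∀ i : Fin (r + 1), ({a // l a = i} ≃ Fin (h (i : ℕ))) :=
      (Equiv.subtypeEquivRight fun F => funext_iff).trans
        (fiberEquiv (fun i : Fin (r + 1) => Fin (h (i : ℕ))) l)
    by_cases hgl : Good r h l
    · rw [if_pos hgl, Nat.card_congr hequiv, Nat.card_pi]
      have hfac : ∀ i : Fin (r + 1),
          Nat.card ({a // l a = i} ≃ Fin (h (i : ℕ))) = (h (i : ℕ)).factorial := by
        intro i
        have hci : Fintype.card {a // l a = i} = h (i : ℕ) := by
          rw [Fintype.card_subtype, ← filter_card hgl (i : ℕ)]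
          congr 1
          ext v
          simp [Fin.ext_iff]
        rw [Nat.card_eq_fintype_card, Fintype.card_equiv (Fintype.equivFinOfCardEq hci), hci]
      rw [Finset.prod_congr rfl fun i _ => hfac i]
      exact Fin.prod_univ_eq_prod_range (fun i => (h i).factorial) (r + 1)
    · rw [if_neg hgl]
      have : IsEmpty {F : Fin N ≃ Σ i : Fin (r + 1), Fin (h (i : ℕ)) //
          (fun a => (F a).1) = l} := by
        refine ⟨fun F => hgl ?_⟩
        have E := hequiv F
        intro i
        by_cases hi : i < r + 1
        · have h1 : Nat.card {a : Fin N // l a = ⟨i, hi⟩} = h i := by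
            rw [Nat.card_congr (E ⟨i, hi⟩), Nat.card_eq_fintype_card, Fintype.card_fin]
          have h2 : {v : Fin N | (l v : ℕ) = i}.ncard
              = Nat.card {a : Fin N // l a = ⟨i, hi⟩} := by
            rw [← Nat.card_coe_set_eq]
            exact Nat.card_congr (Equiv.subtypeEquivRight (fun v => by simp [Fin.ext_iff]))
          rw [h2, h1]
        · have hsets : {v : Fin N | (l v : ℕ) = i} = ∅ := by
            ext v
            simp only [Set.mem_setOf_eq, Set.mem_empty_iff_false, iff_false]
            have := (l v).isLt
            omega
          rw [hsets, Set.ncard_empty, hz i (by omega)]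
      exact Nat.card_of_isEmpty

lemma prod_Icc_shift (f : ℕ → ℕ) (n : ℕ) :
    ∏ i ∈ Finset.Icc 1 n, f i = ∏ i ∈ Finset.range n, f (i + 1) := by
  induction n with
  | zero => simp
  | succ n ih => rw [Finset.prod_Icc_succ_top (by omega), ih, Finset.prod_range_succ]

end counting

end CayleyAux

/-- The number of rooted Cayley trees on `{1, …, N}` with horizontal
profile `(1, h 1, …, h r)` — exactly `h i` vertices at distance `i` from the root —
equals `N! / (h 1 ! ⋯ h r !) * ∏_{i=1}^{r-1} (h i) ^ (h (i+1))`, stated here with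
denominators cleared. -/
theorem cayley_horizontal_profile
    (r : ℕ) (h : ℕ → ℕ) (h0 : h 0 = 1)
    (hpos : ∀ i ≤ r, 0 < h i) (hz : ∀ j, r < j → h j = 0)
    (N : ℕ) (hN : N = ∑ i ∈ Finset.range (r + 1), h i) :
    {p : SimpleGraph (Fin N) × Fin N | p.1.IsTree ∧
        ∀ i : ℕ, {v : Fin N | p.1.dist p.2 v = i}.ncard = h i}.ncard
      * ∏ i ∈ Finset.Icc 1 r, (h i).factorial =
    N.factorial * ∏ i ∈ Finset.Icc 1 (r - 1), h i ^ h (i + 1) := by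
  classical
  have hset : {p : SimpleGraph (Fin N) × Fin N | p.1.IsTree ∧
      ∀ i : ℕ, {v : Fin N | p.1.dist p.2 v = i}.ncard = h i}.ncard
      = Nat.card (CayleyAux.TreeSet N h) := (Nat.card_coe_set_eq _).symm
  rw [hset, CayleyAux.card_main h0 hz, CayleyAux.card_dataset,
    ← CayleyAux.card_lvl_mul_fact hz hN]
  have e1 : ∏ i ∈ Finset.Icc 1 r, (h i).factorial
      = ∏ i ∈ Finset.range r, (h (i + 1)).factorial :=
    CayleyAux.prod_Icc_shift _ r
  have e2 : ∏ i ∈ Finset.range (r + 1), (h i).factorial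
      = ∏ i ∈ Finset.range r, (h (i + 1)).factorial := by
    rw [Finset.prod_range_succ' (fun i => (h i).factorial) r, h0]
    simp
  have e3 : ∏ i ∈ Finset.range (r + 1), (if i = 0 then 1 else h (i - 1)) ^ h i
      = ∏ i ∈ Finset.range r, h i ^ h (i + 1) := by
    rw [Finset.prod_range_succ' (fun i => (if i = 0 then 1 else h (i - 1)) ^ h i) r]
    simp
  have e4 : ∏ i ∈ Finset.Icc 1 (r - 1), h i ^ h (i + 1)
      = ∏ i ∈ Finset.range (r - 1), h (i + 1) ^ h (i + 2) :=
    CayleyAux.prod_Icc_shift _ (r - 1)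
  have e5 : ∏ i ∈ Finset.range r, h i ^ h (i + 1)
      = ∏ i ∈ Finset.range (r - 1), h (i + 1) ^ h (i + 2) := by
    cases r with
    | zero => simp
    | succ s =>
      rw [Finset.prod_range_succ' (fun i => h i ^ h (i + 1)) s, h0]
      simp
  rw [e1, e2, e3, e4, e5]
  ring
end

section
/- Let n_0, ..., n_r be positive integers, V = ⋃_{i=0}^r V_i with V_i = {i^1, ..., i^{n_i}}, and S ⊆ Z with max S = 1. The number of functions f : V \ {0^1} → V such that f maps V_i into ⋃_{s∈S} V_{i-s}, f is injective on each V_i, and f(i^1) = (i-1)^1 for 1 ≤ i ≤ r, equals C(Σ_{s∈S} n_{-s}, n_0 - 1) · ∏_{i=1}^r C(Σ_{s∈S} n_{i-s} - 1, n_i - 1) · ∏_{i=0}^r (n_i - 1)!, where n_j = 0 for j < 0 or j > r. -/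
namespace SInjAux

/-- Index set of a block: for block `i`, labels `j` with `1 ≤ j ≤ n i`, excluding `j = 1`
when `i = 0`. -/
def Ds (n : ℤ → ℕ) (i : ℤ) : Finset ℕ :=
  if i = 0 then Finset.Icc 2 (n 0) else Finset.Icc 1 (n i)

/-- Target finset for block `i`: the union of blocks `i - s`, `s ∈ S`. -/
def TF (S : Finset ℤ) (n : ℤ → ℕ) (i : ℤ) : Finset (ℤ × ℕ) :=
  S.biUnion fun s => (Finset.Icc 1 (n (i - s))).image fun j => (i - s, j)

lemma mem_Ds {n : ℤ → ℕ} {i : ℤ} {j : ℕ} :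
    j ∈ Ds n i ↔ (1 ≤ j ∧ j ≤ n i) ∧ (i = 0 → j ≠ 1) := by
  unfold Ds
  by_cases h : i = 0 <;> simp [h, Finset.mem_Icc] <;> omega

lemma card_Ds {n : ℤ → ℕ} {i : ℤ} :
    (Ds n i).card = if i = 0 then n 0 - 1 else n i := by
  unfold Ds
  by_cases h : i = 0 <;> simp [h, Nat.card_Icc]

lemma mem_TF {S : Finset ℤ} {r : ℤ} {n : ℤ → ℕ}
    (hzero : ∀ i : ℤ, i < 0 ∨ r < i → n i = 0) {i : ℤ} {w : ℤ × ℕ} :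
    w ∈ TF S n i ↔ (0 ≤ w.1 ∧ w.1 ≤ r ∧ 1 ≤ w.2 ∧ w.2 ≤ n w.1) ∧ i - w.1 ∈ S := by
  constructor
  · intro hw
    simp only [TF, Finset.mem_biUnion, Finset.mem_image, Finset.mem_Icc] at hw
    obtain ⟨s, hs, j, hj, rfl⟩ := hw
    have h0 : 0 ≤ i - s ∧ i - s ≤ r := by
      by_contra h
      have := hzero (i - s) (by omega)
      omega
    exact ⟨⟨h0.1, h0.2, hj.1, hj.2⟩, by simpa using hs⟩
  · rintro ⟨⟨h1, h2, h3, h4⟩, hs⟩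
    simp only [TF, Finset.mem_biUnion, Finset.mem_image, Finset.mem_Icc]
    have e : i - (i - w.1) = w.1 := by ring
    exact ⟨i - w.1, hs, w.2, by rw [e]; exact ⟨h3, h4⟩, by rw [e]⟩

lemma card_TF {S : Finset ℤ} {n : ℤ → ℕ} {i : ℤ} :
    (TF S n i).card = ∑ s ∈ S, n (i - s) := by
  unfold TF
  rw [Finset.card_biUnion]
  · refine Finset.sum_congr rfl fun s hs => ?_
    rw [Finset.card_image_of_injective _ (fun a b h => by simpa using h)]
    simp [Nat.card_Icc]
  · intro s hs t ht hst
    simp only [Finset.disjoint_left, Finset.mem_image, Finset.mem_Icc]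
    rintro a ⟨j, hj, rfl⟩ ⟨k, hk, hak⟩
    apply hst
    have := congrArg Prod.fst hak
    simp only at this
    omega

/-- Embeddings sending a prescribed point `a` to a prescribed point `b` correspond to
embeddings of the complements. -/
def fixedEmbeddingEquiv {α β : Type*} [DecidableEq α] (a : α) (b : β) :
    {g : α ↪ β // g a = b} ≃ ({x : α // x ≠ a} ↪ {y : β // y ≠ b}) where
  toFun g := ⟨fun x => ⟨g.1 x, fun h => x.2 (g.1.injective (h.trans g.2.symm))⟩,
    fun x y h => Subtype.ext (g.1.injective (congrArg Subtype.val h))⟩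
  invFun h := ⟨⟨fun x => if hx : x = a then b else (h ⟨x, hx⟩ : β),
      by
        intro x y hxy
        by_cases hx : x = a <;> by_cases hy : y = a <;>
          simp only [hx, hy, dif_pos, dif_neg, not_false_iff] at hxy ⊢
        · exact absurd hxy.symm (h ⟨y, hy⟩).2
        · exact absurd hxy (h ⟨x, hx⟩).2
        · exact congrArg Subtype.val (h.injective (Subtype.ext hxy))⟩,
    by simp⟩
  left_inv g := by
    apply Subtype.ext; apply Function.Embedding.ext; intro x
    by_cases hx : x = a
    · subst hx; simpa using g.2.symm
    · simp [hx]; rfl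
  right_inv h := by
    apply Function.Embedding.ext; intro x
    apply Subtype.ext
    simp [x.2]

lemma card_ne {α : Type*} [Fintype α] [DecidableEq α] (a : α) :
    Fintype.card {x : α // x ≠ a} = Fintype.card α - 1 := by
  simp [Fintype.card_subtype_compl]

lemma card_fixedEmbedding {α β : Type*} [Fintype α] [Fintype β] [DecidableEq α] [DecidableEq β]
    (a : α) (b : β) :
    Nat.card {g : α ↪ β // g a = b} =
      (Fintype.card β - 1).descFactorial (Fintype.card α - 1) := by
  rw [Nat.card_congr (fixedEmbeddingEquiv a b), Nat.card_eq_fintype_card,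
    Fintype.card_embedding_eq, card_ne, card_ne]


/-- The data of an `S`-injection restricted to block `i`: a function from the block's
label set into the target finset, injective, sending label `1` to `(i-1, 1)` when `1 ≤ i`. -/
def Block (S : Finset ℤ) (n : ℤ → ℕ) (i : ℤ) : Type :=
  {g : {j // j ∈ Ds n i} → {w // w ∈ TF S n i} //
    Function.Injective g ∧
      (1 ≤ i → ∀ j : {j // j ∈ Ds n i}, (j : ℕ) = 1 → ((g j : ℤ × ℕ)) = (i - 1, 1))}

lemma card_block_zero (S : Finset ℤ) (n : ℤ → ℕ) :
    Nat.card (Block S n 0) = (∑ s ∈ S, n (0 - s)).descFactorial (n 0 - 1) := by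
  have e1 : Block S n 0 ≃ {g : {j // j ∈ Ds n 0} → {w // w ∈ TF S n 0} //
      Function.Injective g} :=
    Equiv.subtypeEquivRight fun g =>
      ⟨fun h => h.1, fun h => ⟨h, fun h0 => absurd h0 (by norm_num)⟩⟩
  rw [Nat.card_congr e1, Nat.card_congr (Equiv.subtypeInjectiveEquivEmbedding _ _),
    Nat.card_eq_fintype_card, Fintype.card_embedding_eq, Fintype.card_coe, Fintype.card_coe,
    card_TF, card_Ds]
  simp

lemma card_block_pos (S : Finset ℤ) (h1S : 1 ∈ S) (r : ℤ) (n : ℤ → ℕ)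
    (hpos : ∀ i ∈ Finset.Icc 0 r, 0 < n i)
    (hzero : ∀ i : ℤ, i < 0 ∨ r < i → n i = 0)
    {i : ℤ} (hi : 1 ≤ i) (hir : i ≤ r) :
    Nat.card (Block S n i) = ((∑ s ∈ S, n (i - s)) - 1).descFactorial (n i - 1) := by
  have hine : i ≠ 0 := by omega
  have hni : 0 < n i := hpos i (Finset.mem_Icc.mpr ⟨by omega, hir⟩)
  have hni1 : 0 < n (i - 1) := hpos (i - 1) (Finset.mem_Icc.mpr ⟨by omega, by omega⟩)
  have hj1 : (1 : ℕ) ∈ Ds n i := mem_Ds.mpr ⟨⟨le_refl 1, hni⟩, fun h0 => absurd h0 hine⟩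
  have hb : ((i - 1, 1) : ℤ × ℕ) ∈ TF S n i :=
    (mem_TF hzero).mpr ⟨⟨by omega, by omega, le_refl 1, hni1⟩, by simpa using h1S⟩
  set j₁ : {j // j ∈ Ds n i} := ⟨1, hj1⟩
  set b : {w // w ∈ TF S n i} := ⟨(i - 1, 1), hb⟩
  have e0 : Block S n i ≃ {g : {j // j ∈ Ds n i} ↪ {w // w ∈ TF S n i} //
      1 ≤ i → ∀ j : {j // j ∈ Ds n i}, (j : ℕ) = 1 → ((g j : ℤ × ℕ)) = (i - 1, 1)} :=
    ⟨fun g => ⟨⟨g.1, g.2.1⟩, g.2.2⟩, fun g => ⟨g.1.1, g.1.2, g.2⟩,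
      fun _ => rfl, fun _ => rfl⟩
  have e2 : {g : {j // j ∈ Ds n i} ↪ {w // w ∈ TF S n i} //
      1 ≤ i → ∀ j : {j // j ∈ Ds n i}, (j : ℕ) = 1 → ((g j : ℤ × ℕ)) = (i - 1, 1)} ≃
      {g : {j // j ∈ Ds n i} ↪ {w // w ∈ TF S n i} // g j₁ = b} := by
    refine Equiv.subtypeEquivRight fun g => ?_
    constructor
    · intro h
      exact Subtype.ext (h hi j₁ rfl)
    · intro h _ j hj
      have hjj : j = j₁ := Subtype.ext hj
      rw [hjj, h]
  rw [Nat.card_congr (e0.trans e2), card_fixedEmbedding, Fintype.card_coe, Fintype.card_coe,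
    card_TF, card_Ds, if_neg hine]

/-- The domain element of abscissa `i` and label `j`. -/
def vOf (r : ℤ) (n : ℤ → ℕ) (i : {i : ℤ // i ∈ Finset.Icc (0:ℤ) r})
    (j : {j // j ∈ Ds n (i : ℤ)}) :
    {v : ℤ × ℕ // (0 ≤ v.1 ∧ v.1 ≤ r ∧ 1 ≤ v.2 ∧ v.2 ≤ n v.1) ∧
      v ≠ ((0 : ℤ), (1 : ℕ))} :=
  ⟨((i : ℤ), (j : ℕ)), by
    have hi := Finset.mem_Icc.mp i.2
    have hj := (mem_Ds (n := n)).mp j.2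
    refine ⟨⟨hi.1, hi.2, hj.1.1, hj.1.2⟩, fun hv => ?_⟩
    have h1 : (i : ℤ) = 0 := congrArg Prod.fst hv
    have h2 : (j : ℕ) = 1 := congrArg Prod.snd hv
    exact hj.2 h1 h2⟩

/-- An `S`-injection is the same thing as an independent choice of block data. -/
def mainEquiv (S : Finset ℤ) (r : ℤ) (n : ℤ → ℕ)
    (hzero : ∀ i : ℤ, i < 0 ∨ r < i → n i = 0) :
    {f : {v : ℤ × ℕ // (0 ≤ v.1 ∧ v.1 ≤ r ∧ 1 ≤ v.2 ∧ v.2 ≤ n v.1) ∧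
            v ≠ ((0 : ℤ), (1 : ℕ))} →
         {v : ℤ × ℕ // 0 ≤ v.1 ∧ v.1 ≤ r ∧ 1 ≤ v.2 ∧ v.2 ≤ n v.1} //
        (∀ v, v.1.1 - (f v).1.1 ∈ S) ∧
        (∀ v w, v.1.1 = w.1.1 → f v = f w → v = w) ∧
        (∀ v, 1 ≤ v.1.1 → v.1.2 = 1 → ((f v) : ℤ × ℕ) = (v.1.1 - 1, 1))} ≃
    (∀ i : {i : ℤ // i ∈ Finset.Icc (0:ℤ) r}, Block S n (i : ℤ)) where
  toFun f i :=
    ⟨fun j => ⟨(f.1 (vOf r n i j) : ℤ × ℕ),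
        (mem_TF hzero).mpr ⟨(f.1 (vOf r n i j)).2, f.2.1 (vOf r n i j)⟩⟩,
      fun j j' h => by
        have h0 := congrArg (fun x : {w // w ∈ TF S n (i : ℤ)} => (x : ℤ × ℕ)) h
        have h1 : f.1 (vOf r n i j) = f.1 (vOf r n i j') := Subtype.ext h0
        have h2 := f.2.2.1 (vOf r n i j) (vOf r n i j') rfl h1
        have h3 : ((i : ℤ), (j : ℕ)) = ((i : ℤ), (j' : ℕ)) := congrArg Subtype.val h2
        exact Subtype.ext (congrArg Prod.snd h3),
      fun hi1 j hj1 => f.2.2.2 (vOf r n i j) hi1 hj1⟩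
  invFun G :=
    ⟨fun v =>
      ⟨((G ⟨v.1.1, Finset.mem_Icc.mpr ⟨v.2.1.1, v.2.1.2.1⟩⟩).1
          ⟨v.1.2, mem_Ds.mpr ⟨⟨v.2.1.2.2.1, v.2.1.2.2.2⟩,
            fun h0 h1 => v.2.2 (Prod.ext h0 h1)⟩⟩ : ℤ × ℕ),
        ((mem_TF hzero).mp ((G ⟨v.1.1, Finset.mem_Icc.mpr ⟨v.2.1.1, v.2.1.2.1⟩⟩).1
          ⟨v.1.2, mem_Ds.mpr ⟨⟨v.2.1.2.2.1, v.2.1.2.2.2⟩,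
            fun h0 h1 => v.2.2 (Prod.ext h0 h1)⟩⟩).2).1⟩,
      by
        refine ⟨fun v => ((mem_TF hzero).mp
          ((G ⟨v.1.1, Finset.mem_Icc.mpr ⟨v.2.1.1, v.2.1.2.1⟩⟩).1
            ⟨v.1.2, mem_Ds.mpr ⟨⟨v.2.1.2.2.1, v.2.1.2.2.2⟩,
              fun h0 h1 => v.2.2 (Prod.ext h0 h1)⟩⟩).2).2, ?_, ?_⟩
        · intro v w hab hfg
          obtain ⟨⟨a, j⟩, hv⟩ := v
          obtain ⟨⟨b, k⟩, hw⟩ := w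
          obtain rfl : a = b := hab
          have hval := congrArg
            (fun x : {v : ℤ × ℕ // 0 ≤ v.1 ∧ v.1 ≤ r ∧ 1 ≤ v.2 ∧ v.2 ≤ n v.1} =>
              (x : ℤ × ℕ)) hfg
          have h1 : (⟨j, mem_Ds.mpr ⟨⟨hv.1.2.2.1, hv.1.2.2.2⟩,
                fun h0 h1 => hv.2 (Prod.ext h0 h1)⟩⟩ : {x // x ∈ Ds n a}) =
              ⟨k, mem_Ds.mpr ⟨⟨hw.1.2.2.1, hw.1.2.2.2⟩,
                fun h0 h1 => hw.2 (Prod.ext h0 h1)⟩⟩ :=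
            (G ⟨a, Finset.mem_Icc.mpr ⟨hv.1.1, hv.1.2.1⟩⟩).2.1 (Subtype.ext hval)
          have h2 : j = k := congrArg Subtype.val h1
          subst h2
          rfl
        · intro v h1 hj
          exact (G ⟨v.1.1, Finset.mem_Icc.mpr ⟨v.2.1.1, v.2.1.2.1⟩⟩).2.2 h1
            ⟨v.1.2, mem_Ds.mpr ⟨⟨v.2.1.2.2.1, v.2.1.2.2.2⟩,
              fun h0 h1' => v.2.2 (Prod.ext h0 h1')⟩⟩ hj⟩
  left_inv f := Subtype.ext (funext fun v => Subtype.ext rfl)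
  right_inv G := funext fun i => Subtype.ext (funext fun j => Subtype.ext rfl)

end SInjAux

/-- With `V = ⋃_{i=0}^r V i`, `|V i| = n i`, the number of functions
`f : V \ {0^1} → V` mapping each `V i` into `⋃_{s ∈ S} V (i - s)`, injective on each
`V i`, with `f (i^1) = (i-1)^1` for `1 ≤ i ≤ r`, equals
`C(∑_{s∈S} n (-s), n 0 - 1) * ∏_{i=1}^r C(∑_{s∈S} n (i-s) - 1, n i - 1)
  * ∏_{i=0}^r (n i - 1)!`. -/
theorem S_injections_count
    (S : Finset ℤ) (h1S : 1 ∈ S) (hSle : ∀ s ∈ S, s ≤ 1)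
    (r : ℤ) (hr : 0 ≤ r) (n : ℤ → ℕ)
    (hpos : ∀ i ∈ Finset.Icc 0 r, 0 < n i)
    (hzero : ∀ i : ℤ, i < 0 ∨ r < i → n i = 0) :
    {f : {v : ℤ × ℕ // (0 ≤ v.1 ∧ v.1 ≤ r ∧ 1 ≤ v.2 ∧ v.2 ≤ n v.1) ∧
            v ≠ ((0 : ℤ), (1 : ℕ))} →
         {v : ℤ × ℕ // 0 ≤ v.1 ∧ v.1 ≤ r ∧ 1 ≤ v.2 ∧ v.2 ≤ n v.1} |
        (∀ v, v.1.1 - (f v).1.1 ∈ S) ∧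
        (∀ v w, v.1.1 = w.1.1 → f v = f w → v = w) ∧
        (∀ v, 1 ≤ v.1.1 → v.1.2 = 1 → ((f v) : ℤ × ℕ) = (v.1.1 - 1, 1))}.ncard =
    Nat.choose (∑ s ∈ S, n (-s)) (n 0 - 1) *
      (∏ i ∈ Finset.Icc 1 r, Nat.choose ((∑ s ∈ S, n (i - s)) - 1) (n i - 1)) *
      ∏ i ∈ Finset.Icc 0 r, (n i - 1).factorial := by
  classical
  rw [← Nat.card_coe_set_eq]
  refine (Nat.card_congr (SInjAux.mainEquiv S r n hzero)).trans ?_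
  rw [Nat.card_pi, Finset.univ_eq_attach,
    Finset.prod_attach (Finset.Icc (0:ℤ) r) (fun i => Nat.card (SInjAux.Block S n i))]
  have hsplit : Finset.Icc (0:ℤ) r = insert 0 (Finset.Icc 1 r) := by
    ext x
    simp only [Finset.mem_Icc, Finset.mem_insert]
    omega
  have h0notin : (0 : ℤ) ∉ Finset.Icc (1:ℤ) r := by simp
  rw [hsplit, Finset.prod_insert h0notin, Finset.prod_insert h0notin,
    SInjAux.card_block_zero,
    Finset.prod_congr rfl (fun i hi => SInjAux.card_block_pos S h1S r n hpos hzero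
      (Finset.mem_Icc.mp hi).1 (Finset.mem_Icc.mp hi).2)]
  simp only [Nat.descFactorial_eq_factorial_mul_choose, zero_sub]
  rw [Finset.prod_mul_distrib]
  ring
end

section
/- Let S ⊆ Z with max S = 1, let ℓ ≤ 0 ≤ r and define the directed graph G on vertex set {ℓ, ..., r} with an arc from i to j iff i - j ∈ S. Let y_ℓ, ..., y_r be indeterminates (y_j = 0 outside [ℓ, r]). Define P = Σ_C (-1)^{|C|} ∏_{i=ℓ}^r ((Σ_{s∈S} y_{i-s})^{[i ∉ C]} · (y_i - [i=0])^{[i ∈ C]}), where C ranges over sets of vertex-disjoint elementary directed cycles of G and |C| is the number of cycles. If |ℓ| + r > 0 and (min S = -1 or ℓ = 0), then P = (Σ_{s∈S} y_{-s}) · ∏_{i=ℓ+1}^{r-1} y_i. -/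
/-- `Yvar ℓ r j` is the indeterminate `y j` for `ℓ ≤ j ≤ r`, and `0` otherwise. -/
noncomputable def Yvar (ℓ r : ℤ) (j : ℤ) : MvPolynomial ℤ ℤ :=
  if ℓ ≤ j ∧ j ≤ r then MvPolynomial.X j else 0

namespace CCS

open Matrix Finset

abbrev P := MvPolynomial ℤ ℤ
abbrev idx (ℓ r : ℤ) := {x : ℤ // x ∈ Finset.Icc ℓ r}

variable {ℓ r : ℤ}

lemma Yvar_in {j : ℤ} (h1 : ℓ ≤ j) (h2 : j ≤ r) : Yvar ℓ r j = MvPolynomial.X j :=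
  if_pos ⟨h1, h2⟩

lemma Yvar_out {j : ℤ} (h : j < ℓ ∨ r < j) : Yvar ℓ r j = 0 := by
  unfold Yvar; rw [if_neg]; omega

lemma Yvar_ne {j : ℤ} (h1 : ℓ ≤ j) (h2 : j ≤ r) : Yvar ℓ r j ≠ 0 := by
  rw [Yvar_in h1 h2]; exact MvPolynomial.X_ne_zero (R := ℤ) j

def jT (hle : ℓ ≤ r) : idx ℓ r := ⟨r, by simp [Finset.mem_Icc, hle]⟩
def jB (hle : ℓ ≤ r) : idx ℓ r := ⟨ℓ, by simp [Finset.mem_Icc, hle]⟩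

def eIota (hle : ℓ ≤ r) : Fin ((r - ℓ).toNat + 1) ≃ idx ℓ r where
  toFun p := ⟨ℓ + p.1, by have := p.isLt; simp only [Finset.mem_Icc]; omega⟩
  invFun x := ⟨(x.1 - ℓ).toNat, by have := x.2; simp only [Finset.mem_Icc] at this; omega⟩
  left_inv p := by
    have := p.isLt
    ext
    simp only
    omega
  right_inv x := by
    have := x.2
    simp only [Finset.mem_Icc] at this
    ext
    simp only
    omega

lemma eIota_coe (hle : ℓ ≤ r) (p : Fin ((r - ℓ).toNat + 1)) :
    ((eIota hle p : idx ℓ r) : ℤ) = ℓ + p.1 := rfl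

end CCS

namespace CCS
open Matrix Finset

lemma Icc_insert_top {a b : ℤ} (h : a ≤ b + 1) :
    Finset.Icc a (b + 1) = insert (b + 1) (Finset.Icc a b) := by
  ext x
  simp only [Finset.mem_Icc, Finset.mem_insert]
  omega

lemma prodShift (f : ℤ → P) : ∀ (m : ℕ) (a : ℤ),
    ∏ q ∈ Finset.range m, f (a + q) = ∏ i ∈ Finset.Icc a (a + m - 1), f i := by
  intro m
  induction m with
  | zero => intro a; rw [Finset.range_zero, Finset.prod_empty,
      Finset.Icc_eq_empty (by omega), Finset.prod_empty]
  | succ m ih =>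
    intro a
    rw [Finset.prod_range_succ, ih a]
    have h1 : a + (m + 1 : ℕ) - 1 = (a + m - 1) + 1 := by push_cast; ring
    rw [h1, Icc_insert_top (by omega), Finset.prod_insert (by simp [Finset.mem_Icc]),
      mul_comm]
    congr 1
    push_cast
    ring

end CCS

namespace CCS
open Matrix Finset Equiv

lemma detT (hle : ℓ ≤ r) (A : Matrix (idx ℓ r) (idx ℓ r) P)
    (h0 : ∀ i : idx ℓ r, (i : ℤ) ≠ ℓ → A i (jT hle) = 0)
    (h1 : A (jB hle) (jT hle) = 1)
    (hz : ∀ i j : idx ℓ r, (j : ℤ) < (i : ℤ) - 1 → (j : ℤ) ≠ r → A i j = 0)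
    (hd : ∀ i j : idx ℓ r, (j : ℤ) = (i : ℤ) - 1 → A i j = - Yvar ℓ r (i : ℤ)) :
    A.det = ∏ i ∈ Finset.Icc (ℓ + 1) r, Yvar ℓ r i := by
  set n := (r - ℓ).toNat with hn
  have hrℓ : (n : ℤ) = r - ℓ := by omega
  let e := eIota (ℓ := ℓ) (r := r) hle
  let σ : Equiv.Perm (Fin (n + 1)) := (finRotate (n + 1)).symm
  -- description of σ
  have hσ0 : σ 0 = Fin.last n := by
    rw [Equiv.symm_apply_eq, finRotate_succ_apply, Fin.last_add_one]
  have hσ : ∀ q : Fin (n + 1), q ≠ 0 → σ q = q - 1 := by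
    intro q hq
    rw [Equiv.symm_apply_eq, finRotate_succ_apply, sub_add_cancel]
  have hσcoe : ∀ q : Fin (n + 1), q ≠ 0 → ((σ q : Fin (n+1)) : ℕ) = (q : ℕ) - 1 := by
    intro q hq
    rw [hσ q hq, Fin.coe_sub_one, if_neg hq]
  -- the matrix B
  set B : Matrix (Fin (n + 1)) (Fin (n + 1)) P := (A.submatrix e e).submatrix id σ with hB
  have hperm : B.det = Equiv.Perm.sign σ * (A.submatrix e e).det := det_permute' σ _
  have hsub : (A.submatrix e e).det = A.det := det_submatrix_equiv_self e A
  -- triangularity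
  have htri : B.BlockTriangular id := by
    intro p q hpq
    simp only [id] at hpq
    have hq : (q : ℕ) < (p : ℕ) := hpq
    simp only [hB, submatrix_apply, id]
    by_cases hq0 : q = 0
    · subst hq0
      have : e (σ 0) = jT hle := by
        rw [hσ0]
        apply Subtype.ext
        rw [eIota_coe]
        simp only [Fin.val_last, jT]
        omega
      rw [this]
      apply h0
      rw [eIota_coe]
      have : 0 < (p : ℕ) := hq
      omega
    · apply hz
      · rw [eIota_coe, eIota_coe, hσcoe q hq0]
        have h1q : 1 ≤ (q : ℕ) := Nat.one_le_iff_ne_zero.2 (fun h => hq0 (Fin.ext (by simp [h])))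
        omega
      · rw [eIota_coe, hσcoe q hq0]
        have : (q : ℕ) ≤ n := Nat.lt_succ_iff.1 q.isLt
        have h1q : 1 ≤ (q : ℕ) := Nat.one_le_iff_ne_zero.2 (fun h => hq0 (Fin.ext (by simp [h])))
        omega
  have hdetB : B.det = ∏ p : Fin (n + 1), B p p := Matrix.det_of_upperTriangular htri
  -- diagonal entries
  have hdiag : ∀ p : Fin (n + 1), B p p = if p = 0 then 1 else - Yvar ℓ r (ℓ + (p : ℕ)) := by
    intro p
    by_cases hp0 : p = 0
    · subst hp0
      simp only [hB, submatrix_apply, id, if_pos rfl]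
      have h1' : e (σ 0) = jT hle := by
        rw [hσ0]; apply Subtype.ext; rw [eIota_coe]; simp only [Fin.val_last, jT]; omega
      have h2' : e 0 = jB hle := by
        apply Subtype.ext; rw [eIota_coe]; simp only [Fin.val_zero, jB]; omega
      rw [h1', h2', h1]
      simp
    · simp only [hB, submatrix_apply, id, if_neg hp0]
      rw [hd _ _ (by
        rw [eIota_coe, eIota_coe, hσcoe p hp0]
        have h1q : 1 ≤ (p : ℕ) := Nat.one_le_iff_ne_zero.2 (fun h => hp0 (Fin.ext (by simp [h])))
        omega), eIota_coe]
  -- product of the diagonal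
  have hprod : ∏ p : Fin (n + 1), B p p
      = (-1 : P) ^ n * ∏ i ∈ Finset.Icc (ℓ + 1) r, Yvar ℓ r i := by
    calc ∏ p : Fin (n + 1), B p p
        = ∏ p : Fin (n + 1), (if p = 0 then 1 else - Yvar ℓ r (ℓ + (p : ℕ))) :=
          Finset.prod_congr rfl (fun p _ => hdiag p)
      _ = (if (0 : Fin (n+1)) = 0 then (1:P) else - Yvar ℓ r (ℓ + ((0 : Fin (n+1)) : ℕ)))
            * ∏ q : Fin n, (if (q.succ : Fin (n+1)) = 0 then 1
                else - Yvar ℓ r (ℓ + ((q.succ : Fin (n+1)) : ℕ))) := Fin.prod_univ_succ _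
      _ = ∏ q : Fin n, - Yvar ℓ r (ℓ + 1 + (q : ℕ)) := by
          rw [if_pos rfl, one_mul]
          apply Finset.prod_congr rfl
          intro q _
          rw [if_neg (Fin.succ_ne_zero q)]
          congr 2
          simp [Fin.val_succ]
          push_cast
          ring
      _ = (-1 : P) ^ n * ∏ q : Fin n, Yvar ℓ r (ℓ + 1 + (q : ℕ)) := by
          rw [show (fun q : Fin n => - Yvar ℓ r (ℓ + 1 + (q : ℕ)))
              = fun q : Fin n => (-1 : P) * Yvar ℓ r (ℓ + 1 + (q : ℕ)) from by
            funext q; rw [neg_one_mul]]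
          rw [Finset.prod_mul_distrib, Finset.prod_const, Finset.card_univ, Fintype.card_fin]
      _ = (-1 : P) ^ n * ∏ i ∈ Finset.Icc (ℓ + 1) r, Yvar ℓ r i := by
          congr 1
          rw [Fin.prod_univ_eq_prod_range (fun q => Yvar ℓ r (ℓ + 1 + (q : ℕ))) n]
          have h2 : ℓ + 1 + (n : ℤ) - 1 = r := by omega
          rw [prodShift (Yvar ℓ r) n (ℓ + 1), h2]
  -- sign
  have hsign : (Equiv.Perm.sign σ : ℤ) = (-1 : ℤ) ^ n := by
    have : Equiv.Perm.sign σ = Equiv.Perm.sign (finRotate (n + 1)) := by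
      simp [σ]
    rw [this, sign_finRotate]
    simp
  have hsigncast : ((Equiv.Perm.sign σ : ℤ) : P) = (-1 : P) ^ n := by
    rw [hsign]; push_cast; ring
  -- combine
  have hcomb : ((-1 : P) ^ n) * A.det = (-1 : P) ^ n * ∏ i ∈ Finset.Icc (ℓ + 1) r, Yvar ℓ r i := by
    calc ((-1 : P) ^ n) * A.det = ((Equiv.Perm.sign σ : ℤ) : P) * (A.submatrix e e).det := by
          rw [hsigncast, hsub]
      _ = B.det := hperm.symm
      _ = (-1 : P) ^ n * ∏ i ∈ Finset.Icc (ℓ + 1) r, Yvar ℓ r i := by rw [hdetB, hprod]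
  have hunit : IsUnit ((-1 : P) ^ n) := (IsUnit.neg isUnit_one).pow n
  exact hunit.mul_left_cancel hcomb

end CCS

namespace CCS
open Matrix Finset

lemma lemU (hle : ℓ ≤ r) (A : Matrix (idx ℓ r) (idx ℓ r) P) (c : P)
    (hb : ∀ i j : idx ℓ r, (j : ℤ) < (i : ℤ) - 1 → (j : ℤ) ≠ r → A i j = 0)
    (hc : ∀ i j : idx ℓ r, ℓ < (i : ℤ) → (j : ℤ) = (i : ℤ) - 1 → A i j = - Yvar ℓ r (i : ℤ))
    (hm : A.mulVec (fun k : idx ℓ r => Yvar ℓ r (k : ℤ))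
        = fun i : idx ℓ r => c * (if (i : ℤ) = ℓ then 1 else 0)) :
    Yvar ℓ r r * A.det = c * ∏ i ∈ Finset.Icc (ℓ + 1) r, Yvar ℓ r i := by
  classical
  set Ycol : idx ℓ r → P := fun k => Yvar ℓ r (k : ℤ) with hY
  -- first: cramer A (A.mulVec Ycol) (jT) = Yvar r * det A
  have hexp : A.mulVec Ycol = ∑ k : idx ℓ r, Ycol k • (fun i => A i k) := by
    funext i
    rw [Finset.sum_apply]
    simp only [Pi.smul_apply, smul_eq_mul, Matrix.mulVec, dotProduct]
    exact Finset.sum_congr rfl (fun k _ => mul_comm _ _)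
  have h1 : cramer A (A.mulVec Ycol) (jT hle) = Yvar ℓ r r * A.det := by
    rw [hexp, map_sum, Finset.sum_apply]
    have hterm : ∀ k : idx ℓ r,
        ((cramer A) (Ycol k • fun i => A i k)) (jT hle)
          = if k = jT hle then Ycol (jT hle) * A.det else 0 := by
      intro k
      rw [_root_.map_smul, show (cramer A) (fun i => A i k)
          = (Pi.single k A.det : idx ℓ r → P) from
        cramer_row_self A (fun i => A i k) k (fun j => rfl)]
      simp only [Pi.smul_apply, smul_eq_mul, Pi.single_apply]
      by_cases hk : k = jT hle
      · subst hk; simp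
      · rw [if_neg (fun h => hk h.symm), if_neg hk, mul_zero]
    rw [Finset.sum_congr rfl (fun k _ => hterm k),
      Finset.sum_ite_eq' Finset.univ (jT hle) (fun _ => Ycol (jT hle) * A.det)]
    simp [hY, jT]
  -- second: compute the other side
  have h2 : cramer A (fun i : idx ℓ r => c * (if (i : ℤ) = ℓ then 1 else 0)) (jT hle)
      = c * (A.updateCol (jT hle) (fun i => if (i : ℤ) = ℓ then 1 else 0)).det := by
    have : (fun i : idx ℓ r => c * (if (i : ℤ) = ℓ then 1 else 0))
        = c • (fun i : idx ℓ r => if (i : ℤ) = ℓ then (1:P) else 0) := rfl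
    rw [this, _root_.map_smul]
    simp only [Pi.smul_apply, smul_eq_mul]
    rw [cramer_apply]
  -- apply detT to the updated matrix
  have h3 : (A.updateCol (jT hle) (fun i => if (i : ℤ) = ℓ then (1:P) else 0)).det
      = ∏ i ∈ Finset.Icc (ℓ + 1) r, Yvar ℓ r i := by
    apply detT hle
    · intro i hi
      rw [Matrix.updateCol_apply, if_pos rfl, if_neg hi]
    · rw [Matrix.updateCol_apply, if_pos rfl]
      simp [jB]
    · intro i j hj hjr
      rw [Matrix.updateCol_apply, if_neg (fun h => hjr (by rw [h]; rfl))]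
      exact hb i j hj hjr
    · intro i j hj
      have hjr : (j : ℤ) ≠ r := by
        intro h
        have hi2 := i.2
        simp only [Finset.mem_Icc] at hi2
        omega
      have hli : ℓ < (i : ℤ) := by
        have hj2 := j.2
        simp only [Finset.mem_Icc] at hj2
        omega
      rw [Matrix.updateCol_apply, if_neg (fun h => hjr (by rw [h]; rfl))]
      exact hc i j hli hj
  rw [← h1, hm, h2, h3]

end CCS

namespace CCS
open Matrix Finset

noncomputable def Mf (S : Finset ℤ) (ℓ r : ℤ) (i j : ℤ) : P :=
  (if i = j then ∑ s ∈ S, Yvar ℓ r (i - s) else 0) -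
    (Yvar ℓ r i - if i = 0 then 1 else 0) * (if i - j ∈ S then 1 else 0)

noncomputable def Wf (ℓ r i j : ℤ) : P :=
  (if j = i then Yvar ℓ r (i - 1) else 0) - (if j = i - 1 then Yvar ℓ r i else 0)

noncomputable def vf (S : Finset ℤ) (j : ℤ) : P := if -j ∈ S then 1 else 0

noncomputable def zf (i : ℤ) : P := if i ≤ 0 then 1 else 0

noncomputable def Kf (S : Finset ℤ) (ℓ r i j : ℤ) : P := Wf ℓ r i j + zf i * vf S j

noncomputable def IUf (i k : ℤ) : P := (if k = i then 1 else 0) - (if k = i + 1 then 1 else 0)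

noncomputable def Lf (ℓ i k : ℤ) : P :=
  (if k = i then 1 else 0) + (if k = ℓ ∧ ℓ < i ∧ i ≤ 0 then 1 else 0)

lemma sumS (S : Finset ℤ) (ℓ r t : ℤ) :
    ∑ s ∈ S, Yvar ℓ r (t - s)
      = ∑ j ∈ Finset.Icc ℓ r, (if t - j ∈ S then 1 else 0) * Yvar ℓ r j := by
  have h1 : ∀ s ∈ S, Yvar ℓ r (t - s)
      = ∑ j ∈ Finset.Icc ℓ r, if j = t - s then Yvar ℓ r j else 0 := by
    intro s _
    rw [Finset.sum_ite_eq' (Finset.Icc ℓ r) (t - s) (Yvar ℓ r)]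
    by_cases h : t - s ∈ Finset.Icc ℓ r
    · rw [if_pos h]
    · rw [if_neg h, Yvar_out]
      simp only [Finset.mem_Icc] at h
      omega
  rw [Finset.sum_congr rfl h1, Finset.sum_comm]
  apply Finset.sum_congr rfl
  intro j hj
  have h2 : ∀ s ∈ S, (if j = t - s then Yvar ℓ r j else 0)
      = (if s = t - j then Yvar ℓ r j else 0) := by
    intro s _
    apply if_congr _ rfl rfl
    omega
  rw [Finset.sum_congr rfl h2, Finset.sum_ite_eq' S (t - j) (fun _ => Yvar ℓ r j),
    ite_mul, one_mul, zero_mul]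

lemma sumS3 (S : Finset ℤ) (h1S : 1 ∈ S) (hm1 : (-1 : ℤ) ∈ S)
    (hS3 : ∀ s ∈ S, s = -1 ∨ s = 0 ∨ s = 1) (ℓ r t : ℤ) :
    ∑ s ∈ S, Yvar ℓ r (t - s)
      = Yvar ℓ r (t - 1) + Yvar ℓ r (t + 1) + (if (0 : ℤ) ∈ S then Yvar ℓ r t else 0) := by
  by_cases h0 : (0 : ℤ) ∈ S
  · have hSeq : S = ({-1, 0, 1} : Finset ℤ) := by
      apply Finset.Subset.antisymm
      · intro x hx
        rcases hS3 x hx with h | h | h <;> simp [h]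
      · intro x hx
        simp only [Finset.mem_insert, Finset.mem_singleton] at hx
        rcases hx with h | h | h <;> subst h <;> assumption
    rw [hSeq, if_pos (show (0:ℤ) ∈ ({-1,0,1}:Finset ℤ) by decide)]
    rw [show ({-1, 0, 1} : Finset ℤ) = insert (-1 : ℤ) (insert (0 : ℤ) {1}) from rfl]
    rw [Finset.sum_insert (by decide), Finset.sum_insert (by decide), Finset.sum_singleton]
    have e1 : t - (-1) = t + 1 := by ring
    have e2 : t - 0 = t := by ring
    rw [e1, e2]
    ring
  · have hSeq : S = ({-1, 1} : Finset ℤ) := by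
      apply Finset.Subset.antisymm
      · intro x hx
        rcases hS3 x hx with h | h | h
        · simp [h]
        · exact absurd (h ▸ hx) h0
        · simp [h]
      · intro x hx
        simp only [Finset.mem_insert, Finset.mem_singleton] at hx
        rcases hx with h | h <;> subst h <;> assumption
    rw [hSeq, if_neg (show (0:ℤ) ∉ ({-1,1}:Finset ℤ) by decide)]
    rw [show ({-1, 1} : Finset ℤ) = insert (-1 : ℤ) {1} from rfl]
    rw [Finset.sum_insert (by decide), Finset.sum_singleton]
    have e1 : t - (-1) = t + 1 := by ring
    rw [e1]
    ring

end CCS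

namespace CCS
open Matrix Finset

variable {ℓ r : ℤ}

-- sum over the subtype equals sum over the interval
lemma sub_sum (F : ℤ → P) :
    (∑ k : idx ℓ r, F (k : ℤ)) = ∑ k ∈ Finset.Icc ℓ r, F k :=
  Finset.sum_coe_sort _ _

lemma M_mulVec (S : Finset ℤ) (hl : ℓ ≤ 0) (hr : 0 ≤ r) :
    (Matrix.of (fun i j : idx ℓ r => Mf S ℓ r (i : ℤ) (j : ℤ))).mulVec
        (fun k : idx ℓ r => Yvar ℓ r (k : ℤ))
      = fun i : idx ℓ r =>
          (if (i : ℤ) = 0 then 1 else 0) * (∑ s ∈ S, Yvar ℓ r ((i : ℤ) - s)) := by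
  funext i
  have hi := i.2
  simp only [Finset.mem_Icc] at hi
  show (∑ k : idx ℓ r, Mf S ℓ r (i : ℤ) (k : ℤ) * Yvar ℓ r (k : ℤ)) = _
  rw [sub_sum (fun k => Mf S ℓ r (i : ℤ) k * Yvar ℓ r k)]
  have hterm : ∀ k ∈ Finset.Icc ℓ r, Mf S ℓ r (i : ℤ) k * Yvar ℓ r k
      = (if k = (i : ℤ) then (∑ s ∈ S, Yvar ℓ r ((i : ℤ) - s)) * Yvar ℓ r k else 0)
        - (Yvar ℓ r (i : ℤ) - if (i : ℤ) = 0 then 1 else 0)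
          * ((if (i : ℤ) - k ∈ S then 1 else 0) * Yvar ℓ r k) := by
    intro k _
    unfold Mf
    by_cases h : (i : ℤ) = k
    · rw [if_pos h, if_pos h.symm]
      ring
    · rw [if_neg h, if_neg (show ¬ k = (i:ℤ) from fun hh => h hh.symm)]
      ring
  rw [Finset.sum_congr rfl hterm, Finset.sum_sub_distrib,
    Finset.sum_ite_eq' (Finset.Icc ℓ r) (i : ℤ)
      (fun k => (∑ s ∈ S, Yvar ℓ r ((i : ℤ) - s)) * Yvar ℓ r k),
    if_pos (by simp only [Finset.mem_Icc]; omega), ← Finset.mul_sum,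
    ← sumS S ℓ r (i : ℤ)]
  ring

end CCS

namespace CCS
open Matrix Finset

lemma caseA (S : Finset ℤ) (h1S : 1 ∈ S) (hSle : ∀ s ∈ S, s ≤ 1) (r : ℤ) (hr : 0 < r) :
    (Matrix.of (fun i j : idx 0 r => Mf S 0 r (i : ℤ) (j : ℤ))).det
      = (∑ s ∈ S, Yvar 0 r (-s)) * ∏ i ∈ Finset.Icc ((0 : ℤ) + 1) (r - 1), Yvar 0 r i := by
  have hle : (0 : ℤ) ≤ r := le_of_lt hr
  set c : P := ∑ s ∈ S, Yvar 0 r (0 - s) with hc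
  have hU := lemU (ℓ := 0) (r := r) hle
    (Matrix.of (fun i j : idx 0 r => Mf S 0 r (i : ℤ) (j : ℤ))) c
    (by
      intro i j hij hjr
      show Mf S 0 r (i : ℤ) (j : ℤ) = 0
      unfold Mf
      rw [if_neg (show ¬ (i:ℤ) = (j:ℤ) by omega),
        if_neg (show (i:ℤ) - (j:ℤ) ∉ S from fun hmem => by have := hSle _ hmem; omega)]
      ring)
    (by
      intro i j hi0 hj
      show Mf S 0 r (i : ℤ) (j : ℤ) = - Yvar 0 r (i : ℤ)
      unfold Mf
      rw [if_neg (show ¬ (i:ℤ) = (j:ℤ) by omega),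
        show (i : ℤ) - (j : ℤ) = 1 by omega, if_pos h1S,
        if_neg (show ¬ (i:ℤ) = 0 by omega)]
      ring)
    (by
      rw [M_mulVec S (le_refl 0) hle]
      funext i
      by_cases h : (i : ℤ) = 0
      · rw [if_pos h, h, hc]
        ring
      · rw [if_neg h]
        ring)
  -- split the product
  have hsplit : Finset.Icc ((0:ℤ) + 1) r = insert r (Finset.Icc ((0:ℤ) + 1) (r - 1)) := by
    ext x
    simp only [Finset.mem_Icc, Finset.mem_insert]
    omega
  have hprodsplit : ∏ i ∈ Finset.Icc ((0:ℤ) + 1) r, Yvar 0 r i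
      = Yvar 0 r r * ∏ i ∈ Finset.Icc ((0:ℤ) + 1) (r - 1), Yvar 0 r i := by
    rw [hsplit, Finset.prod_insert (by simp only [Finset.mem_Icc]; omega)]
  have hcc : c = ∑ s ∈ S, Yvar 0 r (-s) := by
    rw [hc]
    exact Finset.sum_congr rfl (fun s _ => by rw [zero_sub])
  apply mul_left_cancel₀ (Yvar_ne hle (le_refl r))
  rw [hU, hprodsplit, hcc]
  ring

end CCS

namespace CCS
open Matrix Finset

set_option maxHeartbeats 2000000 in
lemma keyK {ℓ r : ℤ} (S : Finset ℤ) (h1S : 1 ∈ S) (hm1 : (-1:ℤ) ∈ S)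
    (hS3 : ∀ s ∈ S, s = -1 ∨ s = 0 ∨ s = 1) (i j : ℤ) :
    Kf S ℓ r i j - Kf S ℓ r (i+1) j = Mf S ℓ r i j := by
  unfold Kf Wf zf vf Mf
  rw [sumS3 S h1S hm1 hS3 ℓ r i]
  by_cases c1 : j = i
  · rw [c1, show i - i = 0 by ring, show i + 1 - 1 = i by ring]
    by_cases hi0 : i = 0
    · rw [hi0]
      norm_num
      first
      | ring1
      | (split_ifs <;> first | ring1 | omega | (exfalso; omega) | tauto)
    · split_ifs <;> first | ring1 | omega | (exfalso; omega) | tauto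
  · by_cases c2 : j = i - 1
    · rw [c2, show i - (i-1) = 1 by ring, show i + 1 - 1 = i by ring,
        show -(i-1) = 1 - i by ring]
      by_cases hi0 : i = 0
      · rw [hi0]
        norm_num [h1S]
        first
        | ring1
        | (split_ifs <;> first | ring1 | omega | (exfalso; omega) | tauto)
      · split_ifs <;> first | ring1 | omega | (exfalso; omega) | tauto
    · by_cases c3 : j = i + 1
      · rw [c3, show i - (i+1) = -1 by ring, show i + 1 - 1 = i by ring,
          show -(i+1) = -1 - i by ring]
        by_cases hi0 : i = 0
        · rw [hi0]
          norm_num [hm1]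
          try first
          | ring1
          | (split_ifs <;> first | ring1 | omega | (exfalso; omega) | tauto)
        · split_ifs <;> first | ring1 | omega | (exfalso; omega) | tauto
      · have hnm : i - j ∉ S := fun hm => by rcases hS3 _ hm with h|h|h <;> omega
        rw [if_neg hnm, if_neg (show ¬ i = j by omega), show i + 1 - 1 = i by ring]
        by_cases hi0 : i = 0
        · rw [hi0] at hnm ⊢
          rw [show -j = 0 - j by ring, if_neg hnm]
          split_ifs <;> first | ring1 | omega | (exfalso; omega) | tauto
        · split_ifs <;> first | ring1 | omega | (exfalso; omega) | tauto

end CCS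

namespace CCS
open Matrix Finset

variable {ℓ r : ℤ}

lemma Kf_top (S : Finset ℤ) (hr : 0 ≤ r) (j : ℤ) (hj1 : ℓ ≤ j) (hj2 : j ≤ r) :
    Kf S ℓ r (r + 1) j = 0 := by
  unfold Kf Wf zf
  rw [if_neg (show ¬ j = r + 1 by omega), Yvar_out (Or.inr (by omega : r < r + 1)),
    if_neg (show ¬ r + 1 ≤ 0 by omega)]
  split_ifs <;> ring

lemma sum_delta (a : ℤ) (F : ℤ → P) :
    (∑ k : idx ℓ r, (if (k : ℤ) = a then 1 else 0) * F (k : ℤ))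
      = if a ∈ Finset.Icc ℓ r then F a else 0 := by
  rw [sub_sum (fun k => (if k = a then 1 else 0) * F k)]
  have h : ∀ k ∈ Finset.Icc ℓ r, (if k = a then (1:P) else 0) * F k
      = if k = a then F k else 0 := by
    intro k _; split_ifs <;> ring
  rw [Finset.sum_congr rfl h, Finset.sum_ite_eq' (Finset.Icc ℓ r) a F]

lemma facIUK (S : Finset ℤ) (h1S : 1 ∈ S) (hm1 : (-1:ℤ) ∈ S)
    (hS3 : ∀ s ∈ S, s = -1 ∨ s = 0 ∨ s = 1) (hr : 0 ≤ r) :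
    (Matrix.of fun i j : idx ℓ r => Mf S ℓ r (i:ℤ) (j:ℤ))
      = (Matrix.of fun i k : idx ℓ r => IUf (i:ℤ) (k:ℤ))
        * (Matrix.of fun k j : idx ℓ r => Kf S ℓ r (k:ℤ) (j:ℤ)) := by
  apply Matrix.ext
  intro i j
  have hi := i.2
  have hj := j.2
  simp only [Finset.mem_Icc] at hi hj
  rw [Matrix.mul_apply]
  show Mf S ℓ r (i:ℤ) (j:ℤ) = ∑ k : idx ℓ r, IUf (i:ℤ) (k:ℤ) * Kf S ℓ r (k:ℤ) (j:ℤ)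
  have hterm : ∀ k : idx ℓ r, IUf (i:ℤ) (k:ℤ) * Kf S ℓ r (k:ℤ) (j:ℤ)
      = (if (k:ℤ) = (i:ℤ) then 1 else 0) * Kf S ℓ r (k:ℤ) (j:ℤ)
        - (if (k:ℤ) = (i:ℤ)+1 then 1 else 0) * Kf S ℓ r (k:ℤ) (j:ℤ) := by
    intro k; unfold IUf; ring
  rw [Finset.sum_congr rfl (fun k _ => hterm k), Finset.sum_sub_distrib,
    sum_delta (i:ℤ) (fun k => Kf S ℓ r k (j:ℤ)),
    sum_delta ((i:ℤ)+1) (fun k => Kf S ℓ r k (j:ℤ)),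
    if_pos (show (i:ℤ) ∈ Finset.Icc ℓ r by simp only [Finset.mem_Icc]; omega)]
  by_cases htop : (i:ℤ) + 1 ∈ Finset.Icc ℓ r
  · rw [if_pos htop]
    exact (keyK S h1S hm1 hS3 (i:ℤ) (j:ℤ)).symm
  · rw [if_neg htop]
    have hie : (i:ℤ) = r := by simp only [Finset.mem_Icc] at htop; omega
    have h0 : Kf S ℓ r ((i:ℤ)+1) (j:ℤ) = 0 := by
      rw [show (i:ℤ) + 1 = r + 1 by omega]
      exact Kf_top S hr (j:ℤ) hj.1 hj.2
    rw [← keyK S h1S hm1 hS3 (i:ℤ) (j:ℤ), h0]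

lemma detIU : (Matrix.of fun i k : idx ℓ r => IUf (i:ℤ) (k:ℤ)).det = 1 := by
  have htri : (Matrix.of fun i k : idx ℓ r => IUf (i:ℤ) (k:ℤ)).BlockTriangular id := by
    intro i j hji
    have hc : (j:ℤ) < (i:ℤ) := hji
    show IUf (i:ℤ) (j:ℤ) = 0
    unfold IUf
    rw [if_neg (by omega), if_neg (by omega)]
    ring
  rw [Matrix.det_of_upperTriangular htri]
  apply Finset.prod_eq_one
  intro i _
  show IUf (i:ℤ) (i:ℤ) = 1
  unfold IUf
  rw [if_pos rfl, if_neg (by omega)]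
  ring

lemma detL : (Matrix.of fun i k : idx ℓ r => Lf ℓ (i:ℤ) (k:ℤ)).det = 1 := by
  have htri : (Matrix.of fun i k : idx ℓ r => Lf ℓ (i:ℤ) (k:ℤ)).BlockTriangular
      OrderDual.toDual := by
    intro i j hji
    have hc : (i:ℤ) < (j:ℤ) := hji
    have hjℓ : ℓ ≤ (i:ℤ) := by
      have := i.2; simp only [Finset.mem_Icc] at this; omega
    show Lf ℓ (i:ℤ) (j:ℤ) = 0
    unfold Lf
    rw [if_neg (by omega), if_neg (by omega)]
    ring
  rw [Matrix.det_of_lowerTriangular _ htri]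
  apply Finset.prod_eq_one
  intro i _
  show Lf ℓ (i:ℤ) (i:ℤ) = 1
  unfold Lf
  rw [if_pos rfl, if_neg (by omega)]
  ring

lemma facLK (S : Finset ℤ) (hl : ℓ < 0) (hr : 0 ≤ r) :
    (Matrix.of fun i j : idx ℓ r => Kf S ℓ r (i:ℤ) (j:ℤ))
      = (Matrix.of fun i k : idx ℓ r => Lf ℓ (i:ℤ) (k:ℤ))
        * (Matrix.of fun k j : idx ℓ r =>
            (if (k:ℤ) = ℓ then vf S (j:ℤ) else Wf ℓ r (k:ℤ) (j:ℤ))) := by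
  apply Matrix.ext
  intro i j
  have hi := i.2
  have hj := j.2
  simp only [Finset.mem_Icc] at hi hj
  rw [Matrix.mul_apply]
  show Kf S ℓ r (i:ℤ) (j:ℤ) = ∑ k : idx ℓ r, Lf ℓ (i:ℤ) (k:ℤ)
    * (if (k:ℤ) = ℓ then vf S (j:ℤ) else  Wf ℓ r (k:ℤ) (j:ℤ))
  have hterm : ∀ k : idx ℓ r, Lf ℓ (i:ℤ) (k:ℤ)
      * (if (k:ℤ) = ℓ then vf S (j:ℤ) else Wf ℓ r (k:ℤ) (j:ℤ))
      = (if (k:ℤ) = (i:ℤ) then 1 else 0)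
          * (if (k:ℤ) = ℓ then vf S (j:ℤ) else Wf ℓ r (k:ℤ) (j:ℤ))
        + (if ℓ < (i:ℤ) ∧ (i:ℤ) ≤ 0 then 1 else 0)
          * ((if (k:ℤ) = ℓ then 1 else 0)
            * (if (k:ℤ) = ℓ then vf S (j:ℤ) else Wf ℓ r (k:ℤ) (j:ℤ))) := by
    intro k
    unfold Lf
    split_ifs <;> first | ring1 | omega | (exfalso; omega) | tauto
  rw [Finset.sum_congr rfl (fun k _ => hterm k), Finset.sum_add_distrib,
    sum_delta (i:ℤ) (fun k => (if k = ℓ then vf S (j:ℤ) else Wf ℓ r k (j:ℤ))),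
    ← Finset.mul_sum,
    sum_delta ℓ (fun k => (if k = ℓ then vf S (j:ℤ) else Wf ℓ r k (j:ℤ))),
    if_pos (show (i:ℤ) ∈ Finset.Icc ℓ r by simp only [Finset.mem_Icc]; omega),
    if_pos (show ℓ ∈ Finset.Icc ℓ r by simp only [Finset.mem_Icc]; omega),
    if_pos rfl]
  by_cases hiℓ : (i:ℤ) = ℓ
  · rw [if_pos hiℓ, if_neg (by omega)]
    unfold Kf Wf zf
    rw [hiℓ, Yvar_out (Or.inl (by omega : ℓ - 1 < ℓ)),
      if_neg (show ¬ (j:ℤ) = ℓ - 1 by omega), if_pos (by omega : ℓ ≤ 0)]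
    split_ifs <;> ring
  · rw [if_neg hiℓ]
    unfold Kf zf
    by_cases hc : ℓ < (i:ℤ) ∧ (i:ℤ) ≤ 0
    · rw [if_pos hc, if_pos hc.2]
      try ring
    · rw [if_neg hc, if_neg (by omega)]
      try ring

end CCS

namespace CCS
open Matrix Finset

variable {ℓ r : ℤ}

lemma caseB (S : Finset ℤ) (h1S : 1 ∈ S) (hm1 : (-1:ℤ) ∈ S)
    (hS3 : ∀ s ∈ S, s = -1 ∨ s = 0 ∨ s = 1) (hl : ℓ < 0) (hr : 0 ≤ r) :
    (Matrix.of (fun i j : idx ℓ r => Mf S ℓ r (i : ℤ) (j : ℤ))).det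
      = (∑ s ∈ S, Yvar ℓ r (-s)) * ∏ i ∈ Finset.Icc (ℓ + 1) (r - 1), Yvar ℓ r i := by
  classical
  have hle : ℓ ≤ r := by omega
  set W : Matrix (idx ℓ r) (idx ℓ r) P :=
    Matrix.of (fun i j : idx ℓ r => Wf ℓ r (i:ℤ) (j:ℤ)) with hW
  set K0 : Matrix (idx ℓ r) (idx ℓ r) P :=
    Matrix.of (fun k j : idx ℓ r =>
      (if (k:ℤ) = ℓ then vf S (j:ℤ) else Wf ℓ r (k:ℤ) (j:ℤ))) with hK0
  -- step 1: det M = det K0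
  have hdet1 : (Matrix.of (fun i j : idx ℓ r => Mf S ℓ r (i:ℤ) (j:ℤ))).det = K0.det := by
    rw [facIUK S h1S hm1 hS3 hr, Matrix.det_mul, detIU, one_mul,
      facLK S hl hr, Matrix.det_mul, detL, one_mul]
  -- K0 as an updated row of W
  have hK0row : K0 = W.updateRow (jB hle) (fun j : idx ℓ r => vf S (j:ℤ)) := by
    apply Matrix.ext
    intro i j
    rw [Matrix.updateRow_apply]
    by_cases hiB : i = jB hle
    · rw [if_pos hiB]
      show (if (i:ℤ) = ℓ then vf S (j:ℤ) else Wf ℓ r (i:ℤ) (j:ℤ)) = vf S (j:ℤ)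
      rw [if_pos (by rw [hiB]; rfl)]
    · rw [if_neg hiB]
      show (if (i:ℤ) = ℓ then vf S (j:ℤ) else Wf ℓ r (i:ℤ) (j:ℤ)) = Wf ℓ r (i:ℤ) (j:ℤ)
      rw [if_neg (show ¬ (i:ℤ) = ℓ from fun h => hiB (Subtype.ext h))]
  -- per-column determinants
  have hAj : ∀ j0 : idx ℓ r,
      Yvar ℓ r r * (W.updateRow (jB hle) (Pi.single j0 1)).det
        = Yvar ℓ r (j0:ℤ) * ∏ i ∈ Finset.Icc (ℓ + 1) r, Yvar ℓ r i := by
    intro j0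
    apply lemU hle
    · intro i j hij hjr
      by_cases hiB : i = jB hle
      · exfalso
        have hieq : (i:ℤ) = ℓ := by rw [hiB]; rfl
        have hj2 := j.2
        simp only [Finset.mem_Icc] at hj2
        omega
      · rw [Matrix.updateRow_ne hiB]
        show Wf ℓ r (i:ℤ) (j:ℤ) = 0
        unfold Wf
        rw [if_neg (by omega), if_neg (by omega)]
        ring
    · intro i j hli hij
      have hiB : i ≠ jB hle := by
        intro h
        rw [h] at hli
        exact absurd hli (by simp [jB])
      rw [Matrix.updateRow_ne hiB]
      show Wf ℓ r (i:ℤ) (j:ℤ) = - Yvar ℓ r (i:ℤ)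
      unfold Wf
      rw [if_neg (by omega), if_pos (by omega)]
      ring
    · funext i
      show (∑ k : idx ℓ r, (W.updateRow (jB hle) (Pi.single j0 1)) i k * Yvar ℓ r (k:ℤ)) = _
      by_cases hiB : i = jB hle
      · have hrow : ∀ k : idx ℓ r, (W.updateRow (jB hle) (Pi.single j0 1)) i k
            = if k = j0 then 1 else 0 := by
          intro k
          rw [hiB, Matrix.updateRow_self]
          exact Pi.single_apply j0 1 k
        have hterm : ∀ k : idx ℓ r, (W.updateRow (jB hle) (Pi.single j0 1)) i k * Yvar ℓ r (k:ℤ)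
            = if k = j0 then Yvar ℓ r (k:ℤ) else 0 := by
          intro k
          rw [hrow k]
          split_ifs <;> ring
        rw [Finset.sum_congr rfl (fun k _ => hterm k),
          Finset.sum_ite_eq' Finset.univ j0 (fun k : idx ℓ r => Yvar ℓ r (k:ℤ))]
        have : (i:ℤ) = ℓ := by rw [hiB]; rfl
        rw [if_pos (Finset.mem_univ j0), if_pos this, mul_one]
      · have hiℓ : (i:ℤ) ≠ ℓ := fun h => hiB (Subtype.ext h)
        have hi2 := i.2
        simp only [Finset.mem_Icc] at hi2
        have hterm : ∀ k : idx ℓ r, (W.updateRow (jB hle) (Pi.single j0 1)) i k * Yvar ℓ r (k:ℤ)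
            = (if (k:ℤ) = (i:ℤ) then 1 else 0) * (Yvar ℓ r ((i:ℤ)-1) * Yvar ℓ r (k:ℤ))
              - (if (k:ℤ) = (i:ℤ)-1 then 1 else 0) * (Yvar ℓ r (i:ℤ) * Yvar ℓ r (k:ℤ)) := by
          intro k
          rw [Matrix.updateRow_ne hiB]
          show Wf ℓ r (i:ℤ) (k:ℤ) * Yvar ℓ r (k:ℤ) = _
          unfold Wf
          split_ifs <;> ring
        rw [Finset.sum_congr rfl (fun k _ => hterm k), Finset.sum_sub_distrib,
          sum_delta (i:ℤ) (fun k => Yvar ℓ r ((i:ℤ)-1) * Yvar ℓ r k),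
          sum_delta ((i:ℤ)-1) (fun k => Yvar ℓ r (i:ℤ) * Yvar ℓ r k),
          if_pos (show (i:ℤ) ∈ Finset.Icc ℓ r by simp only [Finset.mem_Icc]; omega),
          if_pos (show (i:ℤ)-1 ∈ Finset.Icc ℓ r by simp only [Finset.mem_Icc]; omega),
          if_neg hiℓ, mul_zero]
        ring
  -- decomposition of the v-row
  have hvdecomp : (fun j : idx ℓ r => vf S (j:ℤ))
      = ∑ j0 : idx ℓ r, vf S (j0:ℤ) • (Pi.single j0 (1:P) : idx ℓ r → P) := by
    funext x
    rw [Finset.sum_apply]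
    have hterm : ∀ j0 : idx ℓ r, (vf S (j0:ℤ) • (Pi.single j0 (1:P) : idx ℓ r → P)) x
        = if j0 = x then vf S (j0:ℤ) else 0 := by
      intro j0
      simp only [Pi.smul_apply, smul_eq_mul, Pi.single_apply]
      by_cases h : x = j0
      · rw [if_pos h, if_pos h.symm, mul_one]
      · rw [if_neg h, if_neg (fun hh => h hh.symm), mul_zero]
    rw [Finset.sum_congr rfl (fun j0 _ => hterm j0),
      Finset.sum_ite_eq' Finset.univ x (fun j0 : idx ℓ r => vf S (j0:ℤ)),
      if_pos (Finset.mem_univ x)]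
  -- expansion of det K0
  have hdetK0 : K0.det = ∑ j0 : idx ℓ r,
      vf S (j0:ℤ) * (W.updateRow (jB hle) (Pi.single j0 1)).det := by
    rw [hK0row, ← Matrix.det_transpose,
      ← Matrix.updateCol_transpose, ← Matrix.cramer_apply, hvdecomp, map_sum,
      Finset.sum_apply]
    apply Finset.sum_congr rfl
    intro j0 _
    rw [_root_.map_smul]
    simp only [Pi.smul_apply, smul_eq_mul]
    rw [Matrix.cramer_apply, Matrix.updateCol_transpose, Matrix.det_transpose]
  -- put everything together
  apply mul_left_cancel₀ (Yvar_ne hle (le_refl r) : Yvar ℓ r r ≠ 0)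
  rw [hdet1, hdetK0, Finset.mul_sum]
  have hstep : ∀ j0 : idx ℓ r,
      Yvar ℓ r r * (vf S (j0:ℤ) * (W.updateRow (jB hle) (Pi.single j0 1)).det)
        = (vf S (j0:ℤ) * Yvar ℓ r (j0:ℤ)) * ∏ i ∈ Finset.Icc (ℓ + 1) r, Yvar ℓ r i := by
    intro j0
    rw [mul_left_comm, hAj j0]
    ring
  rw [Finset.sum_congr rfl (fun j0 _ => hstep j0), ← Finset.sum_mul]
  -- identify the sum
  have hsum : (∑ j0 : idx ℓ r, vf S (j0:ℤ) * Yvar ℓ r (j0:ℤ))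
      = ∑ s ∈ S, Yvar ℓ r (-s) := by
    rw [sub_sum (fun j => vf S j * Yvar ℓ r j)]
    have h1 : ∀ j ∈ Finset.Icc ℓ r, vf S j * Yvar ℓ r j
        = (if (0:ℤ) - j ∈ S then 1 else 0) * Yvar ℓ r j := by
      intro j _
      unfold vf
      rw [show (0:ℤ) - j = -j by ring]
    rw [Finset.sum_congr rfl h1, ← sumS S ℓ r 0]
    apply Finset.sum_congr rfl
    intro s _
    rw [zero_sub]
  rw [hsum]
  -- split off the top of the product
  have hsplit : Finset.Icc (ℓ + 1) r = insert r (Finset.Icc (ℓ + 1) (r - 1)) := by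
    ext x
    simp only [Finset.mem_Icc, Finset.mem_insert]
    omega
  rw [hsplit, Finset.prod_insert (by simp only [Finset.mem_Icc]; omega)]
  ring

end CCS

/-- The sum `P = Σ_C (-1)^{|C|} ∏_i ((Σ_{s∈S} y_{i-s})^{[i∉C]}
(y_i - [i=0])^{[i∈C]})` over configurations `C` of vertex-disjoint elementary cycles
of the digraph on `{ℓ, …, r}` with an arc `i → j` iff `i - j ∈ S` is, by the standard
expansion of a determinant into cycle configurations, the determinant of the matrix
`D - A` with diagonal `D i = Σ_{s∈S} y_{i-s}` and arc weights
`A i j = (y_i - [i=0]) · [i - j ∈ S]`.  If `|ℓ| + r > 0` and (`min S = -1` or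
`ℓ = 0`), then `P = (Σ_{s∈S} y_{-s}) ∏_{i=ℓ+1}^{r-1} y_i`. -/
theorem cycle_configuration_sum
    (S : Finset ℤ) (h1S : 1 ∈ S) (hSle : ∀ s ∈ S, s ≤ 1)
    (ℓ r : ℤ) (hl : ℓ ≤ 0) (hr : 0 ≤ r) (hlr : ℓ < 0 ∨ 0 < r)
    (hmin : ((-1 : ℤ) ∈ S ∧ ∀ s ∈ S, -1 ≤ s) ∨ ℓ = 0) :
    Matrix.det (Matrix.of (fun i j : {x : ℤ // x ∈ Finset.Icc ℓ r} =>
      (if (i : ℤ) = (j : ℤ) then ∑ s ∈ S, Yvar ℓ r ((i : ℤ) - s) else 0) -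
      (Yvar ℓ r (i : ℤ) - if (i : ℤ) = 0 then 1 else 0) *
        (if (i : ℤ) - (j : ℤ) ∈ S then 1 else 0))) =
    (∑ s ∈ S, Yvar ℓ r (-s)) * ∏ i ∈ Finset.Icc (ℓ + 1) (r - 1), Yvar ℓ r i := by
  show (Matrix.of (fun i j : CCS.idx ℓ r => CCS.Mf S ℓ r (i:ℤ) (j:ℤ))).det = _
  rcases eq_or_lt_of_le hl with h0 | hneg
  · subst h0
    have hr' : 0 < r := by
      rcases hlr with h | h
      · omega
      · exact h
    exact CCS.caseA S h1S hSle r hr'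
  · rcases hmin with ⟨hm1, hge⟩ | h0
    · exact CCS.caseB S h1S hm1
        (fun s hs => by have h1 := hSle s hs; have h2 := hge s hs; omega) hneg hr
    · omega
end

section
/- Let S ⊆ Z with max S = 1, ℓ ≤ 0 ≤ r, and let n(i,s) be nonnegative integers for ℓ ≤ i ≤ r, s ∈ S; set n_i = [i=0] + Σ_{s∈S} n(i,s). Let G be the digraph on {ℓ,...,r} with an arc (i, i-s) for each s ∈ S with ℓ ≤ i-s ≤ r. If min S = -1 or ℓ = 0, then Σ_C (-1)^{|C|} ∏_{i ∉ C} n_i · ∏_{(i,i-s) ∈ C} n(i,s) = ∏_{i=ℓ}^{-1} n(i,-1) · ∏_{i=1}^r n(i,1), where C ranges over configurations of vertex-disjoint elementary cycles of G. -/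
open Matrix Finset

lemma det_single_row {n : ℕ} (A : Matrix (Fin (n+1)) (Fin (n+1)) ℤ) (i₀ : Fin (n+1))
    (hrow : ∀ j, j ≠ i₀ → A i₀ j = 0) :
    A.det = A i₀ i₀ * (A.submatrix i₀.succAbove i₀.succAbove).det := by
  rw [Matrix.det_succ_row A i₀]
  rw [Finset.sum_eq_single i₀]
  · have : ((-1 : ℤ)) ^ ((i₀ : ℕ) + (i₀ : ℕ)) = 1 := by
      rw [← Nat.two_mul, pow_mul]; norm_num
    rw [this, one_mul]
  · intro j _ hj
    rw [hrow j hj]; ring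
  · intro h; simp at h

lemma stepLast {m : ℕ} (A : Matrix (Fin (m+2)) (Fin (m+2)) ℤ) (v : ℤ)
    (hrow : ∀ j, A (Fin.last (m+1)) j =
      if j = Fin.last (m+1) then v else if (j : ℕ) = m then -v else 0) :
    A.det = v * Matrix.det (Matrix.of fun i j : Fin (m+1) =>
      A i.castSucc j.castSucc + if (j : ℕ) = m then A i.castSucc (Fin.last (m+1)) else 0) := by
  have hne : Fin.last (m+1) ≠ (⟨m, by omega⟩ : Fin (m+2)) := by
    simp [Fin.ext_iff, Fin.last]
  set T := Matrix.transvection (Fin.last (m+1)) (⟨m, by omega⟩ : Fin (m+2)) (1 : ℤ) with hT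
  have hdet : A.det = (A * T).det := by
    rw [Matrix.det_mul, Matrix.det_transvection_of_ne _ _ hne, mul_one]
  have hcol : ∀ a b, (A * T) a b =
      A a b + (if b = (⟨m, by omega⟩ : Fin (m+2)) then A a (Fin.last (m+1)) else 0) := by
    intro a b
    by_cases hb : b = (⟨m, by omega⟩ : Fin (m+2))
    · subst hb
      rw [hT, Matrix.mul_transvection_apply_same]
      simp [mul_comm]
    · rw [hT, Matrix.mul_transvection_apply_of_ne _ _ _ _ hb]
      simp [hb]
  have hlast_ne : ∀ j : Fin (m+2), j ≠ Fin.last (m+1) → (A * T) (Fin.last (m+1)) j = 0 := by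
    intro j hj
    rw [hcol, hrow]
    by_cases h2 : (j : ℕ) = m
    · have hje : j = (⟨m, by omega⟩ : Fin (m+2)) := Fin.ext h2
      rw [if_neg hj, if_pos h2, if_pos hje, hrow]
      rw [if_pos rfl]; ring
    · have hje : j ≠ (⟨m, by omega⟩ : Fin (m+2)) := fun h => h2 (by rw [h])
      rw [if_neg hj, if_neg h2, if_neg hje]; ring
  rw [hdet, det_single_row (A * T) (Fin.last (m+1)) hlast_ne]
  congr 1
  · rw [hcol, hrow]
    have : Fin.last (m+1) ≠ (⟨m, by omega⟩ : Fin (m+2)) := hne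
    rw [if_pos rfl, if_neg this, add_zero]
  · rw [Fin.succAbove_last]
    have hmat : (A * T).submatrix Fin.castSucc Fin.castSucc = Matrix.of fun i j : Fin (m+1) =>
        A i.castSucc j.castSucc + if (j : ℕ) = m then A i.castSucc (Fin.last (m+1)) else 0 := by
      ext i j
      rw [Matrix.submatrix_apply, hcol, Matrix.of_apply]
      congr 1
      have hiff : (j.castSucc = (⟨m, by omega⟩ : Fin (m+2))) ↔ ((j : ℕ) = m) := by
        simp [Fin.ext_iff]
      by_cases h : (j : ℕ) = m
      · rw [if_pos (hiff.mpr h), if_pos h]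
      · rw [if_neg (fun hh => h (hiff.mp hh)), if_neg h]
    rw [hmat]

lemma stepZero {m : ℕ} (A : Matrix (Fin (m+2)) (Fin (m+2)) ℤ) (v : ℤ)
    (hrow : ∀ j, A 0 j = if j = 0 then v else if (j : ℕ) = 1 then -v else 0) :
    A.det = v * Matrix.det (Matrix.of fun i j : Fin (m+1) =>
      A i.succ j.succ + if (j : ℕ) = 0 then A i.succ 0 else 0) := by
  have hne : (0 : Fin (m+2)) ≠ (⟨1, by omega⟩ : Fin (m+2)) := by
    simp [Fin.ext_iff]
  set T := Matrix.transvection (0 : Fin (m+2)) (⟨1, by omega⟩ : Fin (m+2)) (1 : ℤ) with hT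
  have hdet : A.det = (A * T).det := by
    rw [Matrix.det_mul, Matrix.det_transvection_of_ne _ _ hne, mul_one]
  have hcol : ∀ a b, (A * T) a b =
      A a b + (if b = (⟨1, by omega⟩ : Fin (m+2)) then A a 0 else 0) := by
    intro a b
    by_cases hb : b = (⟨1, by omega⟩ : Fin (m+2))
    · subst hb
      rw [hT, Matrix.mul_transvection_apply_same]
      simp [mul_comm]
    · rw [hT, Matrix.mul_transvection_apply_of_ne _ _ _ _ hb, if_neg hb, add_zero]
  have hzero_ne : ∀ j : Fin (m+2), j ≠ 0 → (A * T) 0 j = 0 := by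
    intro j hj
    rw [hcol, hrow]
    by_cases h2 : (j : ℕ) = 1
    · have hje : j = (⟨1, by omega⟩ : Fin (m+2)) := Fin.ext h2
      rw [if_neg hj, if_pos h2, if_pos hje, hrow, if_pos rfl]; ring
    · have hje : j ≠ (⟨1, by omega⟩ : Fin (m+2)) := fun h => h2 (by rw [h])
      rw [if_neg hj, if_neg h2, if_neg hje]; ring
  rw [hdet, det_single_row (A * T) 0 hzero_ne]
  congr 1
  · rw [hcol, hrow, if_pos rfl, if_neg hne, add_zero]
  · rw [Fin.succAbove_zero]
    have hmat : (A * T).submatrix Fin.succ Fin.succ = Matrix.of fun i j : Fin (m+1) =>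
        A i.succ j.succ + if (j : ℕ) = 0 then A i.succ 0 else 0 := by
      ext i j
      rw [Matrix.submatrix_apply, hcol, Matrix.of_apply]
      congr 1
      have hiff : (j.succ = (⟨1, by omega⟩ : Fin (m+2))) ↔ ((j : ℕ) = 0) := by
        simp only [Fin.ext_iff, Fin.val_succ, Fin.val_mk, Fin.val_zero]; omega
      by_cases h : (j : ℕ) = 0
      · rw [if_pos (hiff.mpr h), if_pos h]
      · rw [if_neg (fun hh => h (hiff.mp hh)), if_neg h]
    rw [hmat]

lemma tri_det : ∀ N : ℕ, ∀ (A : Matrix (Fin N) (Fin N) ℤ) (p : ℕ) (b c : ℕ → ℤ),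
    p < N →
    (∀ i j : Fin N, (j : ℕ) + 1 < (i : ℕ) → A i j = 0) →
    (∀ i j : Fin N, (i : ℕ) + 1 < (j : ℕ) → (i : ℕ) < p → A i j = 0) →
    (∀ i : Fin N, (∑ j, A i j) = if (i : ℕ) = p then 1 else 0) →
    (∀ i j : Fin N, (j : ℕ) + 1 = (i : ℕ) → A i j = -b (i : ℕ)) →
    (∀ i j : Fin N, (i : ℕ) + 1 = (j : ℕ) → (i : ℕ) < p → A i j = -c (i : ℕ)) →
    A.det = (∏ k ∈ Finset.Ico (p+1) N, b k) * ∏ k ∈ Finset.range p, c k := by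
  intro N
  induction N using Nat.strong_induction_on with
  | _ N IH =>
  match N with
  | 0 => intro A p b c hp; omega
  | 1 =>
    intro A p b c hp h0 h1 hsum hb hc
    interval_cases p
    have := hsum 0
    simp at this
    rw [Matrix.det_fin_one, this]
    simp
  | (m+2) =>
    intro A p b c hp h0 h1 hsum hb hc
    by_cases hpl : p = m + 1
    · -- left step
      subst hpl
      have h0p : (0 : ℕ) < m + 1 := by omega
      have hone : ((⟨1, by omega⟩ : Fin (m+2)) : ℕ) = 1 := rfl
      have hA01 : A 0 ⟨1, by omega⟩ = -c 0 := hc 0 ⟨1, by omega⟩ rfl h0p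
      have hsupp : ∀ j : Fin (m+2), j ≠ 0 → (j : ℕ) ≠ 1 → A 0 j = 0 := by
        intro j hj0 hj1
        apply h1 0 j _ h0p
        have h00 : ((0 : Fin (m+2)) : ℕ) = 0 := rfl
        have : (j : ℕ) ≠ 0 := fun h => hj0 (Fin.ext (by rw [h, h00]))
        omega
      have hA00 : A 0 0 = c 0 := by
        have hs := hsum 0
        rw [if_neg (by simp : ¬((0 : Fin (m+2)) : ℕ) = m + 1)] at hs
        have hpair : ∑ j : Fin (m+2), A 0 j = A 0 0 + A 0 ⟨1, by omega⟩ := by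
          rw [← Finset.sum_subset (Finset.subset_univ {(0 : Fin (m+2)), ⟨1, by omega⟩})]
          · rw [Finset.sum_pair (by simp [Fin.ext_iff] : (0 : Fin (m+2)) ≠ ⟨1, by omega⟩)]
          · intro j _ hj
            simp only [Finset.mem_insert, Finset.mem_singleton] at hj
            push_neg at hj
            exact hsupp j hj.1 (fun h => hj.2 (Fin.ext h))
        rw [hpair, hA01] at hs
        linarith
      have hrow : ∀ j : Fin (m+2), A 0 j =
          if j = 0 then c 0 else if (j : ℕ) = 1 then -c 0 else 0 := by
        intro j
        by_cases hj0 : j = 0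
        · subst hj0; rw [if_pos rfl]; exact hA00
        · rw [if_neg hj0]
          by_cases hj1 : (j : ℕ) = 1
          · rw [if_pos hj1]
            have : j = ⟨1, by omega⟩ := Fin.ext hj1
            rw [this]; exact hA01
          · rw [if_neg hj1]; exact hsupp j hj0 hj1
      rw [stepZero A (c 0) hrow]
      set B : Matrix (Fin (m+1)) (Fin (m+1)) ℤ := Matrix.of fun i j : Fin (m+1) =>
        A i.succ j.succ + if (j : ℕ) = 0 then A i.succ 0 else 0 with hB
      have hBdet := IH (m+1) (by omega) B m (fun k => b (k+1)) (fun k => c (k+1))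
        (by omega)
        (by
          intro i j hij
          show A i.succ j.succ + _ = 0
          have h1' : A i.succ j.succ = 0 := h0 _ _ (by simp; omega)
          rw [h1']
          by_cases hj : (j : ℕ) = 0
          · rw [if_pos hj, h0 _ _ (by simp only [Fin.val_succ, Fin.val_zero]; omega)]; ring
          · rw [if_neg hj]; ring)
        (by
          intro i j hij hi
          show A i.succ j.succ + _ = 0
          rw [h1 _ _ (by simp; omega) (by simp; omega), if_neg (by omega : (j:ℕ) ≠ 0)]
          ring)
        (by
          intro i
          show (∑ j : Fin (m+1), (A i.succ j.succ + if (j : ℕ) = 0 then A i.succ 0 else 0))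
            = _
          rw [Finset.sum_add_distrib]
          have h2 : (∑ j : Fin (m+1), if (j : ℕ) = 0 then A i.succ 0 else 0) = A i.succ 0 := by
            rw [Finset.sum_eq_single (0 : Fin (m+1))]
            · simp
            · intro j _ hj
              rw [if_neg (fun h => hj (Fin.ext (by simp [h])))]
            · simp
          rw [h2]
          have h3 : A i.succ 0 + ∑ j : Fin (m+1), A i.succ j.succ
              = ∑ k : Fin (m+2), A i.succ k := (Fin.sum_univ_succ _).symm
          rw [add_comm, h3, hsum i.succ]
          rw [Fin.val_succ]
          by_cases h : (i : ℕ) = m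
          · rw [if_pos (by omega), if_pos h]
          · rw [if_neg (by omega), if_neg h])
        (by
          intro i j hij
          show A i.succ j.succ + _ = -b ((i : ℕ) + 1)
          have : A i.succ j.succ = -b (i.succ : ℕ) := hb _ _ (by simp; omega)
          rw [this]
          by_cases hj : (j : ℕ) = 0
          · rw [if_pos hj, h0 _ _ (by simp only [Fin.val_succ, Fin.val_zero]; omega)]
            simp
          · rw [if_neg hj]; simp)
        (by
          intro i j hij hi
          show A i.succ j.succ + _ = -c ((i : ℕ) + 1)
          rw [hc _ _ (by simp; omega) (by simp; omega), if_neg (by omega : (j:ℕ) ≠ 0)]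
          simp)
      rw [hBdet]
      rw [show (m + 1 + 1 : ℕ) = m + 2 from rfl]
      rw [Finset.Ico_self, Finset.prod_empty, Finset.Ico_self, Finset.prod_empty]
      rw [Finset.prod_range_succ']
      ring
    · -- right step, p < m + 1
      have hplt : p < m + 1 := by omega
      have hlastv : ((Fin.last (m+1) : Fin (m+2)) : ℕ) = m + 1 := rfl
      have hAlm : A (Fin.last (m+1)) ⟨m, by omega⟩ = -b (m+1) := by
        have := hb (Fin.last (m+1)) ⟨m, by omega⟩ (by simp)
        rw [this, hlastv]
      have hsupp : ∀ j : Fin (m+2), j ≠ Fin.last (m+1) → (j : ℕ) ≠ m → A (Fin.last (m+1)) j = 0 := by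
        intro j hj0 hj1
        apply h0
        have : (j : ℕ) ≠ m + 1 := fun h => hj0 (Fin.ext h)
        have := j.isLt
        simp; omega
      have hAll : A (Fin.last (m+1)) (Fin.last (m+1)) = b (m+1) := by
        have hs := hsum (Fin.last (m+1))
        rw [if_neg (by simp; omega)] at hs
        have hpair : ∑ j : Fin (m+2), A (Fin.last (m+1)) j
            = A (Fin.last (m+1)) (Fin.last (m+1)) + A (Fin.last (m+1)) ⟨m, by omega⟩ := by
          rw [← Finset.sum_subset (Finset.subset_univ {Fin.last (m+1), ⟨m, by omega⟩})]
          · rw [Finset.sum_pair (by simp [Fin.ext_iff] : (Fin.last (m+1)) ≠ ⟨m, by omega⟩)]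
          · intro j _ hj
            simp only [Finset.mem_insert, Finset.mem_singleton] at hj
            push_neg at hj
            exact hsupp j hj.1 (fun h => hj.2 (Fin.ext h))
        rw [hpair, hAlm] at hs
        linarith
      have hrow : ∀ j : Fin (m+2), A (Fin.last (m+1)) j =
          if j = Fin.last (m+1) then b (m+1) else if (j : ℕ) = m then -b (m+1) else 0 := by
        intro j
        by_cases hj0 : j = Fin.last (m+1)
        · subst hj0; rw [if_pos rfl]; exact hAll
        · rw [if_neg hj0]
          by_cases hj1 : (j : ℕ) = m
          · rw [if_pos hj1]
            have : j = ⟨m, by omega⟩ := Fin.ext hj1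
            rw [this]; exact hAlm
          · rw [if_neg hj1]; exact hsupp j hj0 hj1
      rw [stepLast A (b (m+1)) hrow]
      set B : Matrix (Fin (m+1)) (Fin (m+1)) ℤ := Matrix.of fun i j : Fin (m+1) =>
        A i.castSucc j.castSucc + if (j : ℕ) = m then A i.castSucc (Fin.last (m+1)) else 0 with hB
      have hBdet := IH (m+1) (by omega) B p b c hplt
        (by
          intro i j hij
          show A i.castSucc j.castSucc + _ = 0
          rw [h0 _ _ (by simp; omega), if_neg (by have := i.isLt; omega : (j:ℕ) ≠ m)]
          ring)
        (by
          intro i j hij hi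
          show A i.castSucc j.castSucc + _ = 0
          rw [h1 _ _ (by simp; omega) (by simpa using hi)]
          by_cases hj : (j : ℕ) = m
          · rw [if_pos hj, h1 _ _ (by simp; omega) (by simpa using hi)]; ring
          · rw [if_neg hj]; ring)
        (by
          intro i
          show (∑ j : Fin (m+1), (A i.castSucc j.castSucc
              + if (j : ℕ) = m then A i.castSucc (Fin.last (m+1)) else 0)) = _
          rw [Finset.sum_add_distrib]
          have h2 : (∑ j : Fin (m+1), if (j : ℕ) = m then A i.castSucc (Fin.last (m+1)) else 0)
              = A i.castSucc (Fin.last (m+1)) := by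
            rw [Finset.sum_eq_single (Fin.last m)]
            · simp
            · intro j _ hj
              rw [if_neg (fun h => hj (Fin.ext (by simp [h])))]
            · simp
          rw [h2]
          have h3 : (∑ j : Fin (m+1), A i.castSucc j.castSucc) + A i.castSucc (Fin.last (m+1))
              = ∑ k : Fin (m+2), A i.castSucc k := (Fin.sum_univ_castSucc _).symm
          rw [h3, hsum i.castSucc]
          simp)
        (by
          intro i j hij
          show A i.castSucc j.castSucc + _ = -b (i : ℕ)
          have : A i.castSucc j.castSucc = -b ((i.castSucc : Fin (m+2)) : ℕ) :=
            hb _ _ (by simp; omega)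
          rw [this, if_neg (by have := i.isLt; omega : (j:ℕ) ≠ m)]
          simp)
        (by
          intro i j hij hi
          show A i.castSucc j.castSucc + _ = -c (i : ℕ)
          rw [hc _ _ (by simp; omega) (by simpa using hi)]
          by_cases hj : (j : ℕ) = m
          · rw [if_pos hj, h1 _ _ (by simp; omega) (by simpa using hi)]
            simp
          · rw [if_neg hj]; simp)
      rw [hBdet]
      rw [show (m + 1 + 1 : ℕ) = (m + 1) + 1 from rfl,
        Finset.prod_Ico_succ_top (by omega : p + 1 ≤ m + 1)]
      ring

/-- Let `n (i, s)` be nonnegative integers for `ℓ ≤ i ≤ r`, `s ∈ S`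
(vanishing when the endpoint `i - s` of the corresponding arc leaves `[ℓ, r]`), and
`n_i = [i = 0] + Σ_{s∈S} n (i, s)`.  The sum
`Σ_C (-1)^{|C|} ∏_{i∉C} n_i ∏_{(i,i-s)∈C} n (i, s)` over configurations `C` of
vertex-disjoint elementary cycles of the digraph on `{ℓ, …, r}` with arcs `(i, i-s)`,
`s ∈ S`, is — by the standard expansion of a determinant into cycle configurations —
the determinant of `D - A` with `D i = n_i` and `A i j = n (i, i - j) · [i - j ∈ S]`.
If `min S = -1` or `ℓ = 0` it equals `∏_{i=ℓ}^{-1} n (i, -1) · ∏_{i=1}^r n (i, 1)`. -/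
theorem cycle_configuration_sum_out_types
    (S : Finset ℤ) (h1S : 1 ∈ S) (hSle : ∀ s ∈ S, s ≤ 1)
    (ℓ r : ℤ) (hl : ℓ ≤ 0) (hr : 0 ≤ r)
    (hmin : ((-1 : ℤ) ∈ S ∧ ∀ s ∈ S, -1 ≤ s) ∨ ℓ = 0)
    (n : ℤ → ℤ → ℕ)
    (hcompat : ∀ i s, s ∈ S → (i - s < ℓ ∨ r < i - s) → n i s = 0) :
    Matrix.det (Matrix.of (fun i j : {x : ℤ // x ∈ Finset.Icc ℓ r} =>
      ((if (i : ℤ) = (j : ℤ) then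
          (((if (i : ℤ) = 0 then 1 else 0) + ∑ s ∈ S, n (i : ℤ) s : ℕ) : ℤ)
        else 0) -
       (if (i : ℤ) - (j : ℤ) ∈ S then ((n (i : ℤ) ((i : ℤ) - (j : ℤ)) : ℕ) : ℤ)
        else 0)))) =
    (∏ i ∈ Finset.Icc ℓ (-1), (n i (-1) : ℤ)) *
      ∏ i ∈ Finset.Icc (1 : ℤ) r, (n i 1 : ℤ) := by
  classical
  set M : Matrix {x : ℤ // x ∈ Finset.Icc ℓ r} {x : ℤ // x ∈ Finset.Icc ℓ r} ℤ :=
    Matrix.of (fun i j : {x : ℤ // x ∈ Finset.Icc ℓ r} =>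
      ((if (i : ℤ) = (j : ℤ) then
          (((if (i : ℤ) = 0 then 1 else 0) + ∑ s ∈ S, n (i : ℤ) s : ℕ) : ℤ)
        else 0) -
       (if (i : ℤ) - (j : ℤ) ∈ S then ((n (i : ℤ) ((i : ℤ) - (j : ℤ)) : ℕ) : ℤ)
        else 0))) with hM
  set N : ℕ := (r + 1 - ℓ).toNat with hNdef
  let e : Fin N ≃ {x : ℤ // x ∈ Finset.Icc ℓ r} :=
    { toFun := fun k => ⟨ℓ + (k : ℕ), by
        have hk := k.isLt
        rw [Finset.mem_Icc]
        omega⟩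
      invFun := fun x => ⟨((x : ℤ) - ℓ).toNat, by
        have hx := Finset.mem_Icc.mp x.2
        omega⟩
      left_inv := fun k => by
        apply Fin.ext
        have hk := k.isLt
        show ((ℓ + ((k : ℕ) : ℤ)) - ℓ).toNat = (k : ℕ)
        omega
      right_inv := fun x => by
        apply Subtype.ext
        have hx := Finset.mem_Icc.mp x.2
        show (ℓ + (((x : ℤ) - ℓ).toNat : ℤ) : ℤ) = (x : ℤ)
        omega }
  have he : ∀ k : Fin N, ((e k : {x : ℤ // x ∈ Finset.Icc ℓ r}) : ℤ) = ℓ + (k : ℕ) :=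
    fun k => rfl
  rw [← Matrix.det_submatrix_equiv_self e M]
  have hp : (-ℓ).toNat < N := by omega
  refine (tri_det N (M.submatrix e e) ((-ℓ).toNat)
      (fun k => (n (ℓ + (k : ℕ)) 1 : ℤ)) (fun k => (n (ℓ + (k : ℕ)) (-1) : ℤ))
      hp ?_ ?_ ?_ ?_ ?_).trans ?_
  · -- h0
    intro i j hij
    simp only [hM, Matrix.submatrix_apply, Matrix.of_apply, he]
    rw [if_neg (by omega : ¬(ℓ + ((i : ℕ) : ℤ)) = ℓ + ((j : ℕ) : ℤ)),
      if_neg (fun hs : (ℓ + ((i : ℕ) : ℤ)) - (ℓ + ((j : ℕ) : ℤ)) ∈ S => by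
        have h := hSle _ hs; omega)]
    ring
  · -- h1
    intro i j hij hip
    rcases hmin with ⟨hm1, hmge⟩ | hl0
    · simp only [hM, Matrix.submatrix_apply, Matrix.of_apply, he]
      rw [if_neg (by omega : ¬(ℓ + ((i : ℕ) : ℤ)) = ℓ + ((j : ℕ) : ℤ)),
        if_neg (fun hs : (ℓ + ((i : ℕ) : ℤ)) - (ℓ + ((j : ℕ) : ℤ)) ∈ S => by
          have h := hmge _ hs; omega)]
      ring
    · exfalso; omega
  · -- hsum
    intro i
    simp only [hM, Matrix.submatrix_apply, Matrix.of_apply, he]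
    rw [Finset.sum_sub_distrib]
    have e1 : ∀ C : ℤ,
        (∑ j : Fin N, if (ℓ + ((i : ℕ) : ℤ)) = ℓ + ((j : ℕ) : ℤ) then C else 0) = C := by
      intro C
      rw [Finset.sum_eq_single i]
      · rw [if_pos rfl]
      · intro j _ hj
        rw [if_neg (fun h => hj (Fin.ext (by omega)))]
      · simp
    rw [e1]
    set w : ℤ := ℓ + ((i : ℕ) : ℤ) with hw
    set g : ℤ → ℤ := fun x => if w - x ∈ S then (n w (w - x) : ℤ) else 0 with hg
    have stepA : (∑ j : Fin N, g (ℓ + ((j : ℕ) : ℤ))) = ∑ x ∈ Finset.Icc ℓ r, g x := by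
      rw [← Finset.sum_coe_sort (Finset.Icc ℓ r) g]
      exact Equiv.sum_comp e (fun x : {x : ℤ // x ∈ Finset.Icc ℓ r} => g (x : ℤ))
    have stepB : (∑ x ∈ Finset.Icc ℓ r, g x) = ∑ s ∈ S, (n w s : ℤ) := by
      have hx : ∀ x : ℤ, g x = ∑ s ∈ S, if s = w - x then (n w s : ℤ) else 0 :=
        fun x => (Finset.sum_ite_eq' S (w - x) (fun s => (n w s : ℤ))).symm
      calc (∑ x ∈ Finset.Icc ℓ r, g x)
          = ∑ x ∈ Finset.Icc ℓ r, ∑ s ∈ S, if s = w - x then (n w s : ℤ) else 0 :=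
            Finset.sum_congr rfl (fun x _ => hx x)
        _ = ∑ s ∈ S, ∑ x ∈ Finset.Icc ℓ r, if s = w - x then (n w s : ℤ) else 0 :=
            Finset.sum_comm
        _ = ∑ s ∈ S, ∑ x ∈ Finset.Icc ℓ r, if x = w - s then (n w s : ℤ) else 0 := by
            refine Finset.sum_congr rfl fun s _ => Finset.sum_congr rfl fun x _ => ?_
            congr 1
            simp only [eq_iff_iff]
            constructor <;> (intro h; omega)
        _ = ∑ s ∈ S, if w - s ∈ Finset.Icc ℓ r then (n w s : ℤ) else 0 :=
            Finset.sum_congr rfl (fun s _ => Finset.sum_ite_eq' _ _ _)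
        _ = ∑ s ∈ S, (n w s : ℤ) := by
            refine Finset.sum_congr rfl fun s hs => ?_
            by_cases hmem : w - s ∈ Finset.Icc ℓ r
            · rw [if_pos hmem]
            · rw [if_neg hmem]
              rw [Finset.mem_Icc] at hmem
              rw [hcompat w s hs (by omega)]
              simp
    rw [stepA, stepB]
    push_cast
    have hcond : ((w = 0) ↔ ((i : ℕ) = (-ℓ).toNat)) := by constructor <;> (intro h; omega)
    by_cases hw0 : w = 0
    · rw [if_pos hw0, if_pos (hcond.mp hw0)]; ring
    · rw [if_neg hw0, if_neg (fun h => hw0 (hcond.mpr h))]; ring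
  · -- hb
    intro i j hij
    simp only [hM, Matrix.submatrix_apply, Matrix.of_apply, he]
    rw [if_neg (by omega : ¬(ℓ + ((i : ℕ) : ℤ)) = ℓ + ((j : ℕ) : ℤ)),
      show (ℓ + ((i : ℕ) : ℤ)) - (ℓ + ((j : ℕ) : ℤ)) = 1 by omega,
      if_pos h1S]
    ring
  · -- hc
    intro i j hij hip
    rcases hmin with ⟨hm1, hmge⟩ | hl0
    · simp only [hM, Matrix.submatrix_apply, Matrix.of_apply, he]
      rw [if_neg (by omega : ¬(ℓ + ((i : ℕ) : ℤ)) = ℓ + ((j : ℕ) : ℤ)),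
        show (ℓ + ((i : ℕ) : ℤ)) - (ℓ + ((j : ℕ) : ℤ)) = -1 by omega,
        if_pos hm1]
      ring
    · exfalso; omega
  · -- products
    have P1 : (∏ k ∈ Finset.Ico ((-ℓ).toNat + 1) N, (n (ℓ + (k : ℕ)) 1 : ℤ))
        = ∏ i ∈ Finset.Icc (1 : ℤ) r, (n i 1 : ℤ) := by
      refine Finset.prod_bij' (fun k _ => ℓ + (k : ℕ)) (fun x _ => ((x : ℤ) - ℓ).toNat)
        ?_ ?_ ?_ ?_ ?_
      · intro a ha; rw [Finset.mem_Ico] at ha; rw [Finset.mem_Icc]; omega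
      · intro a ha; rw [Finset.mem_Icc] at ha; rw [Finset.mem_Ico]; omega
      · intro a ha; rw [Finset.mem_Ico] at ha; omega
      · intro a ha; rw [Finset.mem_Icc] at ha; omega
      · intro a _; rfl
    have P2 : (∏ k ∈ Finset.range ((-ℓ).toNat), (n (ℓ + (k : ℕ)) (-1) : ℤ))
        = ∏ i ∈ Finset.Icc ℓ (-1), (n i (-1) : ℤ) := by
      refine Finset.prod_bij' (fun k _ => ℓ + (k : ℕ)) (fun x _ => ((x : ℤ) - ℓ).toNat)
        ?_ ?_ ?_ ?_ ?_
      · intro a ha; rw [Finset.mem_range] at ha; rw [Finset.mem_Icc]; omega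
      · intro a ha; rw [Finset.mem_Icc] at ha; rw [Finset.mem_range]; omega
      · intro a ha; rw [Finset.mem_range] at ha; omega
      · intro a ha; rw [Finset.mem_Icc] at ha; omega
      · intro a _; rfl
    rw [P1, P2]
    ring
end

section
/- Let S ⊆ Z with max S = 1 and n_0,...,n_r positive. Let n(i,s) be nonnegative integers with n(i,s) = 0 if i - s ∉ [0,r] and n_i = [i=0] + Σ_s n(i,s). The number of functions f : V \ {0^1} → V (V = ⋃ V_i, |V_i| = n_i) satisfying: f(i^1) = (i-1)^1 for 1 ≤ i ≤ r, and for each i, s exactly n(i,s) vertices of V_i are mapped into V_{i-s}, equals (n_r · ∏_{i=0}^r (n_i - 1)! · ∏_{i=0}^r n_i^{c(i)-1} · ∏_{i=1}^r n(i,1)) / ∏_{i,s} n(i,s)!, where c(i) = Σ_s n(i+s, s) is the number of vertices mapped into V_i. -/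
open Finset

private lemma card_prescribed_fibers {α κ : Type*} [DecidableEq κ] [Finite α]
    (K : Finset κ) (k : κ → ℕ) (h : ∑ j ∈ K, k j = Nat.card α) :
    Nat.card {t : α → κ // (∀ a, t a ∈ K) ∧ ∀ j ∈ K, Nat.card {a // t a = j} = k j}
      = Nat.multinomial K k := by
  classical
  induction K using Finset.cons_induction generalizing α with
  | empty =>
      haveI : IsEmpty α := by
        simp only [sum_empty] at h
        rcases Nat.card_eq_zero.mp h.symm with h' | h'
        · exact h'
        · exact absurd ‹Finite α› h'.not_finite
      haveI : Unique {t : α → κ // (∀ a, t a ∈ (∅ : Finset κ)) ∧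
          ∀ j ∈ (∅ : Finset κ), Nat.card {a // t a = j} = k j} := by
        refine ⟨⟨⟨fun a => isEmptyElim a, fun a => isEmptyElim a, by simp⟩⟩, ?_⟩
        rintro ⟨t, -⟩
        exact Subtype.ext (funext fun a => isEmptyElim a)
      simp [Nat.card_unique]
  | cons j K hj ih =>
      haveI := Fintype.ofFinite α
      set X := {t : α → κ // (∀ a, t a ∈ cons j K hj) ∧
          ∀ j' ∈ cons j K hj, Nat.card {a // t a = j'} = k j'} with hXdef
      haveI : Finite X := by
        refine Finite.of_injective
          (fun x : X => (fun a => (⟨x.1 a, x.2.1 a⟩ : {c // c ∈ cons j K hj}))) ?_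
        intro x y hxy
        exact Subtype.ext (funext fun a => congrArg Subtype.val (congrFun hxy a))
      haveI : Fintype X := Fintype.ofFinite X
      have hcard : ∀ (t : α → κ) (j' : κ),
          Nat.card {a // t a = j'} = (univ.filter fun a => t a = j').card := by
        intro t j'
        rw [Nat.card_eq_fintype_card, Fintype.card_subtype]
      have h3 : k j + ∑ j' ∈ K, k j' = Fintype.card α := by
        rw [← Nat.card_eq_fintype_card, ← h, sum_cons]
      have hmap : ∀ x : X, x ∈ (univ : Finset X) →
          (univ.filter fun a => x.1 a = j) ∈ powersetCard (k j) (univ : Finset α) := by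
        intro x _
        rw [mem_powersetCard_univ, ← hcard, x.2.2 j (mem_cons_self _ _)]
      rw [Nat.card_eq_fintype_card, ← card_univ, Finset.card_eq_sum_card_fiberwise hmap]
      have hfib : ∀ B ∈ powersetCard (k j) (univ : Finset α),
          ((univ : Finset X).filter fun x => (univ.filter fun a => x.1 a = j) = B).card
            = Nat.multinomial K k := by
        intro B hB
        rw [mem_powersetCard_univ] at hB
        have h1 : ((univ : Finset X).filter fun x =>
            (univ.filter fun a => x.1 a = j) = B).card
            = Fintype.card {x : X // (univ.filter fun a => x.1 a = j) = B} :=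
          (Fintype.card_subtype _).symm
        have hBcard : Fintype.card {a : α // a ∈ B} = k j := by
          rw [← hB]; exact Fintype.card_coe B
        have hα' : ∑ j' ∈ K, k j' = Nat.card {a : α // a ∉ B} := by
          have h2 : Fintype.card {a : α // a ∉ B} = Fintype.card α - k j := by
            rw [← hBcard]; exact Fintype.card_subtype_compl _
          rw [Nat.card_eq_fintype_card, h2]
          omega
        have E : {x : X // (univ.filter fun a => x.1 a = j) = B}
            ≃ {t' : {a : α // a ∉ B} → κ // (∀ a, t' a ∈ K) ∧
                ∀ j' ∈ K, Nat.card {a // t' a = j'} = k j'} := by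
          refine ⟨fun x => ⟨fun a => x.1.1 a.1, ?_, ?_⟩,
            fun t' => ⟨⟨fun a => if h : a ∈ B then j else t'.1 ⟨a, h⟩, ?_, ?_⟩, ?_⟩,
            ?_, ?_⟩
          · -- values in K
            intro a
            rcases mem_cons.mp (x.1.2.1 a.1) with h' | h'
            · exfalso
              have hmem : a.1 ∈ univ.filter fun b => x.1.1 b = j := by simp [h']
              rw [x.2] at hmem
              exact a.2 hmem
            · exact h'
          · -- counts
            intro j' hj'
            have hne : j' ≠ j := fun e => hj (e ▸ hj')
            have e2 : {a : {a : α // a ∉ B} // x.1.1 a.1 = j'}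
                ≃ {a : α // x.1.1 a = j'} :=
              ⟨fun p => ⟨p.1.1, p.2⟩,
               fun q => ⟨⟨q.1, by
                 intro hmem
                 have hm2 : (q : α) ∈ filter (fun b => x.1.1 b = j) univ :=
                   (Finset.ext_iff.mp x.2 q.1).mpr hmem
                 exact hne (q.2.symm.trans (mem_filter.mp hm2).2)⟩, q.2⟩,
               fun p => rfl, fun q => rfl⟩
            rw [Nat.card_congr e2, x.1.2.2 j' (mem_cons_of_mem hj')]
          · -- extension values in cons
            intro a
            dsimp only
            by_cases h' : a ∈ B
            · rw [dif_pos h']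
              exact mem_cons_self j K
            · simp only [dif_neg h']
              exact mem_cons_of_mem (t'.2.1 ⟨a, h'⟩)
          · -- extension counts
            intro j' hj'
            dsimp only
            rcases mem_cons.mp hj' with rfl | hj'K
            · have e2 : {a : α // (if h : a ∈ B then j' else t'.1 ⟨a, h⟩) = j'}
                  ≃ {a : α // a ∈ B} := by
                refine ⟨fun p => ⟨p.1, ?_⟩, fun q => ⟨q.1, by simp [q.2]⟩,
                  fun p => rfl, fun q => rfl⟩
                by_contra hc
                have hp := p.2
                rw [dif_neg hc] at hp
                exact hj (hp ▸ t'.2.1 ⟨p.1, hc⟩)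
              rw [Nat.card_congr e2, Nat.card_eq_fintype_card, hBcard]
            · have hne : j' ≠ j := fun e => hj (e ▸ hj'K)
              have e2 : {a : α // (if h : a ∈ B then j else t'.1 ⟨a, h⟩) = j'}
                  ≃ {a : {a : α // a ∉ B} // t'.1 a = j'} := by
                refine ⟨fun p => ⟨⟨p.1, ?_⟩, ?_⟩, fun q => ⟨q.1.1, ?_⟩,
                  fun p => rfl, fun q => rfl⟩
                · by_contra hc
                  have hp := p.2
                  rw [dif_pos hc] at hp
                  exact hne hp.symm
                · have hp := p.2
                  rwa [dif_neg] at hp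
                · rw [dif_neg q.1.2]
                  exact q.2
              rw [Nat.card_congr e2, t'.2.2 j' hj'K]
          · -- fiber is B
            ext a
            simp only [mem_filter, mem_univ, true_and]
            by_cases h' : a ∈ B
            · rw [dif_pos h']
              simp [h']
            · rw [dif_neg h']
              simp only [h', iff_false]
              intro hc
              exact hj (hc ▸ t'.2.1 ⟨a, h'⟩)
          · -- left inverse
            rintro ⟨⟨t, ht⟩, hx⟩
            refine Subtype.ext (Subtype.ext (funext fun a => ?_))
            dsimp only
            by_cases h' : a ∈ B
            · rw [dif_pos h']
              rw [← hx] at h'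
              exact (mem_filter.mp h').2.symm
            · rw [dif_neg h']
          · -- right inverse
            rintro ⟨t', ht'⟩
            refine Subtype.ext (funext fun a => ?_)
            dsimp only
            rw [dif_neg a.2]
        rw [h1, ← Nat.card_eq_fintype_card, Nat.card_congr E, ih hα']
      rw [Finset.sum_congr rfl hfib, sum_const, card_powersetCard, card_univ,
        smul_eq_mul, Nat.multinomial_cons, ← h3]


private lemma natCard_subtype_split {α : Type*} [Finite α] (p q : α → Prop) :
    Nat.card {x // p x} = Nat.card {x // p x ∧ q x} + Nat.card {x // p x ∧ ¬ q x} := by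
  classical
  haveI := Fintype.ofFinite α
  rw [Nat.card_eq_fintype_card, Nat.card_eq_fintype_card, Nat.card_eq_fintype_card,
    Fintype.card_subtype, Fintype.card_subtype, Fintype.card_subtype]
  rw [← Finset.filter_filter, ← Finset.filter_filter]
  exact (Finset.card_filter_add_card_filter_not (s := univ.filter p) q).symm

private lemma card_level_fun_count {W : Type*} [Finite W] (lvl : W → ℤ)
    (I : Finset ℤ) (S : Finset ℤ) (m : ℤ → ℤ → ℕ)
    (hlvl : ∀ w, lvl w ∈ I)
    (hsum : ∀ i ∈ I, ∑ s ∈ S, m i s = Nat.card {w // lvl w = i}) :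
    Nat.card {t : W → ℤ // (∀ w, t w ∈ S) ∧
        ∀ i ∈ I, ∀ s ∈ S, Nat.card {w // lvl w = i ∧ t w = s} = m i s}
      = ∏ i ∈ I, Nat.multinomial S (m i) := by
  classical
  have key : ∀ (f : Π i : ↥I, {t : {w // lvl w = i.1} → ℤ // (∀ w, t w ∈ S) ∧
          ∀ s ∈ S, Nat.card {w // t w = s} = m i.1 s})
      (w : W) (i : ℤ) (hi : i ∈ I) (hw : lvl w = i),
      (f ⟨lvl w, hlvl w⟩).1 ⟨w, rfl⟩ = (f ⟨i, hi⟩).1 ⟨w, hw⟩ := by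
    intro f w i hi hw
    subst hw
    rfl
  have E : {t : W → ℤ // (∀ w, t w ∈ S) ∧
        ∀ i ∈ I, ∀ s ∈ S, Nat.card {w // lvl w = i ∧ t w = s} = m i s}
      ≃ Π i : ↥I, {t : {w // lvl w = i.1} → ℤ // (∀ w, t w ∈ S) ∧
          ∀ s ∈ S, Nat.card {w // t w = s} = m i.1 s} := by
    refine ⟨fun t i => ⟨fun w => t.1 w.1, fun w => t.2.1 w.1, ?_⟩,
      fun f => ⟨fun w => (f ⟨lvl w, hlvl w⟩).1 ⟨w, rfl⟩,
        fun w => (f ⟨lvl w, hlvl w⟩).2.1 ⟨w, rfl⟩, ?_⟩, ?_, ?_⟩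
    · intro s hs
      have e : {w : {w // lvl w = i.1} // t.1 w.1 = s}
          ≃ {w : W // lvl w = i.1 ∧ t.1 w = s} :=
        ⟨fun p => ⟨p.1.1, p.1.2, p.2⟩, fun q => ⟨⟨q.1, q.2.1⟩, q.2.2⟩,
          fun p => rfl, fun q => rfl⟩
      rw [Nat.card_congr e, t.2.2 i.1 i.2 s hs]
    · intro i hi s hs
      have e : {w : W // lvl w = i ∧ (f ⟨lvl w, hlvl w⟩).1 ⟨w, rfl⟩ = s}
          ≃ {w' : {w // lvl w = i} // (f ⟨i, hi⟩).1 w' = s} := by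
        refine ⟨fun q => ⟨⟨q.1, q.2.1⟩, ?_⟩,
          fun p => ⟨p.1.1, p.1.2, ?_⟩, fun q => rfl, fun p => rfl⟩
        · rw [← key f q.1 i hi q.2.1]
          exact q.2.2
        · rw [key f p.1.1 i hi p.1.2]
          exact p.2
      rw [Nat.card_congr e, (f ⟨i, hi⟩).2.2 s hs]
    · intro t
      exact Subtype.ext (funext fun w => rfl)
    · intro f
      funext i
      exact Subtype.ext (funext fun w => key f w.1 i.1 i.2 w.2)
  rw [Nat.card_congr E, Nat.card_pi, ← Finset.prod_coe_sort I]
  refine Finset.prod_congr rfl ?_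
  intro i _
  exact card_prescribed_fibers S (m i.1) (hsum i.1 i.2)

private lemma card_level_fun_count_aux : True := trivial

private lemma finite_verts (r : ℤ) (nn : ℤ → ℕ) :
    {p : ℤ × ℕ | 0 ≤ p.1 ∧ p.1 ≤ r ∧ 1 ≤ p.2 ∧ p.2 ≤ nn p.1}.Finite := by
  apply Set.Finite.subset (Set.finite_Icc ((0:ℤ), (1:ℕ)) (r, (Finset.Icc 0 r).sup nn))
  rintro ⟨i, k⟩ ⟨h1, h2, h3, h4⟩
  exact ⟨⟨h1, h3⟩, ⟨h2, le_trans h4 (Finset.le_sup (Finset.mem_Icc.mpr ⟨h1, h2⟩))⟩⟩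

private lemma card_level_C (r : ℤ) (nn : ℤ → ℕ) (j : ℤ) (h0 : 0 ≤ j) (hjr : j ≤ r) :
    Nat.card {c : {v : ℤ × ℕ // 0 ≤ v.1 ∧ v.1 ≤ r ∧ 1 ≤ v.2 ∧ v.2 ≤ nn v.1} // c.1.1 = j}
      = nn j := by
  have E : {c : {v : ℤ × ℕ // 0 ≤ v.1 ∧ v.1 ≤ r ∧ 1 ≤ v.2 ∧ v.2 ≤ nn v.1} // c.1.1 = j}
      ≃ ↥(Finset.Icc 1 (nn j)) := by
    refine ⟨fun c => ⟨c.1.1.2, Finset.mem_Icc.mpr ⟨c.1.2.2.2.1, ?_⟩⟩,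
      fun k => ⟨⟨(j, k.1), h0, hjr, (Finset.mem_Icc.mp k.2).1, (Finset.mem_Icc.mp k.2).2⟩,
        rfl⟩, ?_, ?_⟩
    · have := c.1.2.2.2.2
      rwa [c.2] at this
    · rintro ⟨⟨⟨i, kk⟩, hv⟩, rfl⟩
      rfl
    · rintro ⟨k, hk⟩
      rfl
  rw [Nat.card_congr E, Nat.card_eq_fintype_card, Fintype.card_coe, Nat.card_Icc]
  omega

private lemma card_level_W (r : ℤ) (nn : ℤ → ℕ) (j : ℤ) (h0 : 0 ≤ j) (hjr : j ≤ r) :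
    Nat.card {c : {v : ℤ × ℕ // (0 ≤ v.1 ∧ v.1 ≤ r ∧ 1 ≤ v.2 ∧ v.2 ≤ nn v.1) ∧ 2 ≤ v.2} //
      c.1.1 = j} = nn j - 1 := by
  have E : {c : {v : ℤ × ℕ // (0 ≤ v.1 ∧ v.1 ≤ r ∧ 1 ≤ v.2 ∧ v.2 ≤ nn v.1) ∧ 2 ≤ v.2} //
      c.1.1 = j} ≃ ↥(Finset.Icc 2 (nn j)) := by
    refine ⟨fun c => ⟨c.1.1.2, Finset.mem_Icc.mpr ⟨c.1.2.2, ?_⟩⟩,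
      fun k => ⟨⟨(j, k.1), ⟨h0, hjr, ?_, ?_⟩, (Finset.mem_Icc.mp k.2).1⟩, rfl⟩,
      ?_, ?_⟩
    · have := c.1.2.1.2.2.2
      rwa [c.2] at this
    · have hk := Finset.mem_Icc.mp k.2
      omega
    · exact (Finset.mem_Icc.mp k.2).2
    · rintro ⟨⟨⟨i, kk⟩, hv⟩, rfl⟩
      rfl
    · rintro ⟨k, hk⟩
      rfl
  rw [Nat.card_congr E, Nat.card_eq_fintype_card, Fintype.card_coe, Nat.card_Icc]
  omega

section
variable (r : ℤ) (nn : ℤ → ℕ)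

private lemma count_G (S : Finset ℤ) (m : ℤ → ℤ → ℕ)
    (hm0 : ∀ i s : ℤ, (i - s < 0 ∨ r < i - s) → m i s = 0)
    (hsum : ∀ i ∈ Finset.Icc (0:ℤ) r, ∑ s ∈ S, m i s = nn i - 1) :
    Nat.card {g : {v : ℤ × ℕ // (0 ≤ v.1 ∧ v.1 ≤ r ∧ 1 ≤ v.2 ∧ v.2 ≤ nn v.1) ∧ 2 ≤ v.2} →
        {v : ℤ × ℕ // 0 ≤ v.1 ∧ v.1 ≤ r ∧ 1 ≤ v.2 ∧ v.2 ≤ nn v.1} //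
      (∀ w, w.1.1 - (g w).1.1 ∈ S) ∧
      ∀ i ∈ Finset.Icc (0:ℤ) r, ∀ s ∈ S,
        Nat.card {w // w.1.1 = i ∧ (g w).1.1 = i - s} = m i s}
    = (∏ i ∈ Finset.Icc (0:ℤ) r, Nat.multinomial S (m i))
      * ∏ i ∈ Finset.Icc (0:ℤ) r, ∏ s ∈ S, nn (i - s) ^ m i s := by
  classical
  haveI instC : Finite {v : ℤ × ℕ // 0 ≤ v.1 ∧ v.1 ≤ r ∧ 1 ≤ v.2 ∧ v.2 ≤ nn v.1} :=
    (finite_verts r nn).to_subtype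
  haveI instW : Finite {v : ℤ × ℕ // (0 ≤ v.1 ∧ v.1 ≤ r ∧ 1 ≤ v.2 ∧ v.2 ≤ nn v.1) ∧ 2 ≤ v.2} :=
    Finite.of_injective
      (fun v => (⟨v.1, v.2.1⟩ : {v : ℤ × ℕ // 0 ≤ v.1 ∧ v.1 ≤ r ∧ 1 ≤ v.2 ∧ v.2 ≤ nn v.1}))
      (by
        intro a b h
        have h2 := congrArg Subtype.val h
        exact Subtype.ext h2)
  haveI instWF : Fintype {v : ℤ × ℕ // (0 ≤ v.1 ∧ v.1 ≤ r ∧ 1 ≤ v.2 ∧ v.2 ≤ nn v.1) ∧ 2 ≤ v.2} :=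
    Fintype.ofFinite _
  set Wt := {v : ℤ × ℕ // (0 ≤ v.1 ∧ v.1 ≤ r ∧ 1 ≤ v.2 ∧ v.2 ≤ nn v.1) ∧ 2 ≤ v.2} with hWt
  set Ct := {v : ℤ × ℕ // 0 ≤ v.1 ∧ v.1 ≤ r ∧ 1 ≤ v.2 ∧ v.2 ≤ nn v.1} with hCt
  set I := Finset.Icc (0:ℤ) r with hIdef
  set G := {g : Wt → Ct //
      (∀ w, w.1.1 - (g w).1.1 ∈ S) ∧
      ∀ i ∈ I, ∀ s ∈ S,
        Nat.card {w // w.1.1 = i ∧ (g w).1.1 = i - s} = m i s} with hGdef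
  set T := {t : Wt → ℤ // (∀ w, t w ∈ S) ∧
      ∀ i ∈ I, ∀ s ∈ S, Nat.card {w // w.1.1 = i ∧ t w = s} = m i s} with hTdef
  haveI instTfin : Finite T := by
    refine Finite.of_injective (fun t : T => (fun w => (⟨t.1 w, t.2.1 w⟩ : ↥S))) ?_
    intro a b h
    exact Subtype.ext (funext fun w => congrArg Subtype.val (congrFun h w))
  haveI : Fintype T := Fintype.ofFinite T
  haveI instGfin : Finite G := Subtype.finite
  haveI : Fintype G := Fintype.ofFinite G
  -- the type map
  have hΦmem : ∀ g : G, (fun w => w.1.1 - (g.1 w).1.1) ∈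
      {t : Wt → ℤ | (∀ w, t w ∈ S) ∧
        ∀ i ∈ I, ∀ s ∈ S, Nat.card {w // w.1.1 = i ∧ t w = s} = m i s} := by
    intro g
    refine ⟨g.2.1, ?_⟩
    intro i hi s hs
    rw [Nat.card_congr (Equiv.subtypeEquivRight (q := fun w : Wt =>
      w.1.1 = i ∧ (g.1 w).1.1 = i - s) (fun w => ?_))]
    · exact g.2.2 i hi s hs
    · constructor
      · rintro ⟨h1, h2⟩
        have h2' : w.1.1 - (g.1 w).1.1 = s := h2
        exact ⟨h1, by omega⟩
      · rintro ⟨h1, h2⟩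
        show w.1.1 = i ∧ w.1.1 - (g.1 w).1.1 = s
        exact ⟨h1, by omega⟩
  let Φ : G → T := fun g => ⟨fun w => w.1.1 - (g.1 w).1.1, hΦmem g⟩
  rw [Nat.card_eq_fintype_card, ← card_univ,
    Finset.card_eq_sum_card_fiberwise (f := Φ) (t := univ) (fun x _ => mem_univ _)]
  have hfib : ∀ t : T, ((univ : Finset G).filter fun g => Φ g = t).card
      = ∏ i ∈ I, ∏ s ∈ S, nn (i - s) ^ m i s := by
    intro t
    have hrange : ∀ w : Wt, 0 ≤ w.1.1 - t.1 w ∧ w.1.1 - t.1 w ≤ r := by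
      intro w
      by_contra hc
      have h0 : m w.1.1 (t.1 w) = 0 := hm0 _ _ (by omega)
      have hcnt := t.2.2 w.1.1 (Finset.mem_Icc.mpr ⟨w.2.1.1, w.2.1.2.1⟩) (t.1 w) (t.2.1 w)
      haveI : Nonempty {w' : Wt // w'.1.1 = w.1.1 ∧ t.1 w' = t.1 w} := ⟨⟨w, rfl, rfl⟩⟩
      have hpos' : 0 < Nat.card {w' : Wt // w'.1.1 = w.1.1 ∧ t.1 w' = t.1 w} := Nat.card_pos
      omega
    -- fiber ≃ Pi
    have EF : {g : G // Φ g = t} ≃ Π w : Wt, {c : Ct // c.1.1 = w.1.1 - t.1 w} := by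
      refine ⟨fun g w => ⟨g.1.1 w, ?_⟩, fun h => ⟨⟨fun w => (h w).1, ?_, ?_⟩, ?_⟩, ?_, ?_⟩
      · have h2 : w.1.1 - (g.1.1 w).1.1 = t.1 w := congrFun (congrArg Subtype.val g.2) w
        omega
      · intro w
        show w.1.1 - ((h w).1).1.1 ∈ S
        have h2 := (h w).2
        have h3 : w.1.1 - ((h w).1).1.1 = t.1 w := by omega
        rw [h3]
        exact t.2.1 w
      · intro i hi s hs
        rw [Nat.card_congr (Equiv.subtypeEquivRight (q := fun w : Wt =>
          w.1.1 = i ∧ t.1 w = s) (fun w => ?_))]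
        · exact t.2.2 i hi s hs
        · have hw2 := (h w).2
          constructor
          · rintro ⟨h1, h2⟩
            have h2' : ((h w).1).1.1 = i - s := h2
            exact ⟨h1, by omega⟩
          · rintro ⟨h1, h2⟩
            refine ⟨h1, ?_⟩
            show ((h w).1).1.1 = i - s
            omega
      · refine Subtype.ext (funext fun w => ?_)
        have h2 := (h w).2
        show w.1.1 - ((h w).1).1.1 = t.1 w
        omega
      · intro g
        refine Subtype.ext (Subtype.ext (funext fun w => rfl))
      · intro h
        funext w
        exact Subtype.ext rfl
    have h1 : ((univ : Finset G).filter fun g => Φ g = t).card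
        = Nat.card {g : G // Φ g = t} := by
      rw [Nat.card_eq_fintype_card, Fintype.card_subtype]
    rw [h1, Nat.card_congr EF, Nat.card_pi]
    have h2 : ∀ w : Wt, Nat.card {c : Ct // c.1.1 = w.1.1 - t.1 w} = nn (w.1.1 - t.1 w) :=
      fun w => card_level_C r nn _ (hrange w).1 (hrange w).2
    rw [Finset.prod_congr rfl (fun w _ => h2 w)]
    rw [← Finset.prod_fiberwise_of_maps_to (g := fun w : Wt => (w.1.1, t.1 w)) (t := I ×ˢ S)
      (fun w _ => Finset.mem_product.mpr
        ⟨Finset.mem_Icc.mpr ⟨w.2.1.1, w.2.1.2.1⟩, t.2.1 w⟩)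
      (fun w => nn (w.1.1 - t.1 w))]
    rw [← Finset.prod_product' I S (fun i s => nn (i - s) ^ m i s)]
    refine Finset.prod_congr rfl ?_
    intro p hp
    rw [Finset.mem_product] at hp
    have hinner : ∀ w ∈ (univ : Finset Wt).filter (fun w => (w.1.1, t.1 w) = p),
        nn (w.1.1 - t.1 w) = nn (p.1 - p.2) := by
      intro w hw
      rw [mem_filter] at hw
      have hthis := hw.2
      rw [Prod.ext_iff] at hthis
      have e1 : w.1.1 = p.1 := hthis.1
      have e2 : (t.1 w : ℤ) = p.2 := hthis.2
      rw [e1, e2]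
    rw [Finset.prod_congr rfl hinner, Finset.prod_const]
    congr 1
    have h3 : ((univ : Finset Wt).filter (fun w => (w.1.1, t.1 w) = p)).card
        = Nat.card {w : Wt // w.1.1 = p.1 ∧ t.1 w = p.2} := by
      rw [Nat.card_eq_fintype_card, Fintype.card_subtype]
      congr 1
      apply Finset.filter_congr
      intro w _
      rw [Prod.ext_iff]
    rw [h3, t.2.2 p.1 hp.1 p.2 hp.2]
  rw [Finset.sum_congr rfl (fun t _ => hfib t), Finset.sum_const, card_univ, smul_eq_mul,
    ← Nat.card_eq_fintype_card]
  congr 1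
  refine card_level_fun_count (fun w : Wt => w.1.1) I S m
    (fun w => Finset.mem_Icc.mpr ⟨w.2.1.1, w.2.1.2.1⟩) ?_
  intro i hi
  rw [hsum i hi]
  rw [Finset.mem_Icc] at hi
  rw [card_level_W r nn i hi.1 hi.2]

end

section

private lemma card_F_eq_G (S : Finset ℤ) (h1S : 1 ∈ S) (r : ℤ)
    (n : ℤ → ℤ → ℕ) (nn : ℤ → ℕ)
    (hpos : ∀ i ∈ Finset.Icc 0 r, 0 < nn i)
    (hn1 : ∀ i ∈ Finset.Icc (1:ℤ) r, 1 ≤ n i 1) :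
    Nat.card {f : {v : ℤ × ℕ // (0 ≤ v.1 ∧ v.1 ≤ r ∧ 1 ≤ v.2 ∧ v.2 ≤ nn v.1) ∧
            v ≠ ((0 : ℤ), (1 : ℕ))} →
         {v : ℤ × ℕ // 0 ≤ v.1 ∧ v.1 ≤ r ∧ 1 ≤ v.2 ∧ v.2 ≤ nn v.1} |
        (∀ v, v.1.1 - (f v).1.1 ∈ S) ∧
        (∀ v, 1 ≤ v.1.1 → v.1.2 = 1 → ((f v) : ℤ × ℕ) = (v.1.1 - 1, 1)) ∧
        (∀ i ∈ Finset.Icc (0 : ℤ) r, ∀ s ∈ S,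
          {v | v.1.1 = i ∧ (f v).1.1 = i - s}.ncard = n i s)}
    = Nat.card {g : {v : ℤ × ℕ // (0 ≤ v.1 ∧ v.1 ≤ r ∧ 1 ≤ v.2 ∧ v.2 ≤ nn v.1) ∧ 2 ≤ v.2} →
        {v : ℤ × ℕ // 0 ≤ v.1 ∧ v.1 ≤ r ∧ 1 ≤ v.2 ∧ v.2 ≤ nn v.1} //
      (∀ w, w.1.1 - (g w).1.1 ∈ S) ∧
      ∀ i ∈ Finset.Icc (0:ℤ) r, ∀ s ∈ S,
        Nat.card {w // w.1.1 = i ∧ (g w).1.1 = i - s}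
          = n i s - (if s = 1 ∧ 1 ≤ i then 1 else 0)} := by
  classical
  haveI instC : Finite {v : ℤ × ℕ // 0 ≤ v.1 ∧ v.1 ≤ r ∧ 1 ≤ v.2 ∧ v.2 ≤ nn v.1} :=
    (finite_verts r nn).to_subtype
  haveI instD : Finite {v : ℤ × ℕ // (0 ≤ v.1 ∧ v.1 ≤ r ∧ 1 ≤ v.2 ∧ v.2 ≤ nn v.1) ∧
      v ≠ ((0 : ℤ), (1 : ℕ))} := by
    refine Finite.of_injective
      (fun v => (⟨v.1, v.2.1⟩ :
        {v : ℤ × ℕ // 0 ≤ v.1 ∧ v.1 ≤ r ∧ 1 ≤ v.2 ∧ v.2 ≤ nn v.1})) ?_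
    intro a b h
    have h2 := congrArg Subtype.val h
    exact Subtype.ext h2
  haveI instW : Finite {v : ℤ × ℕ // (0 ≤ v.1 ∧ v.1 ≤ r ∧ 1 ≤ v.2 ∧ v.2 ≤ nn v.1) ∧
      2 ≤ v.2} := by
    refine Finite.of_injective
      (fun v => (⟨v.1, v.2.1⟩ :
        {v : ℤ × ℕ // 0 ≤ v.1 ∧ v.1 ≤ r ∧ 1 ≤ v.2 ∧ v.2 ≤ nn v.1})) ?_
    intro a b h
    have h2 := congrArg Subtype.val h
    exact Subtype.ext h2
  set Ct := {v : ℤ × ℕ // 0 ≤ v.1 ∧ v.1 ≤ r ∧ 1 ≤ v.2 ∧ v.2 ≤ nn v.1} with hCt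
  set Dt := {v : ℤ × ℕ // (0 ≤ v.1 ∧ v.1 ≤ r ∧ 1 ≤ v.2 ∧ v.2 ≤ nn v.1) ∧
      v ≠ ((0 : ℤ), (1 : ℕ))} with hDt
  set Wt := {v : ℤ × ℕ // (0 ≤ v.1 ∧ v.1 ≤ r ∧ 1 ≤ v.2 ∧ v.2 ≤ nn v.1) ∧ 2 ≤ v.2} with hWt
  -- inclusion of free vertices into the domain
  have hWne : ∀ w : Wt, w.1 ≠ ((0 : ℤ), (1 : ℕ)) := by
    intro w hh
    have h2 := w.2.2
    rw [hh] at h2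
    exact absurd h2 (by norm_num)
  let incl : Wt → Dt := fun w => ⟨w.1, w.2.1, hWne w⟩
  -- every special vertex has level ≥ 1
  have hone : ∀ v : Dt, v.1.2 = 1 → 1 ≤ v.1.1 := by
    intro v h
    by_contra hc
    have h0 : v.1.1 = 0 := by
      have := v.2.1.1
      omega
    exact v.2.2 (Prod.ext_iff.mpr ⟨h0, h⟩)
  -- the splitting identity
  have hsplit : ∀ f : Dt → Ct,
      (∀ v : Dt, 1 ≤ v.1.1 → v.1.2 = 1 → ((f v) : ℤ × ℕ) = (v.1.1 - 1, 1)) →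
      ∀ i ∈ Finset.Icc (0:ℤ) r, ∀ s ∈ S,
      Nat.card {v : Dt // v.1.1 = i ∧ (f v).1.1 = i - s}
        = Nat.card {w : Wt // w.1.1 = i ∧ (f (incl w)).1.1 = i - s}
          + (if s = 1 ∧ 1 ≤ i then 1 else 0) := by
    intro f hf2 i hi s hs
    rw [Finset.mem_Icc] at hi
    rw [natCard_subtype_split (fun v : Dt => v.1.1 = i ∧ (f v).1.1 = i - s)
      (fun v => 2 ≤ v.1.2)]
    congr 1
    · -- free part
      refine Nat.card_congr ⟨fun v => ⟨⟨v.1.1, v.1.2.1, v.2.2⟩, v.2.1.1, v.2.1.2⟩,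
        fun w => ⟨incl w.1, ⟨w.2.1, w.2.2⟩, w.1.2.2⟩, fun v => rfl, fun w => rfl⟩
    · -- special part
      by_cases hc : s = 1 ∧ 1 ≤ i
      · rw [if_pos hc]
        obtain ⟨hs1, hi1⟩ := hc
        have hne0 : ((i, 1) : ℤ × ℕ) ≠ ((0 : ℤ), (1 : ℕ)) := by
          intro hh
          have := congrArg Prod.fst hh
          simp at this
          omega
        have hv0P : (0 ≤ (i:ℤ) ∧ i ≤ r ∧ 1 ≤ (1:ℕ) ∧ (1:ℕ) ≤ nn i) :=
          ⟨by omega, hi.2, le_refl 1, hpos i (Finset.mem_Icc.mpr hi)⟩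
        set v0 : Dt := ⟨(i, 1), hv0P, hne0⟩ with hv0
        have hfv0 := hf2 v0 hi1 rfl
        haveI : Unique {v : Dt // (v.1.1 = i ∧ (f v).1.1 = i - s) ∧ ¬ 2 ≤ v.1.2} := by
          refine ⟨⟨⟨v0, ⟨rfl, ?_⟩, by norm_num⟩⟩, ?_⟩
          · have := congrArg Prod.fst hfv0
            simp at this
            have hv0i : (v0 : ℤ × ℕ).1 = i := rfl
            omega
          · rintro ⟨v, ⟨hv1, hv2⟩, hv3⟩
            refine Subtype.ext (Subtype.ext ?_)
            have hb := v.2.1.2.2.1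
            have hv12 : v.1.2 = 1 := by omega
            rw [Prod.ext_iff]
            exact ⟨hv1, hv12⟩
        rw [Nat.card_unique]
      · rw [if_neg hc]
        haveI : IsEmpty {v : Dt // (v.1.1 = i ∧ (f v).1.1 = i - s) ∧ ¬ 2 ≤ v.1.2} := by
          refine ⟨?_⟩
          rintro ⟨v, ⟨hv1, hv2⟩, hv3⟩
          have hb := v.2.1.2.2.1
          have hv12 : v.1.2 = 1 := by omega
          have h1i : 1 ≤ v.1.1 := hone v hv12
          have hfv := hf2 v h1i hv12
          have := congrArg Prod.fst hfv
          simp at this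
          rw [hv1] at this
          rw [this] at hv2
          exact hc ⟨by omega, by omega⟩
        rw [Nat.card_of_isEmpty]
  -- the extension construction
  have hpf : ∀ v : Dt, v.1.2 = 1 →
      (0 ≤ v.1.1 - 1 ∧ v.1.1 - 1 ≤ r ∧ 1 ≤ (1:ℕ) ∧ (1:ℕ) ≤ nn (v.1.1 - 1)) := by
    intro v h
    have h1 := hone v h
    have h2 := v.2.1.2.1
    exact ⟨by omega, by omega, le_refl 1,
      hpos (v.1.1 - 1) (Finset.mem_Icc.mpr ⟨by omega, by omega⟩)⟩
  have hwne1 : ∀ v : Dt, ¬ v.1.2 = 1 → 2 ≤ v.1.2 := by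
    intro v h
    have := v.2.1.2.2.1
    omega
  set Gt := {g : Wt → Ct // (∀ w, w.1.1 - (g w).1.1 ∈ S) ∧
      ∀ i ∈ Finset.Icc (0:ℤ) r, ∀ s ∈ S,
        Nat.card {w // w.1.1 = i ∧ (g w).1.1 = i - s}
          = n i s - (if s = 1 ∧ 1 ≤ i then 1 else 0)} with hGt
  let ext : Gt → Dt → Ct :=
    fun g v => if h : v.1.2 = 1 then ⟨(v.1.1 - 1, 1), hpf v h⟩
      else g.1 ⟨v.1, v.2.1, hwne1 v h⟩
  have hexts : ∀ (g : Gt) (v : Dt) (h : v.1.2 = 1),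
      ext g v = ⟨(v.1.1 - 1, 1), hpf v h⟩ := by
    intro g v h
    unfold ext
    beta_reduce
    rw [dif_pos h]
  have hextn : ∀ (g : Gt) (v : Dt) (h : ¬ v.1.2 = 1),
      ext g v = g.1 ⟨v.1, v.2.1, hwne1 v h⟩ := by
    intro g v h
    unfold ext
    beta_reduce
    rw [dif_neg h]
  have hee : ∀ (g : Gt) (w : Wt), ext g (incl w) = g.1 w := by
    intro g w
    have hne : ¬ (incl w).1.2 = 1 := by
      have h2 : (2:ℕ) ≤ (incl w).1.2 := w.2.2
      omega
    rw [hextn g (incl w) hne]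
  have hext2 : ∀ (g : Gt) (v : Dt), 1 ≤ v.1.1 → v.1.2 = 1 →
      ((ext g v : ℤ × ℕ)) = (v.1.1 - 1, 1) := by
    intro g v h1 h2
    rw [hexts g v h2]
  refine Nat.card_congr ⟨fun f => ⟨fun w => f.1 (incl w), ?_, ?_⟩,
    fun g => ⟨ext g, ?_, ?_, ?_⟩, ?_, ?_⟩
  · exact fun w => f.2.1 (incl w)
  · -- counts for restriction
    intro i hi s hs
    show Nat.card {w : Wt // w.1.1 = i ∧ (f.1 (incl w)).1.1 = i - s}
      = n i s - (if s = 1 ∧ 1 ≤ i then 1 else 0)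
    have hsp := hsplit f.1 f.2.2.1 i hi s hs
    have hn := f.2.2.2 i hi s hs
    rw [← Nat.card_coe_set_eq] at hn
    have hn' : Nat.card {v : Dt // v.1.1 = i ∧ (f.1 v).1.1 = i - s} = n i s := hn
    rcases Finset.mem_Icc.mp hi with ⟨hi0, hir⟩
    by_cases hc : s = 1 ∧ 1 ≤ i
    · have hni := hn1 i (Finset.mem_Icc.mpr ⟨hc.2, hir⟩)
      have hi1 := hc.2
      obtain ⟨rfl, -⟩ := hc
      rw [if_pos (⟨rfl, hi1⟩ : (1:ℤ) = 1 ∧ 1 ≤ i)] at hsp ⊢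
      omega
    · rw [if_neg hc] at hsp ⊢
      omega
  · -- cond1 for extension
    intro v
    show v.1.1 - ((ext g v : ℤ × ℕ)).1 ∈ S
    by_cases h : v.1.2 = 1
    · have h2 := hext2 g v (hone v h) h
      have h4 : v.1.1 - ((ext g v : ℤ × ℕ)).1 = 1 := by rw [h2]; ring
      rw [h4]
      exact h1S
    · rw [hextn g v h]
      exact g.2.1 ⟨v.1, v.2.1, hwne1 v h⟩
  · -- cond2 for extension
    intro v h1 h2
    exact hext2 g v h1 h2
  · -- cond3 for extension
    intro i hi s hs
    rw [← Nat.card_coe_set_eq]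
    show Nat.card {v : Dt // v.1.1 = i ∧ (ext g v).1.1 = i - s} = n i s
    have hsp := hsplit (ext g) (hext2 g) i hi s hs
    have heq : Nat.card {w : Wt // w.1.1 = i ∧ (ext g (incl w)).1.1 = i - s}
        = Nat.card {w : Wt // w.1.1 = i ∧ (g.1 w).1.1 = i - s} :=
      Nat.card_congr (Equiv.subtypeEquivRight (fun w => by rw [hee g w]))
    have hcnt := g.2.2 i hi s hs
    rcases Finset.mem_Icc.mp hi with ⟨hi0, hir⟩
    by_cases hc : s = 1 ∧ 1 ≤ i
    · have hni := hn1 i (Finset.mem_Icc.mpr ⟨hc.2, hir⟩)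
      have hi1 := hc.2
      obtain ⟨rfl, -⟩ := hc
      rw [if_pos (⟨rfl, hi1⟩ : (1:ℤ) = 1 ∧ 1 ≤ i)] at hsp hcnt
      omega
    · rw [if_neg hc] at hsp hcnt
      omega
  · -- left inverse
    intro f
    refine Subtype.ext (funext fun v => ?_)
    show ext _ v = f.1 v
    by_cases h : v.1.2 = 1
    · rw [hexts _ v h]
      exact Subtype.ext (f.2.2.1 v (hone v h) h).symm
    · rw [hextn _ v h]
  · -- right inverse
    intro g
    exact Subtype.ext (funext fun w => hee g w)

end

/-- Let `V = ⋃_{i=0}^r V i` with `|V i| = nn i` where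
`nn i = [i=0] + ∑_{s∈S} n i s`, all positive.  The number of `S`-functions
`f : V \ {0^1} → V` satisfying `f (i^1) = (i-1)^1` for `1 ≤ i ≤ r` in which, for each
`i` and `s ∈ S`, exactly `n i s` vertices of `V i` are mapped into `V (i-s)` equals
`(nn r * ∏ (nn i - 1)! * ∏ nn i ^ (c i - 1) * ∏_{i=1}^r n i 1) / ∏_{i,s} (n i s)!`
with `c i = ∑_{s∈S} n (i+s) s`; the identity is stated here with denominators
cleared (both sides are additionally multiplied by `∏ nn i` to interpret
`nn i ^ (c i - 1)`, whose exponent may be `-1`). -/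
theorem S_functions_out_type_count
    (S : Finset ℤ) (h1S : 1 ∈ S) (hSle : ∀ s ∈ S, s ≤ 1)
    (r : ℤ) (hr : 0 ≤ r) (n : ℤ → ℤ → ℕ)
    (hz : ∀ i s : ℤ, (s ∉ S ∨ i < 0 ∨ r < i ∨ i - s < 0 ∨ r < i - s) → n i s = 0)
    (nn : ℤ → ℕ) (hnn : ∀ i, nn i = (if i = 0 then 1 else 0) + ∑ s ∈ S, n i s)
    (hpos : ∀ i ∈ Finset.Icc 0 r, 0 < nn i) :
    {f : {v : ℤ × ℕ // (0 ≤ v.1 ∧ v.1 ≤ r ∧ 1 ≤ v.2 ∧ v.2 ≤ nn v.1) ∧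
            v ≠ ((0 : ℤ), (1 : ℕ))} →
         {v : ℤ × ℕ // 0 ≤ v.1 ∧ v.1 ≤ r ∧ 1 ≤ v.2 ∧ v.2 ≤ nn v.1} |
        (∀ v, v.1.1 - (f v).1.1 ∈ S) ∧
        (∀ v, 1 ≤ v.1.1 → v.1.2 = 1 → ((f v) : ℤ × ℕ) = (v.1.1 - 1, 1)) ∧
        (∀ i ∈ Finset.Icc (0 : ℤ) r, ∀ s ∈ S,
          {v | v.1.1 = i ∧ (f v).1.1 = i - s}.ncard = n i s)}.ncard
      * (∏ i ∈ Finset.Icc (0 : ℤ) r, ∏ s ∈ S, (n i s).factorial)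
      * (∏ i ∈ Finset.Icc (0 : ℤ) r, nn i) =
    nn r * (∏ i ∈ Finset.Icc (0 : ℤ) r, (nn i - 1).factorial)
      * (∏ i ∈ Finset.Icc (0 : ℤ) r, nn i ^ (∑ s ∈ S, n (i + s) s))
      * ∏ i ∈ Finset.Icc (1 : ℤ) r, n i 1 := by
  classical
  haveI instC : Finite {v : ℤ × ℕ // 0 ≤ v.1 ∧ v.1 ≤ r ∧ 1 ≤ v.2 ∧ v.2 ≤ nn v.1} :=
    (finite_verts r nn).to_subtype
  haveI instD : Finite {v : ℤ × ℕ // (0 ≤ v.1 ∧ v.1 ≤ r ∧ 1 ≤ v.2 ∧ v.2 ≤ nn v.1) ∧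
      v ≠ ((0 : ℤ), (1 : ℕ))} := by
    refine Finite.of_injective
      (fun v => (⟨v.1, v.2.1⟩ :
        {v : ℤ × ℕ // 0 ≤ v.1 ∧ v.1 ≤ r ∧ 1 ≤ v.2 ∧ v.2 ≤ nn v.1})) ?_
    intro a b h
    have h2 := congrArg Subtype.val h
    exact Subtype.ext h2
  by_cases hn1 : ∀ i ∈ Finset.Icc (1:ℤ) r, 1 ≤ n i 1
  · -- main case
    have hm0 : ∀ i s : ℤ, (i - s < 0 ∨ r < i - s) →
        n i s - (if s = 1 ∧ 1 ≤ i then 1 else 0) = 0 := by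
      intro i s h
      have h2 := hz i s (by tauto)
      omega
    have hsum : ∀ i ∈ Finset.Icc (0:ℤ) r,
        ∑ s ∈ S, (n i s - (if s = 1 ∧ 1 ≤ i then 1 else 0)) = nn i - 1 := by
      intro i hi
      rcases Finset.mem_Icc.mp hi with ⟨hi0, hir⟩
      by_cases h1i : 1 ≤ i
      · have hni := hn1 i (Finset.mem_Icc.mpr ⟨h1i, hir⟩)
        have e1 : ∑ s ∈ S, (n i s - (if s = 1 ∧ 1 ≤ i then 1 else 0))
            = (n i 1 - (if (1:ℤ) = 1 ∧ 1 ≤ i then 1 else 0))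
              + ∑ s ∈ S.erase 1, (n i s - (if s = 1 ∧ 1 ≤ i then 1 else 0)) :=
          (Finset.add_sum_erase S _ h1S).symm
        have e2 : ∑ s ∈ S, n i s = n i 1 + ∑ s ∈ S.erase 1, n i s :=
          (Finset.add_sum_erase S (n i) h1S).symm
        have e3 : ∑ s ∈ S.erase 1, (n i s - (if s = 1 ∧ 1 ≤ i then 1 else 0))
            = ∑ s ∈ S.erase 1, n i s := by
          refine Finset.sum_congr rfl ?_
          intro s hs
          rw [if_neg (fun hh => (Finset.mem_erase.mp hs).1 hh.1), Nat.sub_zero]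
        have e4 := hnn i
        rw [if_neg (by omega : ¬ i = 0)] at e4
        rw [if_pos ⟨rfl, h1i⟩] at e1
        omega
      · have e6 : i = 0 := by omega
        subst e6
        have e3 : ∑ s ∈ S, (n 0 s - (if s = 1 ∧ (1:ℤ) ≤ 0 then 1 else 0))
            = ∑ s ∈ S, n 0 s := by
          refine Finset.sum_congr rfl ?_
          intro s hs
          rw [if_neg (fun hh => h1i hh.2), Nat.sub_zero]
        have e4 := hnn 0
        rw [if_pos rfl] at e4
        omega
    have hG := count_G r nn S (fun i s => n i s - (if s = 1 ∧ 1 ≤ i then 1 else 0)) hm0 hsum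
    have hFG := card_F_eq_G S h1S r n nn hpos hn1
    rw [← Nat.card_coe_set_eq, hFG, hG]
    clear hG hFG
    -- now pure arithmetic
    have hfilter : (Finset.Icc (0:ℤ) r).filter (fun i => 1 ≤ i) = Finset.Icc 1 r := by
      ext x
      simp only [Finset.mem_filter, Finset.mem_Icc]
      omega
    have hA : ∀ i ∈ Finset.Icc (0:ℤ) r, ∏ s ∈ S, (n i s).factorial
        = (∏ s ∈ S, (n i s - (if s = 1 ∧ 1 ≤ i then 1 else 0)).factorial)
          * (if 1 ≤ i then n i 1 else 1) := by
      intro i hi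
      rcases Finset.mem_Icc.mp hi with ⟨hi0, hir⟩
      by_cases h1i : 1 ≤ i
      · rw [if_pos h1i]
        have hni := hn1 i (Finset.mem_Icc.mpr ⟨h1i, hir⟩)
        rw [← Finset.mul_prod_erase S (fun s => (n i s).factorial) h1S,
          ← Finset.mul_prod_erase S
            (fun s => (n i s - (if s = 1 ∧ 1 ≤ i then 1 else 0)).factorial) h1S]
        have he : ∏ s ∈ S.erase 1,
            (n i s - (if s = 1 ∧ 1 ≤ i then 1 else 0)).factorial
            = ∏ s ∈ S.erase 1, (n i s).factorial :=
          Finset.prod_congr rfl (fun s hs => by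
            rw [if_neg (fun hh => (Finset.mem_erase.mp hs).1 hh.1), Nat.sub_zero])
        rw [he, if_pos ⟨rfl, h1i⟩, ← Nat.mul_factorial_pred (Nat.one_le_iff_ne_zero.mp hni)]
        ring
      · rw [if_neg h1i, mul_one]
        refine Finset.prod_congr rfl ?_
        intro s hs
        rw [if_neg (fun hh => h1i hh.2), Nat.sub_zero]
    have A : ∏ i ∈ Finset.Icc (0:ℤ) r, ∏ s ∈ S, (n i s).factorial
        = (∏ i ∈ Finset.Icc (0:ℤ) r, ∏ s ∈ S,
            (n i s - (if s = 1 ∧ 1 ≤ i then 1 else 0)).factorial)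
          * ∏ i ∈ Finset.Icc (1:ℤ) r, n i 1 := by
      rw [Finset.prod_congr rfl hA, Finset.prod_mul_distrib]
      congr 1
      rw [← hfilter, Finset.prod_filter]
    have hB : ∀ i ∈ Finset.Icc (0:ℤ) r,
        (∏ s ∈ S, (n i s - (if s = 1 ∧ 1 ≤ i then 1 else 0)).factorial)
          * Nat.multinomial S (fun s => n i s - (if s = 1 ∧ 1 ≤ i then 1 else 0))
        = (nn i - 1).factorial := by
      intro i hi
      rw [Nat.multinomial_spec, hsum i hi]
    have hpow : ∀ i ∈ Finset.Icc (0:ℤ) r, ∀ s ∈ S, nn (i - s) ^ (n i s)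
        = nn (i - s) ^ (n i s - (if s = 1 ∧ 1 ≤ i then 1 else 0))
          * (if s = 1 ∧ 1 ≤ i then nn (i - 1) else 1) := by
      intro i hi s hs
      by_cases hc : s = 1 ∧ 1 ≤ i
      · have hni := hn1 i (Finset.mem_Icc.mpr ⟨hc.2, (Finset.mem_Icc.mp hi).2⟩)
        have h1i := hc.2
        obtain ⟨rfl, -⟩ := hc
        rw [if_pos (⟨rfl, h1i⟩ : (1:ℤ) = 1 ∧ 1 ≤ i),
          if_pos (⟨rfl, h1i⟩ : (1:ℤ) = 1 ∧ 1 ≤ i)]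
        have hk : n i 1 = (n i 1 - 1) + 1 := by omega
        conv_lhs => rw [hk]
        rw [pow_succ]
      · rw [if_neg hc, if_neg hc, Nat.sub_zero, mul_one]
    have hC1 : ∀ i ∈ Finset.Icc (0:ℤ) r,
        ∏ s ∈ S, (if s = 1 ∧ 1 ≤ i then nn (i - 1) else 1)
          = (if 1 ≤ i then nn (i - 1) else 1) := by
      intro i hi
      by_cases h1i : 1 ≤ i
      · rw [if_pos h1i,
          Finset.prod_eq_single_of_mem 1 h1S (fun s hs hne => if_neg (fun hh => hne hh.1)),
          if_pos ⟨rfl, h1i⟩]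
      · rw [if_neg h1i]
        exact Finset.prod_eq_one (fun s hs => if_neg (fun hh => h1i hh.2))
    have hshift : ∏ i ∈ Finset.Icc (1:ℤ) r, nn (i - 1)
        = ∏ j ∈ Finset.Icc (0:ℤ) (r-1), nn j := by
      refine Finset.prod_nbij' (fun i => i - 1) (fun j => j + 1)
        (fun a ha => by simp only [Finset.mem_Icc] at ha ⊢; omega)
        (fun a ha => by simp only [Finset.mem_Icc] at ha ⊢; omega)
        (fun a ha => by beta_reduce; omega) (fun a ha => by beta_reduce; omega)
        (fun a ha => rfl)
    have C : ∏ i ∈ Finset.Icc (0:ℤ) r, ∏ s ∈ S, nn (i - s) ^ (n i s)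
        = (∏ i ∈ Finset.Icc (0:ℤ) r, ∏ s ∈ S,
            nn (i - s) ^ (n i s - (if s = 1 ∧ 1 ≤ i then 1 else 0)))
          * ∏ j ∈ Finset.Icc (0:ℤ) (r-1), nn j := by
      have step1 : ∏ i ∈ Finset.Icc (0:ℤ) r, ∏ s ∈ S, nn (i - s) ^ (n i s)
          = ∏ i ∈ Finset.Icc (0:ℤ) r,
              ((∏ s ∈ S, nn (i - s) ^ (n i s - (if s = 1 ∧ 1 ≤ i then 1 else 0)))
                * ∏ s ∈ S, (if s = 1 ∧ 1 ≤ i then nn (i - 1) else 1)) :=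
        Finset.prod_congr rfl (fun i hi => by
          rw [← Finset.prod_mul_distrib]
          exact Finset.prod_congr rfl (fun s hs => hpow i hi s hs))
      rw [step1, Finset.prod_mul_distrib]
      congr 1
      rw [Finset.prod_congr rfl hC1, ← hshift, ← hfilter, Finset.prod_filter]
    have D : ∏ i ∈ Finset.Icc (0:ℤ) r, ∏ s ∈ S, nn (i - s) ^ (n i s)
        = ∏ i ∈ Finset.Icc (0:ℤ) r, nn i ^ (∑ s ∈ S, n (i + s) s) := by
      have hR : ∀ i ∈ Finset.Icc (0:ℤ) r, nn i ^ (∑ s ∈ S, n (i + s) s)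
          = ∏ s ∈ S, nn i ^ (n (i + s) s) :=
        fun i _ => (Finset.prod_pow_eq_pow_sum S _ (nn i)).symm
      rw [Finset.prod_congr rfl hR]
      rw [Finset.prod_comm (s := Finset.Icc (0:ℤ) r) (t := S)]
      conv_rhs => rw [Finset.prod_comm (s := Finset.Icc (0:ℤ) r) (t := S)]
      refine Finset.prod_congr rfl ?_
      intro s hs
      have hL : ∏ i ∈ (Finset.Icc (0:ℤ) r).filter (fun i => 0 ≤ i - s ∧ i - s ≤ r),
          nn (i - s) ^ (n i s) = ∏ i ∈ Finset.Icc (0:ℤ) r, nn (i - s) ^ (n i s) := by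
        refine Finset.prod_filter_of_ne ?_
        intro x hx hne
        by_contra hp
        have h0 : n x s = 0 := by
          refine hz x s ?_
          have : x - s < 0 ∨ r < x - s := by omega
          tauto
        rw [h0, pow_zero] at hne
        exact hne rfl
      have hRR : ∏ j ∈ (Finset.Icc (0:ℤ) r).filter (fun j => 0 ≤ j + s ∧ j + s ≤ r),
          nn j ^ (n (j + s) s) = ∏ j ∈ Finset.Icc (0:ℤ) r, nn j ^ (n (j + s) s) := by
        refine Finset.prod_filter_of_ne ?_
        intro x hx hne
        by_contra hp
        have h0 : n (x + s) s = 0 := by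
          refine hz (x + s) s ?_
          have : x + s < 0 ∨ r < x + s := by omega
          tauto
        rw [h0, pow_zero] at hne
        exact hne rfl
      rw [← hL, ← hRR]
      refine Finset.prod_nbij' (fun i => i - s) (fun j => j + s) ?_ ?_ ?_ ?_ ?_
      · intro a ha
        simp only [Finset.mem_filter, Finset.mem_Icc] at *
        omega
      · intro a ha
        simp only [Finset.mem_filter, Finset.mem_Icc] at *
        omega
      · intro a ha
        beta_reduce
        omega
      · intro a ha
        beta_reduce
        omega
      · intro a ha
        beta_reduce
        rw [sub_add_cancel]
    have E : ∏ i ∈ Finset.Icc (0:ℤ) r, nn i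
        = (∏ j ∈ Finset.Icc (0:ℤ) (r-1), nn j) * nn r := by
      have hins : Finset.Icc (0:ℤ) r = insert r (Finset.Icc 0 (r-1)) := by
        ext x
        simp only [Finset.mem_insert, Finset.mem_Icc]
        omega
      rw [hins, Finset.prod_insert (by simp only [Finset.mem_Icc]; omega)]
      ring
    have hFM : (∏ i ∈ Finset.Icc (0:ℤ) r, ∏ s ∈ S,
          (n i s - (if s = 1 ∧ 1 ≤ i then 1 else 0)).factorial)
        * (∏ i ∈ Finset.Icc (0:ℤ) r,
            Nat.multinomial S (fun s => n i s - (if s = 1 ∧ 1 ≤ i then 1 else 0)))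
        = ∏ i ∈ Finset.Icc (0:ℤ) r, (nn i - 1).factorial := by
      rw [← Finset.prod_mul_distrib]
      exact Finset.prod_congr rfl hB
    rw [A, E, ← hFM, ← D, C]
    ring
  · -- degenerate case
    push_neg at hn1
    obtain ⟨i0, hi0, hn0⟩ := hn1
    rcases Finset.mem_Icc.mp hi0 with ⟨hi01, hi02⟩
    have hn00 : n i0 1 = 0 := by omega
    have hset : {f : {v : ℤ × ℕ // (0 ≤ v.1 ∧ v.1 ≤ r ∧ 1 ≤ v.2 ∧ v.2 ≤ nn v.1) ∧
            v ≠ ((0 : ℤ), (1 : ℕ))} →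
         {v : ℤ × ℕ // 0 ≤ v.1 ∧ v.1 ≤ r ∧ 1 ≤ v.2 ∧ v.2 ≤ nn v.1} |
        (∀ v, v.1.1 - (f v).1.1 ∈ S) ∧
        (∀ v, 1 ≤ v.1.1 → v.1.2 = 1 → ((f v) : ℤ × ℕ) = (v.1.1 - 1, 1)) ∧
        (∀ i ∈ Finset.Icc (0 : ℤ) r, ∀ s ∈ S,
          {v | v.1.1 = i ∧ (f v).1.1 = i - s}.ncard = n i s)} = ∅ := by
      ext f
      simp only [Set.mem_setOf_eq, Set.mem_empty_iff_false, iff_false]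
      rintro ⟨hf1, hf2, hf3⟩
      have h7 := hf3 i0 (Finset.mem_Icc.mpr ⟨by omega, hi02⟩) 1 h1S
      rw [hn00] at h7
      have hempty := (Set.ncard_eq_zero (Set.toFinite _)).mp h7
      have hne0 : ((i0, 1) : ℤ × ℕ) ≠ ((0:ℤ), (1:ℕ)) := by
        intro hh
        have := congrArg Prod.fst hh
        simp at this
        omega
      let v0 : {v : ℤ × ℕ // (0 ≤ v.1 ∧ v.1 ≤ r ∧ 1 ≤ v.2 ∧ v.2 ≤ nn v.1) ∧
            v ≠ ((0 : ℤ), (1 : ℕ))} := ⟨(i0, 1), ⟨by omega, hi02, le_refl 1,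
            hpos i0 (Finset.mem_Icc.mpr ⟨by omega, hi02⟩)⟩, hne0⟩
      have hv0mem : v0 ∈
          {v : {v : ℤ × ℕ // (0 ≤ v.1 ∧ v.1 ≤ r ∧ 1 ≤ v.2 ∧ v.2 ≤ nn v.1) ∧
            v ≠ ((0 : ℤ), (1 : ℕ))} | v.1.1 = i0 ∧ (f v).1.1 = i0 - 1} := by
        refine ⟨rfl, ?_⟩
        have h9 := hf2 v0 hi01 rfl
        rw [h9]
      rw [hempty] at hv0mem
      exact hv0mem
    rw [hset, Set.ncard_empty,
      Finset.prod_eq_zero hi0 hn00]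
    simp
end
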